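/- arXiv:1903.02385 — 4 statements merged into one kernel-verified Lean document; each statement's English description precedes it below -/
import Mathlib

section
/- Let μ = (A − √(A² − 4B))/2 = (n−4)²/4 be the smaller root of ξ² − A·ξ + B = 0. Let v, w : ℝ → ℝ be C⁴ nonnegative solutions of the ODE v''''(t) − A·v''(t) + B·v(t) = g(v(t)) satisfying v(0) ≥ w(0), v'(0) ≥ w'(0), v''(0) − μ·v(0) ≥ w''(0) − μ·w(0), and v'''(0) − μ·v'(0) ≥ w'''(0) − μ·w'(0). Then v ≡ w on ℝ. -/
open Real Filter Set

noncomputable section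

/-- Conditions (G) on the nonlinearity `g`, extended to `[0,∞)` by `g 0 = 0`. -/
def CondG (n : ℕ) (g : ℝ → ℝ) : Prop :=
  ContDiffOn ℝ 1 g (Set.Ioi 0) ∧
  (∀ t > 0, 0 < g t) ∧
  Filter.Tendsto g (nhdsWithin 0 (Set.Ioi 0)) (nhds 0) ∧
  (∀ t > 0, g t / t < deriv g t ∧ deriv g t ≤ (((n : ℝ) + 4) / ((n : ℝ) - 4)) * (g t / t)) ∧
  (∃ β : ℝ, 0 ≤ β ∧ β < (n : ℝ) ^ 2 * ((n : ℝ) - 4) ^ 2 / 16 ∧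
    Filter.Tendsto (deriv g) (nhdsWithin 0 (Set.Ioi 0)) (nhds β)) ∧
  (∃ q c : ℝ, 1 < q ∧ 0 < c ∧ ∀ t ≥ 1, c * t ^ q ≤ g t) ∧
  g 0 = 0

/-- `v` solves the ODE `v'''' - A v'' + B v = g(v)` on all of `ℝ`. -/
def IsSol (A B : ℝ) (g v : ℝ → ℝ) : Prop :=
  ∀ t : ℝ, iteratedDeriv 4 v t - A * iteratedDeriv 2 v t + B * v t = g (v t)

lemma monoIci {f f' : ℝ → ℝ} {a : ℝ} (hd : ∀ t ∈ Ici a, HasDerivAt f (f' t) t)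
    (h0 : ∀ t ∈ Ici a, 0 ≤ f' t) : ∀ ⦃s t : ℝ⦄, a ≤ s → s ≤ t → f s ≤ f t := by
  have hm : MonotoneOn f (Ici a) := by
    apply monotoneOn_of_deriv_nonneg (convex_Ici a)
    · exact fun t ht => (hd t ht).continuousAt.continuousWithinAt
    · intro t ht
      rw [interior_Ici] at ht
      exact ((hd t (mem_Ici.2 (le_of_lt ht))).differentiableAt).differentiableWithinAt
    · intro t ht
      rw [interior_Ici] at ht
      rw [(hd t (mem_Ici.2 (le_of_lt ht))).deriv]
      exact h0 t (mem_Ici.2 (le_of_lt ht))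
  exact fun s t hs hst => hm hs (le_trans hs hst) hst

lemma monoIcc {f f' : ℝ → ℝ} {a b : ℝ} (hd : ∀ t ∈ Icc a b, HasDerivAt f (f' t) t)
    (h0 : ∀ t ∈ Icc a b, 0 ≤ f' t) : ∀ ⦃s t : ℝ⦄, a ≤ s → s ≤ t → t ≤ b → f s ≤ f t := by
  have hm : MonotoneOn f (Icc a b) := by
    apply monotoneOn_of_deriv_nonneg (convex_Icc a b)
    · exact fun t ht => (hd t ht).continuousAt.continuousWithinAt
    · intro t ht
      rw [interior_Icc] at ht
      exact ((hd t (Ioo_subset_Icc_self ht)).differentiableAt).differentiableWithinAt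
    · intro t ht
      rw [interior_Icc] at ht
      rw [(hd t (Ioo_subset_Icc_self ht)).deriv]
      exact h0 t (Ioo_subset_Icc_self ht)
  exact fun s t hs hst htb => hm ⟨hs, le_trans hst htb⟩ ⟨le_trans hs hst, htb⟩ hst

lemma scale_bound {e x B : ℝ} (he0 : 0 ≤ e) (he1 : e ≤ 1) (hx : -B ≤ x) (hB : 0 ≤ B) :
    -B ≤ e * x := by
  rcases le_or_gt 0 x with hx0 | hx0
  · nlinarith
  · nlinarith

lemma scale_bound' {e E x B : ℝ} (he : 1 ≤ e) (heE : e ≤ E) (hx : -B ≤ x) (hB : 0 ≤ B) :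
    -(E * B) ≤ e * x := by
  rcases le_or_gt 0 x with hx0 | hx0
  · nlinarith
  · nlinarith

lemma unscale {om s T Y C : ℝ} (hs : 0 ≤ s) (hsT : s ≤ T) (homn : 0 ≤ om) (hC : 0 ≤ C)
    (H : -C ≤ Real.exp (-om*s) * Y) : -(Real.exp (om*T) * C) ≤ Y := by
  have e1 : (0:ℝ) < Real.exp (om*s) := Real.exp_pos _
  have e2 : Real.exp (-om*s) * Real.exp (om*s) = 1 := by
    rw [← Real.exp_add]; ring_nf; exact Real.exp_zero
  have e3 : Real.exp (om*s) ≤ Real.exp (om*T) :=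
    Real.exp_le_exp.2 (by nlinarith)
  have h4 : Real.exp (om*s) * (Real.exp (-om*s) * Y) = Y := by
    rw [← mul_assoc, mul_comm (Real.exp (om*s)), e2, one_mul]
  have h5 := mul_le_mul_of_nonneg_left H e1.le
  rw [h4] at h5
  nlinarith [mul_le_mul_of_nonneg_right e3 hC]

lemma unscale2 {e Y C : ℝ} (he : 1 ≤ e) (hC : 0 ≤ C) (H : -C ≤ e * Y) : -C ≤ Y := by
  rcases le_or_gt 0 Y with hY | hY
  · linarith
  · nlinarith

lemma keyPos (om nu : ℝ) (hom : 0 < om) (hnu : 0 < nu)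
    (h h1 h2 h3 h4 δ : ℝ → ℝ)
    (hd0 : ∀ t, HasDerivAt h (h1 t) t) (hd1 : ∀ t, HasDerivAt h1 (h2 t) t)
    (hd2 : ∀ t, HasDerivAt h2 (h3 t) t) (hd3 : ∀ t, HasDerivAt h3 (h4 t) t)
    (ode : ∀ t, h4 t = (om^2 + nu^2) * h2 t - om^2 * nu^2 * h t + δ t)
    (lip : ∀ T, 0 < T → ∃ L, 0 ≤ L ∧ ∀ s ∈ Icc (0:ℝ) T, -(L * max (-(h s)) 0) ≤ δ s)
    (i0 : 0 ≤ h 0) (i1 : 0 ≤ h1 0) (i2 : 0 ≤ h2 0 - nu^2 * h 0) (i3 : 0 ≤ h3 0 - nu^2 * h1 0) :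
    ∀ t, 0 ≤ t → 0 ≤ h t := by
  intro t0 ht0
  set T := t0 + 1 with hTdef
  have hT : 0 < T := by linarith
  have ht0T : t0 ∈ Icc 0 T := ⟨ht0, by linarith⟩
  obtain ⟨L, hL, hlip⟩ := lip T hT
  have hch : Continuous h := continuous_iff_continuousAt.mpr fun t => (hd0 t).continuousAt
  set neg : ℝ → ℝ := fun s => max (-(h s)) 0 with hnegdef
  have negc : Continuous neg := (hch.neg.max continuous_const)
  set F : ℝ → ℝ := fun u => ∫ s in (0:ℝ)..u, neg s with hFdef
  have hF : ∀ t, HasDerivAt F (neg t) t := fun t => (negc.integral_hasStrictDerivAt 0 t).hasDerivAt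
  have Fc : Continuous F := continuous_iff_continuousAt.mpr fun t => (hF t).continuousAt
  set G : ℝ → ℝ := fun u => ∫ s in (0:ℝ)..u, F s with hGdef
  have hG : ∀ t, HasDerivAt G (F t) t := fun t => (Fc.integral_hasStrictDerivAt 0 t).hasDerivAt
  have negnn : ∀ s, 0 ≤ neg s := fun s => le_max_right _ _
  have Fnn : ∀ t, 0 ≤ t → 0 ≤ F t := fun t ht =>
    intervalIntegral.integral_nonneg ht (fun u _ => negnn u)
  have Gnn : ∀ t, 0 ≤ t → 0 ≤ G t := fun t ht =>
    intervalIntegral.integral_nonneg ht (fun u hu => Fnn u hu.1)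
  have F0 : F 0 = 0 := intervalIntegral.integral_same
  have G0 : G 0 = 0 := intervalIntegral.integral_same
  -- G ≤ T * F on [0,T]
  have GleTF : ∀ s ∈ Icc (0:ℝ) T, G s ≤ T * F s := by
    have hdψ : ∀ s, HasDerivAt (fun u => u * F u - G u) (s * neg s) s := by
      intro s
      have := ((hasDerivAt_id s).mul (hF s)).sub (hG s)
      simp only [id_eq, one_mul] at this
      refine this.congr_deriv (Eq.symm ?_); ring
    have hψ := monoIci (a := 0) (fun s _ => hdψ s) (fun s hs => mul_nonneg hs (negnn s))
    intro s hs
    have h0' : (0:ℝ) * F 0 - G 0 ≤ s * F s - G s := hψ (le_refl 0) hs.1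
    rw [F0, G0] at h0'
    have : s * F s ≤ T * F s := mul_le_mul_of_nonneg_right hs.2 (Fnn s hs.1)
    simp at h0'
    linarith
  have hz2 : ∀ t, h4 t - nu^2 * h2 t = om^2 * (h2 t - nu^2 * h t) + δ t := by
    intro t; rw [ode t]; ring
  -- Block 1
  set u : ℝ → ℝ := fun s => (h3 s - nu^2 * h1 s) + om * (h2 s - nu^2 * h s) with hudef
  have hdu : ∀ t, HasDerivAt u ((h4 t - nu^2 * h2 t) + om * (h3 t - nu^2 * h1 t)) t := by
    intro t
    exact ((hd3 t).sub ((hd1 t).const_mul (nu^2))).add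
      (((hd2 t).sub ((hd0 t).const_mul (nu^2))).const_mul om)
  have hdexp : ∀ (k t : ℝ), HasDerivAt (fun s : ℝ => Real.exp (k*s)) (k * Real.exp (k*t)) t := by
    intro k t
    simpa [mul_comm] using ((hasDerivAt_id t).const_mul k).exp
  have hdφ₁ : ∀ t, HasDerivAt (fun s => Real.exp (-om*s) * u s + L * F s)
      (Real.exp (-om*t) * δ t + L * neg t) t := by
    intro t
    have H := ((hdexp (-om) t).mul (hdu t)).add ((hF t).const_mul L)
    refine H.congr_deriv (Eq.symm ?_)
    rw [hudef]
    simp only []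
    rw [show h4 t = (om^2 + nu^2) * h2 t - om^2 * nu^2 * h t + δ t from ode t]
    ring
  have u0 : 0 ≤ u 0 := add_nonneg i3 (mul_nonneg hom.le i2)
  have φ₁mono := monoIcc (a := 0) (b := T) (fun t _ => hdφ₁ t) (by
    intro s hs
    have hb := hlip s hs
    have := scale_bound (e := Real.exp (-om*s)) (Real.exp_pos _).le
      (Real.exp_le_one_iff.2 (by nlinarith [hs.1])) hb (mul_nonneg hL (negnn s))
    linarith)
  have ulb : ∀ s ∈ Icc (0:ℝ) T, -(Real.exp (om*T) * (L * F s)) ≤ u s := by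
    intro s hs
    have h0' := φ₁mono (le_refl 0) hs.1 hs.2
    simp [F0] at h0'
    have hxx : -(L * F s) ≤ Real.exp (-om*s) * u s := by
      rw [neg_mul]; linarith
    exact unscale hs.1 hs.2 hom.le (mul_nonneg hL (Fnn s hs.1)) hxx
  have hdexpneg : ∀ (k t : ℝ), HasDerivAt (fun s : ℝ => Real.exp (-(k*s))) (-(k * Real.exp (-(k*t)))) t := by
    intro k t; have := hdexp (-k) t; simp only [neg_mul] at this; exact this
  have one_le_exp : ∀ x : ℝ, 0 ≤ x → 1 ≤ Real.exp x := fun x hx => by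
    calc (1:ℝ) = Real.exp 0 := Real.exp_zero.symm
    _ ≤ Real.exp x := Real.exp_le_exp.2 hx
  -- Block 2
  set C1 := Real.exp (om*T) * L with hC1def
  have C1nn : 0 ≤ C1 := mul_nonneg (Real.exp_pos _).le hL
  have ulb' : ∀ s ∈ Icc (0:ℝ) T, -(C1 * F s) ≤ u s := by
    intro s hs
    have h' := ulb s hs
    have he : Real.exp (om*T) * (L * F s) = C1 * F s := by rw [hC1def]; ring
    rw [he] at h'; exact h'
  set z : ℝ → ℝ := fun s => h2 s - nu^2 * h s with hzdef
  have hdz : ∀ t, HasDerivAt z (h3 t - nu^2 * h1 t) t :=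
    fun t => (hd2 t).sub ((hd0 t).const_mul (nu^2))
  have hdφ₂ : ∀ t, HasDerivAt (fun s => Real.exp (om*s) * z s + (Real.exp (om*T) * C1) * G s)
      (Real.exp (om*t) * u t + (Real.exp (om*T) * C1) * F t) t := by
    intro t
    have H := ((hdexp om t).mul (hdz t)).add ((hG t).const_mul (Real.exp (om*T) * C1))
    refine H.congr_deriv (Eq.symm ?_)
    simp only [hudef, hzdef]
    ring
  have φ₂mono := monoIcc (a := 0) (b := T) (fun t _ => hdφ₂ t) (by
    intro s hs
    have hb := ulb' s hs
    have hsc := scale_bound' (one_le_exp _ (mul_nonneg hom.le hs.1))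
      (Real.exp_le_exp.2 (mul_le_mul_of_nonneg_left hs.2 hom.le)) hb
      (mul_nonneg C1nn (Fnn s hs.1))
    have he : Real.exp (om*T) * (C1 * F s) = Real.exp (om*T) * C1 * F s := by ring
    rw [he] at hsc
    linarith)
  have zlb : ∀ s ∈ Icc (0:ℝ) T, -((Real.exp (om*T) * C1 * T) * F s) ≤ z s := by
    intro s hs
    have h0' := φ₂mono (le_refl 0) hs.1 hs.2
    simp [G0] at h0'
    have hz0 : (0:ℝ) ≤ z 0 := by simp only [hzdef]; exact i2
    have h1' : -((Real.exp (om*T) * C1) * G s) ≤ Real.exp (om*s) * z s := by linarith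
    have h2' := unscale2 (one_le_exp _ (mul_nonneg hom.le hs.1))
      (mul_nonneg (mul_nonneg (Real.exp_pos _).le C1nn) (Gnn s hs.1)) h1'
    have h3' : Real.exp (om*T) * C1 * G s ≤ Real.exp (om*T) * C1 * T * F s := by
      have hmul := mul_le_mul_of_nonneg_left (GleTF s hs)
        (mul_nonneg (Real.exp_pos (om*T)).le C1nn)
      linarith [hmul, (by ring : Real.exp (om*T) * C1 * (T * F s) = Real.exp (om*T) * C1 * T * F s)]
    linarith
  set C3 := Real.exp (om*T) * C1 * T with hC3def
  have C3nn : 0 ≤ C3 := mul_nonneg (mul_nonneg (Real.exp_pos _).le C1nn) hT.le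
  -- Block 3
  set uh : ℝ → ℝ := fun s => h1 s + nu * h s with huhdef
  have hduh : ∀ t, HasDerivAt uh (h2 t + nu * h1 t) t :=
    fun t => (hd1 t).add ((hd0 t).const_mul nu)
  have hdφ₃ : ∀ t, HasDerivAt (fun s => Real.exp (-(nu*s)) * uh s + C3 * G s)
      (Real.exp (-(nu*t)) * z t + C3 * F t) t := by
    intro t
    have H := ((hdexpneg nu t).mul (hduh t)).add ((hG t).const_mul C3)
    refine H.congr_deriv (Eq.symm ?_)
    simp only [huhdef, hzdef]
    ring
  have φ₃mono := monoIcc (a := 0) (b := T) (fun t _ => hdφ₃ t) (by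
    intro s hs
    have hb := zlb s hs
    have hsc := scale_bound (e := Real.exp (-(nu*s))) (Real.exp_pos _).le
      (Real.exp_le_one_iff.2 (by nlinarith [hs.1, hnu.le])) hb
      (mul_nonneg C3nn (Fnn s hs.1))
    linarith)
  have uhlb : ∀ s ∈ Icc (0:ℝ) T, -((Real.exp (nu*T) * C3 * T) * F s) ≤ uh s := by
    intro s hs
    have h0' := φ₃mono (le_refl 0) hs.1 hs.2
    simp [G0] at h0'
    have huh0 : (0:ℝ) ≤ uh 0 := by
      simp only [huhdef]; exact add_nonneg i1 (mul_nonneg hnu.le i0)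
    have h1' : -(C3 * G s) ≤ Real.exp (-nu*s) * uh s := by
      rw [neg_mul]; linarith
    have h2' := unscale hs.1 hs.2 hnu.le (mul_nonneg C3nn (Gnn s hs.1)) h1'
    have h3' : Real.exp (nu*T) * (C3 * G s) ≤ Real.exp (nu*T) * C3 * T * F s := by
      have hmul := mul_le_mul_of_nonneg_left (GleTF s hs)
        (mul_nonneg (Real.exp_pos (nu*T)).le C3nn)
      linarith [hmul, (by ring : Real.exp (nu*T) * C3 * (T * F s) = Real.exp (nu*T) * C3 * T * F s),
        (by ring : Real.exp (nu*T) * (C3 * G s) = Real.exp (nu*T) * C3 * G s)]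
    linarith
  set C4 := Real.exp (nu*T) * C3 * T with hC4def
  have C4nn : 0 ≤ C4 := mul_nonneg (mul_nonneg (Real.exp_pos _).le C3nn) hT.le
  -- Block 4
  have hdφ₄ : ∀ t, HasDerivAt (fun s => Real.exp (nu*s) * h s + (Real.exp (nu*T) * C4) * G s)
      (Real.exp (nu*t) * uh t + (Real.exp (nu*T) * C4) * F t) t := by
    intro t
    have H := ((hdexp nu t).mul (hd0 t)).add ((hG t).const_mul (Real.exp (nu*T) * C4))
    refine H.congr_deriv (Eq.symm ?_)
    simp only [huhdef]
    ring
  have φ₄mono := monoIcc (a := 0) (b := T) (fun t _ => hdφ₄ t) (by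
    intro s hs
    have hb := uhlb s hs
    have hsc := scale_bound' (one_le_exp _ (mul_nonneg hnu.le hs.1))
      (Real.exp_le_exp.2 (mul_le_mul_of_nonneg_left hs.2 hnu.le)) hb
      (mul_nonneg C4nn (Fnn s hs.1))
    have he : Real.exp (nu*T) * (C4 * F s) = Real.exp (nu*T) * C4 * F s := by ring
    rw [he] at hsc
    linarith)
  set C5 := Real.exp (nu*T) * C4 * T with hC5def
  have C5nn : 0 ≤ C5 := mul_nonneg (mul_nonneg (Real.exp_pos _).le C4nn) hT.le
  have hlb5 : ∀ s ∈ Icc (0:ℝ) T, -(C5 * F s) ≤ h s := by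
    intro s hs
    have h0' := φ₄mono (le_refl 0) hs.1 hs.2
    simp [G0] at h0'
    have h1' : -((Real.exp (nu*T) * C4) * G s) ≤ Real.exp (nu*s) * h s := by linarith
    have h2' := unscale2 (one_le_exp _ (mul_nonneg hnu.le hs.1))
      (mul_nonneg (mul_nonneg (Real.exp_pos _).le C4nn) (Gnn s hs.1)) h1'
    have h3' : Real.exp (nu*T) * C4 * G s ≤ C5 * F s := by
      rw [hC5def]
      have hmul := mul_le_mul_of_nonneg_left (GleTF s hs)
        (mul_nonneg (Real.exp_pos (nu*T)).le C4nn)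
      linarith [hmul, (by ring : Real.exp (nu*T) * C4 * (T * F s) = Real.exp (nu*T) * C4 * T * F s)]
    linarith
  -- Gronwall
  have hnegle : ∀ s ∈ Icc (0:ℝ) T, neg s ≤ C5 * F s := by
    intro s hs
    apply max_le
    · have := hlb5 s hs; linarith
    · exact mul_nonneg C5nn (Fnn s hs.1)
  have hdψ : ∀ t, HasDerivAt (fun s => -(Real.exp (-(C5*s)) * F s))
      (-(-C5 * Real.exp (-(C5*t)) * F t + Real.exp (-(C5*t)) * neg t)) t := by
    intro t
    have H := ((hdexpneg C5 t).mul (hF t)).neg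
    refine H.congr_deriv (Eq.symm ?_)
    ring
  have ψmono := monoIcc (a := 0) (b := T) (fun t _ => hdψ t) (by
    intro s hs
    have hb := hnegle s hs
    have he := (Real.exp_pos (-(C5*s))).le
    nlinarith)
  have hψ := ψmono (le_refl 0) ht0 ht0T.2
  simp [F0] at hψ
  have hFt0 : F t0 = 0 := by
    have he := Real.exp_pos (-(C5*t0))
    have : Real.exp (-(C5*t0)) * F t0 ≤ 0 := by linarith
    have hf := Fnn t0 ht0
    nlinarith
  have := hlb5 t0 ht0T
  rw [hFt0] at this
  simpa using this


set_option maxHeartbeats 1000000 in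
lemma keyZero (om nu q c0 : ℝ) (hom : 0 < om) (hnu : 0 < nu) (hq : 1 < q) (hc0 : 0 < c0)
    (h h1 h2 h3 h4 δ : ℝ → ℝ)
    (hd0 : ∀ t, HasDerivAt h (h1 t) t) (hd1 : ∀ t, HasDerivAt h1 (h2 t) t)
    (hd2 : ∀ t, HasDerivAt h2 (h3 t) t) (hd3 : ∀ t, HasDerivAt h3 (h4 t) t)
    (hδc : Continuous δ)
    (ode : ∀ t, h4 t = (om^2 + nu^2) * h2 t - om^2 * nu^2 * h t + δ t)
    (link0 : ∀ s, 0 ≤ h s → 0 ≤ δ s)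
    (link1 : ∀ s, 0 < h s → 0 < δ s)
    (link2 : ∀ s, 2 ≤ h s → c0 * h s ^ q ≤ δ s)
    (hnn : ∀ t, 0 ≤ t → 0 ≤ h t)
    (i1 : 0 ≤ h1 0) (i2 : 0 ≤ h2 0 - nu^2 * h 0) (i3 : 0 ≤ h3 0 - nu^2 * h1 0) :
    ∀ t, 0 ≤ t → h t = 0 := by
  have δnn : ∀ t, 0 ≤ t → 0 ≤ δ t := fun t ht => link0 t (hnn t ht)
  obtain ⟨z, hzdef⟩ : ∃ f : ℝ → ℝ, f = fun s => h2 s - nu^2 * h s := ⟨_, rfl⟩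
  obtain ⟨z1, hz1def⟩ : ∃ f : ℝ → ℝ, f = fun s => h3 s - nu^2 * h1 s := ⟨_, rfl⟩
  have hdz : ∀ t, HasDerivAt z (z1 t) t := by
    intro t
    simp only [hzdef, hz1def]
    exact (hd2 t).sub ((hd0 t).const_mul (nu^2))
  have hdz1 : ∀ t, HasDerivAt z1 (h4 t - nu^2 * h2 t) t := by
    intro t
    simp only [hz1def]
    exact (hd3 t).sub ((hd1 t).const_mul (nu^2))
  have hz2 : ∀ t, h4 t - nu^2 * h2 t = om^2 * z t + δ t := by
    intro t; rw [ode t]; simp only [hzdef]; ring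
  have hdexp : ∀ (k t : ℝ), HasDerivAt (fun s : ℝ => Real.exp (k*s)) (k * Real.exp (k*t)) t := by
    intro k t
    simpa [mul_comm] using ((hasDerivAt_id t).const_mul k).exp
  have hdexpneg : ∀ (k t : ℝ), HasDerivAt (fun s : ℝ => Real.exp (-(k*s))) (-(k * Real.exp (-(k*t)))) t := by
    intro k t; have := hdexp (-k) t; simp only [neg_mul] at this; exact this
  -- u = z1 + om z is nonnegative on [0,∞)
  obtain ⟨u, hudef⟩ : ∃ f : ℝ → ℝ, f = fun s => z1 s + om * z s := ⟨_, rfl⟩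
  have hdφ : ∀ t, HasDerivAt (fun s => Real.exp (-(om*s)) * u s) (Real.exp (-(om*t)) * δ t) t := by
    intro t
    have H := (hdexpneg om t).mul ((hdz1 t).add ((hdz t).const_mul om))
    rw [hudef]; refine H.congr_deriv (Eq.symm ?_); simp only [Pi.add_apply]
    try simp only [hudef]
    try simp only [hz1def]
    try simp only [hzdef]
    rw [ode t]
    ring
  have unn : ∀ t, 0 ≤ t → 0 ≤ u t := by
    intro t ht
    have hm := monoIci (a := 0) (fun s _ => hdφ s)
      (fun s hs => mul_nonneg (Real.exp_pos _).le (δnn s hs)) (le_refl 0) ht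
    simp at hm
    have hu0 : 0 ≤ u 0 := by
      simp only [hudef, hz1def, hzdef]
      exact add_nonneg i3 (mul_nonneg hom.le i2)
    nlinarith only [hm, hu0, Real.exp_pos (-(om*t))]
  have znn : ∀ t, 0 ≤ t → 0 ≤ z t := by
    intro t ht
    have hdψ : ∀ s, HasDerivAt (fun s => Real.exp (om*s) * z s) (Real.exp (om*s) * u s) s := by
      intro s
      have H := (hdexp om s).mul (hdz s)
      refine H.congr_deriv (Eq.symm ?_)
      try simp only [hudef]
      try simp only [hz1def]
      try simp only [hzdef]
      ring
    have hm := monoIci (a := 0) (fun s _ => hdψ s)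
      (fun s hs => mul_nonneg (Real.exp_pos _).le (unn s hs)) (le_refl 0) ht
    simp at hm
    have hz0 : 0 ≤ z 0 := by simp only [hzdef]; exact i2
    nlinarith only [hm, hz0, Real.exp_pos (om*t)]
  have z2nn : ∀ t, 0 ≤ t → 0 ≤ h4 t - nu^2 * h2 t := by
    intro t ht
    rw [hz2 t]
    linarith only [mul_nonneg (sq_nonneg om) (znn t ht), δnn t ht]
  have z1mono : ∀ ⦃s t : ℝ⦄, 0 ≤ s → s ≤ t → z1 s ≤ z1 t :=
    monoIci (a := 0) (fun t _ => hdz1 t) (fun t ht => z2nn t ht)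
  have z1nn : ∀ t, 0 ≤ t → 0 ≤ z1 t := by
    intro t ht
    have := z1mono (le_refl 0) ht
    have hz10 : 0 ≤ z1 0 := by simp only [hz1def]; exact i3
    linarith
  have h2nn : ∀ t, 0 ≤ t → 0 ≤ h2 t := by
    intro t ht
    have hz' := znn t ht
    simp only [hzdef] at hz'
    linarith [mul_nonneg (sq_nonneg nu) (hnn t ht)]
  have h1mono : ∀ ⦃s t : ℝ⦄, 0 ≤ s → s ≤ t → h1 s ≤ h1 t :=
    monoIci (a := 0) (fun t _ => hd1 t) (fun t ht => h2nn t ht)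
  have h1nn : ∀ t, 0 ≤ t → 0 ≤ h1 t := by
    intro t ht; have := h1mono (le_refl 0) ht; linarith
  have hmono : ∀ ⦃s t : ℝ⦄, 0 ≤ s → s ≤ t → h s ≤ h t :=
    monoIci (a := 0) (fun t _ => hd0 t) (fun t ht => h1nn t ht)
  have h3nn : ∀ t, 0 ≤ t → 0 ≤ h3 t := by
    intro t ht
    have hz' := z1nn t ht
    simp only [hz1def] at hz'
    linarith [mul_nonneg (sq_nonneg nu) (h1nn t ht)]
  -- main: no positive value
  have noPos : ∀ t0, 0 ≤ t0 → ¬ (0 < h t0) := by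
    intro t0 ht0 hpos
    have hposge : ∀ t, t0 ≤ t → 0 < h t := fun t ht => lt_of_lt_of_le hpos (hmono ht0 ht)
    have δpos : ∀ t, t0 ≤ t → 0 < δ t := fun t ht => link1 t (hposge t ht)
    obtain ⟨t1, ht1def⟩ : ∃ x : ℝ, x = t0 + 1 := ⟨_, rfl⟩
    have ht10 : 0 ≤ t1 := by rw [ht1def]; linarith
    have ht01 : t0 ≤ t1 := by rw [ht1def]; linarith
    -- z1 t1 > 0
    have ha : 0 < z1 t1 := by
      have hdint : ∀ t, HasDerivAt (fun u => ∫ s in t0..u, δ s) (δ t) t :=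
        fun t => (hδc.integral_hasStrictDerivAt t0 t).hasDerivAt
      have hdφ' : ∀ t, HasDerivAt (fun s => z1 s - ∫ x in t0..s, δ x)
          (om^2 * z t) t := by
        intro t
        have H := (hdz1 t).sub (hdint t)
        have he : h4 t - nu^2 * h2 t - δ t = om^2 * z t := by rw [hz2 t]; ring
        rw [← he]; exact H
      have hm := monoIci (a := t0) (fun t ht => hdφ' t)
        (fun t ht => mul_nonneg (sq_nonneg om) (znn t (le_trans ht0 ht)))
        (le_refl t0) ht01
      simp only [intervalIntegral.integral_same, sub_zero] at hm
      have hint : 0 < ∫ s in t0..t1, δ s := by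
        apply intervalIntegral.intervalIntegral_pos_of_pos_on
          (hδc.intervalIntegrable t0 t1)
          (fun x hx => δpos x hx.1.le)
        rw [ht1def]; linarith
      have := z1nn t0 ht0
      linarith
    obtain ⟨a, hadef⟩ : ∃ x : ℝ, x = z1 t1 := ⟨_, rfl⟩
    replace ha : 0 < a := by rw [hadef]; exact ha
    have z1ge : ∀ t, t1 ≤ t → a ≤ z1 t := by
      intro t ht; rw [hadef]; exact z1mono ht10 ht
    have zge : ∀ t, t1 ≤ t → a * (t - t1) ≤ z t := by
      have hd' : ∀ s, HasDerivAt (fun x => z x - a * x) (z1 s - a * 1) s :=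
        fun s => (hdz s).sub ((hasDerivAt_id s).const_mul a)
      have hm := monoIci (a := t1) (fun s hs => hd' s)
        (fun s hs => by have := z1ge s hs; linarith)
      intro t ht
      have := hm (le_refl t1) ht
      have hz1nn := znn t1 ht10
      linarith only [this, hz1nn]
    have h1ge : ∀ t, t1 ≤ t → a/2 * (t - t1)^2 ≤ h1 t := by
      have hd' : ∀ s, HasDerivAt (fun x => h1 x - a/2 * (x - t1)^2)
          (h2 s - a * (s - t1)) s := by
        intro s
        have H := (hd1 s).sub ((((hasDerivAt_id s).sub_const t1).pow 2).const_mul (a/2))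
        norm_num at H
        refine H.congr_deriv (Eq.symm ?_)
        ring
      have hm := monoIci (a := t1) (fun s hs => hd' s)
        (fun s hs => by
          have hz := zge s hs
          have hh := hnn s (le_trans ht10 hs)
          simp only [hzdef] at hz
          linarith only [hz, mul_nonneg (sq_nonneg nu) hh])
      intro t ht
      have hmm := hm (le_refl t1) ht
      linarith only [hmm, h1nn t1 ht10]
    have hge : ∀ t, t1 ≤ t → a/6 * (t - t1)^3 ≤ h t := by
      have hd' : ∀ s, HasDerivAt (fun x => h x - a/6 * (x - t1)^3)
          (h1 s - a/2 * (s - t1)^2) s := by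
        intro s
        have H := (hd0 s).sub ((((hasDerivAt_id s).sub_const t1).pow 3).const_mul (a/6))
        norm_num at H
        refine H.congr_deriv (Eq.symm ?_)
        ring
      have hm := monoIci (a := t1) (fun s hs => hd' s)
        (fun s hs => by have := h1ge s hs; linarith)
      intro t ht
      have hmm := hm (le_refl t1) ht
      linarith only [hmm, hnn t1 ht10]
    have reach : ∀ X : ℝ, ∃ s, t1 + 1 ≤ s ∧ ∀ t, s ≤ t → X ≤ h t := by
      intro X
      refine ⟨t1 + 1 + max 0 (6*X/a), by linarith [le_max_left 0 (6*X/a)], ?_⟩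
      intro t ht
      have hs0 : (0:ℝ) ≤ t1 + 1 + max 0 (6*X/a) := by
        have := le_max_left 0 (6*X/a); linarith
      have hXh : X ≤ h (t1 + 1 + max 0 (6*X/a)) := by
        have hg := hge (t1 + 1 + max 0 (6*X/a)) (by linarith [le_max_left 0 (6*X/a)])
        have hd1' : (1:ℝ) ≤ 1 + max 0 (6*X/a) := by linarith [le_max_left 0 (6*X/a)]
        have hdd : t1 + 1 + max 0 (6*X/a) - t1 = 1 + max 0 (6*X/a) := by ring
        rw [hdd] at hg
        have hcube : 6*X/a ≤ (1 + max 0 (6*X/a))^3 := by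
          have h1'' : 1 + max 0 (6*X/a) ≤ (1 + max 0 (6*X/a))^3 := by
            nlinarith only [le_max_left 0 (6*X/a), sq_nonneg (max 0 (6*X/a))]
          have := le_max_right 0 (6*X/a)
          linarith
        have hXa : a/6 * (6*X/a) = X := by field_simp
        linarith only [hg, hXa,
          mul_le_mul_of_nonneg_left hcube (div_nonneg ha.le (by norm_num : (0:ℝ) ≤ 6))]
      exact le_trans hXh (hmono hs0 ht)
    obtain ⟨t2, ht2ge, ht2⟩ := reach 2
    have ht21 : t1 ≤ t2 := by linarith
    have ht20 : 0 ≤ t2 := by linarith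
    have hpos2 : ∀ t, t2 ≤ t → 0 < h t := fun t ht => by linarith [ht2 t ht]
    have h1pos : ∀ t, t2 ≤ t → a/2 ≤ h1 t := by
      intro t ht
      have hg := h1ge t (by linarith)
      have h1' : (1:ℝ) ≤ (t - t1)^2 := by
        linarith only [sq_nonneg (t - t1 - 1), ht, ht2ge]
      linarith only [hg, mul_le_mul_of_nonneg_left h1' (by linarith only [ha] : (0:ℝ) ≤ a/2)]
    have h4ge : ∀ t, t2 ≤ t → c0 * h t ^ q ≤ h4 t := by
      intro t ht
      have hδ' := link2 t (ht2 t ht)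
      have hform : h4 t = nu^2 * h2 t + (om^2 * z t + δ t) := by
        have := hz2 t; linarith
      linarith only [hform, hδ',
        mul_nonneg (sq_nonneg nu) (h2nn t (by linarith)),
        mul_nonneg (sq_nonneg om) (znn t (by linarith))]
    have hrp : ∀ (p : ℝ) (t : ℝ), t2 ≤ t →
        HasDerivAt (fun s => h s ^ p) (p * h t ^ (p-1) * h1 t) t := by
      intro p t ht
      have := (hd0 t).rpow_const (p := p) (Or.inl (ne_of_gt (hpos2 t ht)))
      convert this using 1; ring
    have hpow_ge_self : ∀ (p : ℝ) (t : ℝ), 1 ≤ p → t2 ≤ t → h t ≤ h t ^ p := by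
      intro p t hp ht
      calc h t = h t ^ (1:ℝ) := (Real.rpow_one _).symm
      _ ≤ h t ^ p := Real.rpow_le_rpow_of_exponent_le (by linarith [ht2 t ht]) hp
    have hrpow_nn : ∀ (p : ℝ) (t : ℝ), t2 ≤ t → 0 ≤ h t ^ p :=
      fun p t ht => (Real.rpow_pos_of_pos (hpos2 t ht) p).le
    -- Energy 1
    have hq1 : (0:ℝ) < q + 1 := by linarith
    have hdE : ∀ t, t2 ≤ t → HasDerivAt (fun s => h3 s * h1 s - c0/(q+1) * h s ^ (q+1))
        (h4 t * h1 t + h3 t * h2 t - c0 * h t ^ q * h1 t) t := by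
      intro t ht
      have H := ((hd3 t).mul (hd1 t)).sub ((hrp (q+1) t ht).const_mul (c0/(q+1)))
      refine H.congr_deriv (Eq.symm ?_)
      have he : q + 1 - 1 = q := by ring
      rw [he]
      field_simp
    have Emono := monoIci (a := t2) (fun t ht => hdE t ht) (fun t ht => by
      have ht' : t2 ≤ t := ht
      have ha1 := h4ge t ht'
      have ha2 := h1nn t (by linarith)
      have ha3 := h3nn t (by linarith)
      have ha4 := h2nn t (by linarith)
      linarith only [mul_le_mul_of_nonneg_right ha1 ha2, mul_nonneg ha3 ha4])
    obtain ⟨c1, hc1def⟩ : ∃ x : ℝ, x = c0/(2*(q+1)) := ⟨_, rfl⟩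
    have hc1 : 0 < c1 := by rw [hc1def]; positivity
    -- generic absorption
    have absorb : ∀ (cc D p : ℝ), 0 < cc → 1 ≤ p →
        ∃ s4, t2 ≤ s4 ∧ ∀ t, s4 ≤ t → -D ≤ cc * h t ^ p := by
      intro cc D p hcc hp
      obtain ⟨s', hs'ge, hs'⟩ := reach (max 1 (max 0 (-D) / cc))
      refine ⟨max t2 s', le_max_left _ _, ?_⟩
      intro t ht
      have hX := hs' t (le_trans (le_max_right _ _) ht)
      have ht2t : t2 ≤ t := le_trans (le_max_left _ _) ht
      have h1le : (1:ℝ) ≤ h t := le_trans (le_max_left _ _) hX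
      have hself : h t ≤ h t ^ p := hpow_ge_self p t hp ht2t
      have h2le : max 0 (-D) / cc ≤ h t := le_trans (le_max_right _ _) hX
      rw [div_le_iff₀ hcc] at h2le
      have h4le : cc * h t ≤ cc * h t ^ p := mul_le_mul_of_nonneg_left hself hcc.le
      have h5le := le_max_right 0 (-D)
      linarith only [h2le, h4le, h5le]
    obtain ⟨t3, ht32, habs3⟩ := absorb c1 (h3 t2 * h1 t2 - c0/(q+1) * h t2 ^ (q+1)) (q+1)
      hc1 (by linarith)
    have ht30 : 0 ≤ t3 := le_trans ht20 ht32
    have claim1 : ∀ t, t3 ≤ t → c1 * h t ^ (q+1) ≤ h3 t * h1 t := by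
      intro t ht
      have ht2t : t2 ≤ t := le_trans ht32 ht
      have hE : h3 t2 * h1 t2 - c0/(q+1) * h t2 ^ (q+1) ≤
          h3 t * h1 t - c0/(q+1) * h t ^ (q+1) := Emono (le_refl t2) ht2t
      have habs' := habs3 t ht
      have heq : c0/(q+1) * h t ^ (q+1) = 2*(c1 * h t ^ (q+1)) := by
        rw [hc1def]; field_simp
      rw [heq] at hE
      linarith
    -- second energy F2
    have hdF2 : ∀ t, HasDerivAt (fun s => h2 s * h s - h1 s^2/2) (h3 t * h t) t := by
      intro t
      have H := ((hd2 t).mul (hd0 t)).sub (((hd1 t).pow 2).div_const 2)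
      norm_num at H
      refine H.congr_deriv (Eq.symm ?_)
      ring
    have F2mono := monoIci (a := 0) (fun t _ => hdF2 t) (fun t ht =>
      mul_nonneg (h3nn t ht) (hnn t ht))
    obtain ⟨Df, hDfdef⟩ : ∃ x : ℝ, x = max 0 (-(h2 t3 * h t3 - h1 t3^2/2)) := ⟨_, rfl⟩
    have hDfnn : 0 ≤ Df := hDfdef ▸ le_max_left _ _
    have hDfge : -(h2 t3 * h t3 - h1 t3^2/2) ≤ Df := hDfdef ▸ le_max_right _ _
    obtain ⟨t4, ht43, ht41Y, claim2⟩ :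
        ∃ t4, t3 ≤ t4 ∧ t1 + 1 ≤ t4 ∧ ∀ t, t4 ≤ t → h1 t^2/4 ≤ h2 t * h t := by
      obtain ⟨Y, hY1, hYs⟩ : ∃ Y : ℝ, 1 ≤ Y ∧ 4*Real.sqrt Df/a ≤ Y :=
        ⟨max 1 (4*Real.sqrt Df/a), le_max_left _ _, le_max_right _ _⟩
      refine ⟨max t3 (t1 + Y), le_max_left _ _, by
        have := le_max_right t3 (t1 + Y); linarith, ?_⟩
      intro t ht
      have ht3t : t3 ≤ t := le_trans (le_max_left _ _) ht
      have htY : t1 + Y ≤ t := le_trans (le_max_right _ _) ht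
      have hF : h2 t3 * h t3 - h1 t3^2/2 ≤ h2 t * h t - h1 t^2/2 := F2mono ht30 ht3t
      have hg := h1ge t (by linarith)
      have hsq : Y ≤ (t - t1)^2 := by
        have hd : Y ≤ t - t1 := by linarith
        have hYY : Y*Y ≤ (t-t1)*(t-t1) := mul_le_mul hd hd (by linarith) (by linarith)
        have hY1Y : Y*1 ≤ Y*Y := mul_le_mul_of_nonneg_left hY1 (by linarith)
        linarith only [hYY, hY1Y, (by ring : (t-t1)^2 = (t-t1)*(t-t1))]
      have hs5 : a/2 * Y ≤ a/2 * (t - t1)^2 :=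
        mul_le_mul_of_nonneg_left hsq (by linarith)
      have hs6 : a/2 * (4*Real.sqrt Df/a) ≤ a/2 * Y :=
        mul_le_mul_of_nonneg_left hYs (by linarith)
      have hs7 : a/2 * (4*Real.sqrt Df/a) = 2*Real.sqrt Df := by field_simp; ring
      have hsqrt : 2*Real.sqrt Df ≤ h1 t := by linarith
      have hDsq : 4*Df ≤ h1 t^2 := by
        have h8 : (2*Real.sqrt Df)*(2*Real.sqrt Df) ≤ h1 t * h1 t :=
          mul_le_mul hsqrt hsqrt (by positivity) (h1nn t (by linarith))
        linarith only [h8, Real.sq_sqrt hDfnn,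
          (by ring : (2*Real.sqrt Df)*(2*Real.sqrt Df) = 4*(Real.sqrt Df^2)),
          (by ring : h1 t * h1 t = h1 t^2)]
      linarith
    have ht42 : t2 ≤ t4 := le_trans ht32 ht43
    have ht40 : 0 ≤ t4 := le_trans ht20 ht42
    have claim3 : ∀ t, t4 ≤ t → c1/4 * h t^q * h1 t ≤ h3 t * h2 t := by
      intro t ht
      have ht2t : t2 ≤ t := le_trans ht42 ht
      have hA := claim1 t (le_trans ht43 ht)
      have hB := claim2 t ht
      have hmul := mul_le_mul hA hB (by positivity) (mul_nonneg (h3nn t (by linarith))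
        (h1nn t (by linarith)))
      have hq1' : h t ^ (q+1) = h t ^ q * h t := Real.rpow_add_one (ne_of_gt (hpos2 t ht2t)) q
      have hhpos : 0 < h1 t * h t := mul_pos (by have := h1pos t ht2t; linarith [ha])
        (hpos2 t ht2t)
      refine le_of_mul_le_mul_right ?_ hhpos
      calc c1/4 * h t^q * h1 t * (h1 t * h t) = c1 * h t ^ (q+1) * (h1 t^2/4) := by
            rw [hq1']; ring
      _ ≤ h3 t * h1 t * (h2 t * h t) := hmul
      _ = h3 t * h2 t * (h1 t * h t) := by ring
    -- third energy
    obtain ⟨c2, hc2def⟩ : ∃ x : ℝ, x = c1/(2*(q+1)) := ⟨_, rfl⟩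
    have hc2 : 0 < c2 := by rw [hc2def]; positivity
    have hdφ₅ : ∀ t, t2 ≤ t → HasDerivAt (fun s => h2 s^2/2 - c2/2 * h s^(q+1))
        (h3 t * h2 t - c1/4 * h t^q * h1 t) t := by
      intro t ht
      have H := (((hd2 t).pow 2).div_const 2).sub ((hrp (q+1) t ht).const_mul (c2/2))
      norm_num at H
      refine H.congr_deriv (Eq.symm ?_)
      try rw [show q + 1 - 1 = q from by ring]
      rw [hc2def]
      field_simp
      ring
    have φ₅mono := monoIci (a := t4) (fun t ht => hdφ₅ t (le_trans ht42 ht))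
      (fun t ht => sub_nonneg.2 (claim3 t ht))
    obtain ⟨t5', ht52', habs5⟩ := absorb (c2/2) (2*(h2 t4^2/2 - c2/2 * h t4^(q+1))) (q+1)
      (by positivity) (by linarith)
    obtain ⟨t5, ht5def⟩ : ∃ x : ℝ, x = max t4 t5' := ⟨_, rfl⟩
    have ht54 : t4 ≤ t5 := ht5def ▸ le_max_left _ _
    have ht52 : t2 ≤ t5 := le_trans ht42 ht54
    have claim4a : ∀ t, t5 ≤ t → c2/2 * h t^(q+1) ≤ h2 t^2 := by
      intro t ht
      have hm5 : h2 t4^2/2 - c2/2 * h t4^(q+1) ≤ h2 t^2/2 - c2/2 * h t^(q+1) :=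
        φ₅mono (le_refl t4) (le_trans ht54 ht)
      have habs' := habs5 t (le_trans (ht5def ▸ le_max_right t4 t5') ht)
      linarith
    obtain ⟨s2, hs2def⟩ : ∃ x : ℝ, x = Real.sqrt (c2/2) := ⟨_, rfl⟩
    have hs2pos : 0 < s2 := hs2def ▸ Real.sqrt_pos.2 (by positivity)
    have claim4 : ∀ t, t5 ≤ t → s2 * h t^((q+1)/2) ≤ h2 t := by
      intro t ht
      have ht2t : t2 ≤ t := le_trans ht52 ht
      have hh := hpos2 t ht2t
      have hb : (s2 * h t^((q+1)/2))^2 = c2/2 * h t^(q+1) := by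
        rw [mul_pow, hs2def, Real.sq_sqrt (by positivity : (0:ℝ) ≤ c2/2)]
        congr 1
        rw [sq, ← Real.rpow_add hh]
        congr 1
        ring
      have hle : (s2 * h t^((q+1)/2))^2 ≤ h2 t^2 := by
        rw [hb]; exact claim4a t ht
      have h6 := Real.sqrt_le_sqrt hle
      rwa [Real.sqrt_sq (mul_nonneg hs2pos.le (Real.rpow_pos_of_pos hh _).le),
        Real.sqrt_sq (h2nn t (by linarith))] at h6
    -- fourth energy
    obtain ⟨c4, hc4def⟩ : ∃ x : ℝ, x = 2*s2/(q+3) := ⟨_, rfl⟩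
    have hc4 : 0 < c4 := by rw [hc4def]; positivity
    have hdφ₆ : ∀ t, t2 ≤ t → HasDerivAt (fun s => h1 s^2/2 - c4/2 * h s^((q+3)/2))
        (h2 t * h1 t - s2/2 * h t^((q+1)/2) * h1 t) t := by
      intro t ht
      have H := (((hd1 t).pow 2).div_const 2).sub ((hrp ((q+3)/2) t ht).const_mul (c4/2))
      norm_num at H
      refine H.congr_deriv (Eq.symm ?_)
      have he : (q+3)/2 - 1 = (q+1)/2 := by ring
      rw [he, hc4def]
      field_simp
    have φ₆mono := monoIci (a := t5) (fun t ht => hdφ₆ t (le_trans ht52 ht))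
      (fun t ht => by
        have ht' : t5 ≤ t := ht
        have hcl := claim4 t ht'
        have h1' := h1nn t (by linarith [le_trans ht52 ht'])
        have hpw := (Real.rpow_pos_of_pos (hpos2 t (le_trans ht52 ht')) ((q+1)/2)).le
        linarith only [mul_le_mul_of_nonneg_right hcl h1',
          mul_nonneg (mul_nonneg hs2pos.le hpw) h1'])
    obtain ⟨t6', ht62', habs6⟩ := absorb (c4/2) (2*(h1 t5^2/2 - c4/2 * h t5^((q+3)/2))) ((q+3)/2)
      (by positivity) (by linarith)
    obtain ⟨t6, ht6def⟩ : ∃ x : ℝ, x = max t5 t6' := ⟨_, rfl⟩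
    have ht65 : t5 ≤ t6 := ht6def ▸ le_max_left _ _
    have ht62 : t2 ≤ t6 := le_trans ht52 ht65
    have claim5a : ∀ t, t6 ≤ t → c4/2 * h t^((q+3)/2) ≤ h1 t^2 := by
      intro t ht
      have hm6 : h1 t5^2/2 - c4/2 * h t5^((q+3)/2) ≤ h1 t^2/2 - c4/2 * h t^((q+3)/2) :=
        φ₆mono (le_refl t5) (le_trans ht65 ht)
      have habs' := habs6 t (le_trans (ht6def ▸ le_max_right t5 t6') ht)
      linarith
    obtain ⟨s4, hs4def⟩ : ∃ x : ℝ, x = Real.sqrt (c4/2) := ⟨_, rfl⟩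
    have hs4pos : 0 < s4 := hs4def ▸ Real.sqrt_pos.2 (by positivity)
    obtain ⟨r, hrdef⟩ : ∃ x : ℝ, x = (q+3)/4 := ⟨_, rfl⟩
    have hr1 : 1 < r := by rw [hrdef]; linarith
    have claim5 : ∀ t, t6 ≤ t → s4 * h t^r ≤ h1 t := by
      intro t ht
      have ht2t : t2 ≤ t := le_trans ht62 ht
      have hh := hpos2 t ht2t
      have hb : (s4 * h t^r)^2 = c4/2 * h t^((q+3)/2) := by
        rw [mul_pow, hs4def, Real.sq_sqrt (by positivity : (0:ℝ) ≤ c4/2)]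
        congr 1
        rw [sq, ← Real.rpow_add hh, hrdef]
        congr 1
        ring
      have hle : (s4 * h t^r)^2 ≤ h1 t^2 := by
        rw [hb]; exact claim5a t ht
      have h6 := Real.sqrt_le_sqrt hle
      rwa [Real.sqrt_sq (mul_nonneg hs4pos.le (Real.rpow_pos_of_pos hh _).le),
        Real.sqrt_sq (h1nn t (by linarith))] at h6
    -- final blow-up
    have hdφ₇ : ∀ t, t2 ≤ t → HasDerivAt (fun s => -(h s^(1-r)) - s4*(r-1)*s)
        (-((1-r) * h t^(-r) * h1 t) - s4*(r-1)) t := by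
      intro t ht
      have H := ((hrp (1-r) t ht).neg).sub ((hasDerivAt_id t).const_mul (s4*(r-1)))
      simp only [id_eq, mul_one] at H
      refine H.congr_deriv (Eq.symm ?_)
      have he : 1 - r - 1 = -r := by ring
      rw [he]
    have φ₇mono := monoIci (a := t6) (fun t ht => hdφ₇ t (le_trans ht62 ht))
      (fun t ht => by
        have ht' : t6 ≤ t := ht
        have hcl := claim5 t ht'
        have hh := hpos2 t (le_trans ht62 ht')
        have hpw := (Real.rpow_pos_of_pos hh (-r)).le
        have hmul := mul_le_mul_of_nonneg_left hcl hpw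
        have hid : h t^(-r) * h t^r = 1 := by
          rw [← Real.rpow_add hh]; simp
        have hs4eq : h t^(-r) * (s4 * h t^r) = s4 := by
          rw [show h t^(-r) * (s4 * h t^r) = s4 * (h t^(-r) * h t^r) from by ring, hid,
            mul_one]
        have hs4le : s4 ≤ h t^(-r) * h1 t := by rw [← hs4eq]; exact hmul
        linarith only [mul_le_mul_of_nonneg_left hs4le (by linarith only [hr1] : (0:ℝ) ≤ r - 1)])
    obtain ⟨tstar, htstardef⟩ : ∃ x : ℝ, x = t6 + (h t6^(1-r))/(s4*(r-1)) + 1 := ⟨_, rfl⟩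
    have hs4r1 : 0 < s4*(r-1) := mul_pos hs4pos (by linarith)
    have hts : t6 ≤ tstar := by
      rw [htstardef]
      have : 0 ≤ (h t6^(1-r))/(s4*(r-1)) :=
        div_nonneg (Real.rpow_pos_of_pos (hpos2 t6 ht62) _).le hs4r1.le
      linarith
    have hφ : -(h t6^(1-r)) - s4*(r-1)*t6 ≤ -(h tstar^(1-r)) - s4*(r-1)*tstar :=
      φ₇mono (le_refl t6) hts
    have hkey : s4*(r-1)*(tstar - t6) = h t6^(1-r) + s4*(r-1) := by
      rw [htstardef]
      have hr1' : r - 1 ≠ 0 := by linarith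
      field_simp
      ring
    have hpos7 : 0 < h tstar^(1-r) :=
      Real.rpow_pos_of_pos (hpos2 tstar (le_trans ht62 hts)) _
    linarith only [hφ, hkey, hpos7, hs4r1]
  intro t ht
  exact le_antisymm (not_lt.mp (noPos t ht)) (hnn t ht)


lemma derivZero {f f' : ℝ → ℝ} (hd : ∀ t, HasDerivAt f (f' t) t)
    (hf : ∀ t, 0 ≤ t → f t = 0) : ∀ t, 0 ≤ t → f' t = 0 := by
  intro t ht
  rcases eq_or_lt_of_le ht with h0 | h0
  · have hm : t ∈ Ici (0:ℝ) := ht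
    have hu : UniqueDiffWithinAt ℝ (Ici (0:ℝ)) t := uniqueDiffOn_Ici 0 t hm
    have hca : HasDerivWithinAt f (f' t) (Ici 0) t := (hd t).hasDerivWithinAt
    have hcb : HasDerivWithinAt f 0 (Ici 0) t := by
      have hc : HasDerivWithinAt (fun _ : ℝ => (0:ℝ)) 0 (Ici 0) t := hasDerivWithinAt_const t _ 0
      exact hc.congr (fun x hx => hf x hx) (hf t ht)
    exact UniqueDiffWithinAt.eq_deriv _ hu hca hcb
  · have hev : f =ᶠ[nhds t] (fun _ => 0) := by
      filter_upwards [Ioi_mem_nhds h0] with x hx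
      exact hf x (le_of_lt hx)
    have h2 : HasDerivAt f 0 t := (hasDerivAt_const t 0).congr_of_eventuallyEq hev
    exact (hd t).unique h2

lemma gapLemma (g : ℝ → ℝ) (q c : ℝ) (hq : 1 < q) (hc : 0 < c)
    (hmono : ∀ ⦃x y : ℝ⦄, 0 ≤ x → x ≤ y → g x ≤ g y)
    (hsl : ∀ ⦃x y : ℝ⦄, 0 < x → x ≤ y → g x * y ≤ g y * x)
    (hgrow : ∀ t, 1 ≤ t → c * t ^ q ≤ g t) :
    ∀ x y : ℝ, 0 ≤ y → y ≤ x → 2 ≤ x - y → c/2^q * (x-y) ^ q ≤ g x - g y := by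
  intro x y hy hyx hd
  have hx2 : (2:ℝ) ≤ x := by linarith
  have hx0 : (0:ℝ) < x := by linarith
  have hx21 : (1:ℝ) ≤ x/2 := by linarith
  have h2q : (2:ℝ) ≤ 2^q := by
    calc (2:ℝ) = 2^(1:ℝ) := (Real.rpow_one 2).symm
    _ ≤ 2^q := Real.rpow_le_rpow_of_exponent_le one_le_two hq.le
  have p2 : (0:ℝ) < 2^q := Real.rpow_pos_of_pos two_pos _
  rcases le_or_gt y (x/2) with hcase | hcase
  · have h1 : g y ≤ g (x/2) := hmono hy hcase
    have h2 : g (x/2) * x ≤ g x * (x/2) := hsl (by linarith) (by linarith)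
    have h3 : 2 * g (x/2) ≤ g x := by nlinarith only [h2, hx0]
    have h4 : c * x ^ q ≤ g x := hgrow x (by linarith)
    have h5 : (x - y) ^ q ≤ x ^ q := Real.rpow_le_rpow (by linarith) (by linarith) (by linarith)
    have h6 : c/2^q ≤ c/2 := by
      rw [div_le_div_iff₀ p2 two_pos]
      nlinarith only [h2q, hc.le]
    have h6' : c/2^q * (x-y)^q ≤ c/2 * (x-y)^q :=
      mul_le_mul_of_nonneg_right h6 (Real.rpow_nonneg (by linarith) q)
    have h7 : c/2 * (x-y)^q ≤ c/2 * x^q := mul_le_mul_of_nonneg_left h5 (by positivity)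
    have h8 : c/2 * x^q = (c*x^q)/2 := by ring
    linarith only [h1, h3, h4, h6', h7, h8]
  · have hy0 : (0:ℝ) < y := by linarith
    have A := hsl hy0 hyx
    have B := hsl (show (0:ℝ) < x/2 by linarith) (show x/2 ≤ y by linarith)
    have C : c * (x/2)^q ≤ g (x/2) := hgrow (x/2) hx21
    have hdpos : (0:ℝ) < x - y := by linarith
    have Dq : (x/2)^q = (x/2)^(q-1) * (x/2) := by
      rw [← Real.rpow_add_one (show (x/2:ℝ) ≠ 0 from by positivity) (q-1)]
      congr 1; ring
    have E : ((x-y)/2)^(q-1) ≤ (x/2)^(q-1) :=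
      Real.rpow_le_rpow (by linarith) (by linarith) (by linarith)
    have step1 : g y * (x - y) ≤ (g x - g y) * y := by nlinarith only [A]
    have step2 : (x-y) * (g (x/2) * y) ≤ (x-y) * (g y * (x/2)) :=
      mul_le_mul_of_nonneg_left B (by linarith)
    have step3 : (x-y) * (c * (x/2)^q * y) ≤ (x-y) * (g (x/2) * y) :=
      mul_le_mul_of_nonneg_left (mul_le_mul_of_nonneg_right C hy0.le) (by linarith)
    have step4 : g y * (x-y) * (x/2) ≤ (g x - g y) * y * (x/2) :=
      mul_le_mul_of_nonneg_right step1 (by linarith)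
    have step5 : (x-y) * c * (x/2)^q ≤ (g x - g y) * (x/2) := by
      have hcomb : ((x-y) * c * (x/2)^q) * y ≤ ((g x - g y) * (x/2)) * y := by
        nlinarith only [step2, step3, step4]
      exact le_of_mul_le_mul_right hcomb hy0
    have step6 : (x-y) * c * (x/2)^(q-1) ≤ g x - g y := by
      have h12 : (0:ℝ) < x/2 := by linarith
      have hstep : ((x-y) * c * (x/2)^(q-1)) * (x/2) ≤ (g x - g y) * (x/2) := by
        calc ((x-y) * c * (x/2)^(q-1)) * (x/2) = (x-y) * c * ((x/2)^(q-1) * (x/2)) := by ring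
        _ = (x-y) * c * (x/2)^q := by rw [← Dq]
        _ ≤ (g x - g y) * (x/2) := step5
      exact le_of_mul_le_mul_right hstep h12
    have step7 : (x-y) * c * ((x-y)/2)^(q-1) ≤ (x-y) * c * (x/2)^(q-1) :=
      mul_le_mul_of_nonneg_left E (mul_nonneg (by linarith) hc.le)
    have e1 : ((x-y)/2)^(q-1) = (x-y)^(q-1)/2^(q-1) :=
      Real.div_rpow (by linarith) (by norm_num) _
    have e2 : (x-y)^(q-1) * (x-y) = (x-y)^q := by
      rw [← Real.rpow_add_one hdpos.ne' (q-1)]; congr 1; ring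
    have e3 : (2:ℝ)^q = 2^(q-1) * 2 := by
      rw [← Real.rpow_add_one (by norm_num : (2:ℝ) ≠ 0) (q-1)]; congr 1; ring
    have p1 : (0:ℝ) < 2^(q-1) := Real.rpow_pos_of_pos two_pos _
    have e4 : (x-y) * c * ((x-y)/2)^(q-1) = c * (x-y)^q / 2^(q-1) := by
      rw [e1]
      rw [show (x-y) * c * ((x-y)^(q-1)/2^(q-1)) = c * ((x-y)^(q-1) * (x-y)) / 2^(q-1) from
        by ring, e2]
    have e5 : c * (x-y)^q / 2^(q-1) = 2 * (c/2^q * (x-y)^q) := by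
      rw [e3]; field_simp
    have hnn : 0 ≤ c/2^q * (x-y)^q := by positivity
    linarith only [step6, step7, e4, e5, hnn]

set_option maxHeartbeats 1000000 in
theorem stmt_9 (n : ℕ) (hn : 5 ≤ n) (g : ℝ → ℝ) (hg : CondG n g)
    (A B : ℝ) (hA : A = ((n : ℝ) * ((n : ℝ) - 4) + 8) / 2)
    (hB : B = (n : ℝ) ^ 2 * ((n : ℝ) - 4) ^ 2 / 16)
    (μ : ℝ) (hμ : μ = (A - Real.sqrt (A ^ 2 - 4 * B)) / 2)
    (hμ' : μ = ((n : ℝ) - 4) ^ 2 / 4)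
    (v w : ℝ → ℝ) (hv4 : ContDiff ℝ 4 v) (hw4 : ContDiff ℝ 4 w)
    (hvnn : ∀ t, 0 ≤ v t) (hwnn : ∀ t, 0 ≤ w t)
    (hvsol : IsSol A B g v) (hwsol : IsSol A B g w)
    (h0 : w 0 ≤ v 0)
    (h1 : deriv w 0 ≤ deriv v 0)
    (h2 : iteratedDeriv 2 w 0 - μ * w 0 ≤ iteratedDeriv 2 v 0 - μ * v 0)
    (h3 : iteratedDeriv 3 w 0 - μ * deriv w 0 ≤ iteratedDeriv 3 v 0 - μ * deriv v 0) :
    ∀ t, v t = w t := by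
  obtain ⟨hgC1, hgpos, hgtend0, hgslope, hgβ, hggrow, hg0⟩ := hg
  obtain ⟨q, c, hq, hc, hgrow⟩ := hggrow
  obtain ⟨β, hβ0, hβlt, hβtend⟩ := hgβ
  -- basic facts about g
  have hgdiff : ∀ t : ℝ, 0 < t → HasDerivAt g (deriv g t) t := by
    intro t ht
    have hdo : DifferentiableOn ℝ g (Ioi 0) := hgC1.differentiableOn one_ne_zero
    exact ((hdo t ht).differentiableAt (Ioi_mem_nhds ht)).hasDerivAt
  have hgcont : ContinuousOn g (Ici 0) := by
    intro x hx
    rcases eq_or_lt_of_le (mem_Ici.1 hx : (0:ℝ) ≤ x) with hxx | hxx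
    · have hT : Filter.Tendsto g (nhdsWithin 0 (Ici 0)) (nhds 0) := by
        rw [show Ici (0:ℝ) = insert 0 (Ioi 0) from Set.Ioi_insert.symm,
          nhdsWithin_insert]
        refine Filter.tendsto_sup.mpr ⟨?_, hgtend0⟩
        have hp := tendsto_pure_nhds g 0
        rwa [hg0] at hp
      rw [← hxx]
      unfold ContinuousWithinAt
      rw [hg0]
      exact hT
    · exact ((hgdiff x hxx).continuousAt).continuousWithinAt
  have hgsm : StrictMonoOn g (Ici 0) := by
    apply strictMonoOn_of_deriv_pos (convex_Ici 0) hgcont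
    intro x hx
    rw [interior_Ici] at hx
    have hs := (hgslope x hx).1
    have hgx := hgpos x hx
    have hdiv : 0 < g x / x := div_pos hgx hx
    linarith
  have hmono' : ∀ ⦃x y : ℝ⦄, 0 ≤ x → x ≤ y → g x ≤ g y := by
    intro x y hx hxy
    exact hgsm.monotoneOn hx (le_trans hx hxy) hxy
  have hslopeMono : MonotoneOn (fun s => g s / s) (Ioi 0) := by
    apply monotoneOn_of_deriv_nonneg (convex_Ioi 0) (f := fun s => g s / s)
    · exact ContinuousOn.div (hgcont.mono Ioi_subset_Ici_self) continuousOn_id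
        (fun x hx => ne_of_gt hx)
    · intro x hx
      rw [interior_Ioi] at hx
      exact (((hgdiff x hx).div (hasDerivAt_id x) (ne_of_gt hx)).differentiableAt).differentiableWithinAt
    · intro x hx
      rw [interior_Ioi] at hx
      have hdd : HasDerivAt (fun s => g s / s) ((deriv g x * x - g x * 1)/x^2) x :=
        (hgdiff x hx).div (hasDerivAt_id x) (ne_of_gt hx)
      rw [hdd.deriv]
      have hs := (hgslope x hx).1
      have hnum : 0 ≤ deriv g x * x - g x * 1 := by
        rw [div_lt_iff₀ hx] at hs
        linarith
      exact div_nonneg hnum (sq_nonneg x)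
  have hsl : ∀ ⦃x y : ℝ⦄, 0 < x → x ≤ y → g x * y ≤ g y * x := by
    intro x y hx hxy
    have hy : (0:ℝ) < y := lt_of_lt_of_le hx hxy
    have := hslopeMono (show x ∈ Ioi (0:ℝ) from hx) (show y ∈ Ioi (0:ℝ) from hy) hxy
    rwa [div_le_div_iff₀ hx hy] at this
  -- Lipschitz bound on [0, M]
  have hLip : ∀ M : ℝ, 0 < M → ∃ L, 0 ≤ L ∧
      ∀ x y', 0 ≤ x → x ≤ y' → y' ≤ M → g y' - g x ≤ L * (y' - x) := by
    intro M hM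
    have hev : ∀ᶠ t in nhdsWithin 0 (Ioi 0), deriv g t < β + 1 :=
      hβtend.eventually_lt_const (by linarith)
    obtain ⟨ε, hε, hsub⟩ := mem_nhdsGT_iff_exists_Ioo_subset.mp hev
    have hε0 : (0:ℝ) < ε := hε
    have hcd : ContinuousOn (deriv g) (Icc (ε/2) M) := by
      apply (hgC1.continuousOn_deriv_of_isOpen isOpen_Ioi le_rfl).mono
      intro x hx
      have := hx.1
      simp only [mem_Ioi]
      linarith
    obtain ⟨C, hC⟩ := (isCompact_Icc (a := ε/2) (b := M)).exists_bound_of_continuousOn hcd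
    refine ⟨max (β+1) (max C 0), le_trans (le_max_right C 0) (le_max_right _ _), ?_⟩
    have hLnn : (0:ℝ) ≤ max (β+1) (max C 0) := le_trans (le_max_right C 0) (le_max_right _ _)
    have hdle : ∀ t, 0 < t → t ≤ M → deriv g t ≤ max (β+1) (max C 0) := by
      intro t ht htM
      rcases lt_or_ge t ε with hlt | hge
      · have := hsub ⟨ht, hlt⟩
        simp only [mem_setOf_eq] at this
        linarith [le_max_left (β+1) (max C 0)]
      · have hmem : t ∈ Icc (ε/2) M := ⟨by linarith, htM⟩
        have := hC t hmem
        rw [Real.norm_eq_abs] at this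
        have h1' := le_of_abs_le this
        have h2' := le_max_left C (0:ℝ)
        have h3' := le_max_right (β+1) (max C 0)
        linarith
    have hMVT : ∀ x y', 0 < x → x ≤ y' → y' ≤ M →
        g y' - g x ≤ max (β+1) (max C 0) * (y' - x) := by
      intro x y' hx hxy hyM
      have hm := monoIcc (a := x) (b := y')
        (f := fun u => max (β+1) (max C 0) * u - g u)
        (f' := fun u => max (β+1) (max C 0) * 1 - deriv g u)
        (fun u hu => ((hasDerivAt_id u).const_mul _).sub (hgdiff u (by
          have := hu.1; linarith)))
        (fun u hu => by
          have hdd := hdle u (by have := hu.1; linarith) (le_trans hu.2 hyM)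
          show 0 ≤ max (β+1) (max C 0) * 1 - deriv g u
          linarith)
      have hmm : max (β+1) (max C 0) * x - g x ≤ max (β+1) (max C 0) * y' - g y' :=
        hm (le_refl x) hxy (le_refl y')
      linarith
    intro x y' hx hxy hyM
    rcases eq_or_lt_of_le hx with hx0 | hx0
    · rcases eq_or_lt_of_le hxy with hxy0 | hxy0
      · rw [← hxy0]; simp
      · -- x = 0 < y'
        have hy'0 : 0 < y' := by rw [← hx0] at hxy0; exact hxy0
        have hev2 : ∀ᶠ x' in nhdsWithin 0 (Ioi 0),
            g y' - g x' ≤ max (β+1) (max C 0) * (y' - x') := by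
          have hmem : Ioo (0:ℝ) y' ∈ nhdsWithin 0 (Ioi 0) :=
            Ioo_mem_nhdsGT_of_mem ⟨le_refl 0, hy'0⟩
          filter_upwards [hmem] with x' hx'
          exact hMVT x' y' hx'.1 hx'.2.le hyM
        have htend : Filter.Tendsto (fun x' => g y' - g x' -
            max (β+1) (max C 0) * (y' - x')) (nhdsWithin 0 (Ioi 0))
            (nhds (g y' - 0 - max (β+1) (max C 0) * (y' - 0))) := by
          apply Filter.Tendsto.sub
          · exact (tendsto_const_nhds.sub hgtend0)
          · have : Continuous (fun x' : ℝ => max (β+1) (max C 0) * (y' - x')) := by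
              continuity
            exact (this.tendsto 0).mono_left nhdsWithin_le_nhds
        have hle : g y' - 0 - max (β+1) (max C 0) * (y' - 0) ≤ 0 := by
          apply le_of_tendsto htend
          filter_upwards [hev2] with x' hx'
          linarith
        rw [← hx0, hg0]
        simp only [sub_zero] at hle ⊢
        linarith
    · exact hMVT x y' hx0 hxy hyM
  -- parameters
  have hn5 : (5:ℝ) ≤ (n:ℝ) := by exact_mod_cast hn
  obtain ⟨om, homdef⟩ : ∃ x : ℝ, x = (n:ℝ)/2 := ⟨_, rfl⟩
  obtain ⟨nu, hnudef⟩ : ∃ x : ℝ, x = ((n:ℝ)-4)/2 := ⟨_, rfl⟩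
  have hom : 0 < om := by rw [homdef]; linarith
  have hnu : 0 < nu := by rw [hnudef]; linarith
  have hAom : om^2 + nu^2 = A := by rw [homdef, hnudef, hA]; ring
  have hBom : om^2 * nu^2 = B := by rw [homdef, hnudef, hB]; ring
  have hmuu : nu^2 = μ := by rw [hnudef, hμ']; ring
  -- derivative towers
  have hv4' : ContDiff ℝ ((3:WithTop ℕ∞)+1) v := by
    have he : ((3:WithTop ℕ∞)+1) = 4 := by norm_num
    rw [he]; exact hv4
  have hvc1 : ContDiff ℝ 3 (deriv v) := (contDiff_succ_iff_deriv.mp hv4').2.2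
  have hvc1' : ContDiff ℝ ((2:WithTop ℕ∞)+1) (deriv v) := by
    have he : ((2:WithTop ℕ∞)+1) = 3 := by norm_num
    rw [he]; exact hvc1
  have hvc2 : ContDiff ℝ 2 (deriv (deriv v)) := (contDiff_succ_iff_deriv.mp hvc1').2.2
  have hvc2' : ContDiff ℝ ((1:WithTop ℕ∞)+1) (deriv (deriv v)) := by
    have he : ((1:WithTop ℕ∞)+1) = 2 := by norm_num
    rw [he]; exact hvc2
  have hvc3 : ContDiff ℝ 1 (deriv (deriv (deriv v))) := (contDiff_succ_iff_deriv.mp hvc2').2.2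
  have hw4' : ContDiff ℝ ((3:WithTop ℕ∞)+1) w := by
    have he : ((3:WithTop ℕ∞)+1) = 4 := by norm_num
    rw [he]; exact hw4
  have hwc1 : ContDiff ℝ 3 (deriv w) := (contDiff_succ_iff_deriv.mp hw4').2.2
  have hwc1' : ContDiff ℝ ((2:WithTop ℕ∞)+1) (deriv w) := by
    have he : ((2:WithTop ℕ∞)+1) = 3 := by norm_num
    rw [he]; exact hwc1
  have hwc2 : ContDiff ℝ 2 (deriv (deriv w)) := (contDiff_succ_iff_deriv.mp hwc1').2.2
  have hwc2' : ContDiff ℝ ((1:WithTop ℕ∞)+1) (deriv (deriv w)) := by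
    have he : ((1:WithTop ℕ∞)+1) = 2 := by norm_num
    rw [he]; exact hwc2
  have hwc3 : ContDiff ℝ 1 (deriv (deriv (deriv w))) := (contDiff_succ_iff_deriv.mp hwc2').2.2
  have hdv0 : ∀ t, HasDerivAt v (deriv v t) t :=
    fun t => (hv4.differentiable (by norm_num) t).hasDerivAt
  have hdv1 : ∀ t, HasDerivAt (deriv v) (deriv (deriv v) t) t :=
    fun t => (hvc1.differentiable (by norm_num) t).hasDerivAt
  have hdv2 : ∀ t, HasDerivAt (deriv (deriv v)) (deriv (deriv (deriv v)) t) t :=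
    fun t => (hvc2.differentiable (by norm_num) t).hasDerivAt
  have hdv3 : ∀ t, HasDerivAt (deriv (deriv (deriv v))) (deriv (deriv (deriv (deriv v))) t) t :=
    fun t => (hvc3.differentiable (by norm_num) t).hasDerivAt
  have hdw0 : ∀ t, HasDerivAt w (deriv w t) t :=
    fun t => (hw4.differentiable (by norm_num) t).hasDerivAt
  have hdw1 : ∀ t, HasDerivAt (deriv w) (deriv (deriv w) t) t :=
    fun t => (hwc1.differentiable (by norm_num) t).hasDerivAt
  have hdw2 : ∀ t, HasDerivAt (deriv (deriv w)) (deriv (deriv (deriv w)) t) t :=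
    fun t => (hwc2.differentiable (by norm_num) t).hasDerivAt
  have hdw3 : ∀ t, HasDerivAt (deriv (deriv (deriv w))) (deriv (deriv (deriv (deriv w))) t) t :=
    fun t => (hwc3.differentiable (by norm_num) t).hasDerivAt
  -- the difference functions
  obtain ⟨H, hHdef⟩ : ∃ f : ℝ → ℝ, f = fun t => v t - w t := ⟨_, rfl⟩
  obtain ⟨H1, hH1def⟩ : ∃ f : ℝ → ℝ, f = fun t => deriv v t - deriv w t := ⟨_, rfl⟩
  obtain ⟨H2, hH2def⟩ : ∃ f : ℝ → ℝ, f = fun t => deriv (deriv v) t - deriv (deriv w) t :=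
    ⟨_, rfl⟩
  obtain ⟨H3, hH3def⟩ : ∃ f : ℝ → ℝ,
    f = fun t => deriv (deriv (deriv v)) t - deriv (deriv (deriv w)) t := ⟨_, rfl⟩
  obtain ⟨H4, hH4def⟩ : ∃ f : ℝ → ℝ,
    f = fun t => deriv (deriv (deriv (deriv v))) t - deriv (deriv (deriv (deriv w))) t :=
    ⟨_, rfl⟩
  obtain ⟨δf, hδdef⟩ : ∃ f : ℝ → ℝ, f = fun t => g (v t) - g (w t) := ⟨_, rfl⟩
  have hd0 : ∀ t, HasDerivAt H (H1 t) t := by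
    intro t; simp only [hHdef, hH1def]; exact (hdv0 t).sub (hdw0 t)
  have hd1 : ∀ t, HasDerivAt H1 (H2 t) t := by
    intro t; simp only [hH1def, hH2def]; exact (hdv1 t).sub (hdw1 t)
  have hd2 : ∀ t, HasDerivAt H2 (H3 t) t := by
    intro t; simp only [hH2def, hH3def]; exact (hdv2 t).sub (hdw2 t)
  have hd3 : ∀ t, HasDerivAt H3 (H4 t) t := by
    intro t; simp only [hH3def, hH4def]; exact (hdv3 t).sub (hdw3 t)
  -- iterated derivative identifications
  have e2v : iteratedDeriv 2 v = deriv (deriv v) := by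
    rw [show (2:ℕ) = 1 + 1 from rfl, iteratedDeriv_succ, iteratedDeriv_one]
  have e3v : iteratedDeriv 3 v = deriv (deriv (deriv v)) := by
    rw [show (3:ℕ) = 2 + 1 from rfl, iteratedDeriv_succ, e2v]
  have e4v : iteratedDeriv 4 v = deriv (deriv (deriv (deriv v))) := by
    rw [show (4:ℕ) = 3 + 1 from rfl, iteratedDeriv_succ, e3v]
  have e2w : iteratedDeriv 2 w = deriv (deriv w) := by
    rw [show (2:ℕ) = 1 + 1 from rfl, iteratedDeriv_succ, iteratedDeriv_one]
  have e3w : iteratedDeriv 3 w = deriv (deriv (deriv w)) := by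
    rw [show (3:ℕ) = 2 + 1 from rfl, iteratedDeriv_succ, e2w]
  have e4w : iteratedDeriv 4 w = deriv (deriv (deriv (deriv w))) := by
    rw [show (4:ℕ) = 3 + 1 from rfl, iteratedDeriv_succ, e3w]
  have odeH : ∀ t, H4 t = (om^2 + nu^2) * H2 t - om^2 * nu^2 * H t + δf t := by
    intro t
    have hv' := hvsol t
    have hw' := hwsol t
    rw [e4v, e2v] at hv'
    rw [e4w, e2w] at hw'
    simp only [hH4def, hH2def, hHdef, hδdef]
    rw [hAom, hBom]
    linarith [hv', hw']
  -- initial conditions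
  have i0 : 0 ≤ H 0 := by simp only [hHdef]; linarith
  have i1 : 0 ≤ H1 0 := by simp only [hH1def]; linarith
  have i2 : 0 ≤ H2 0 - nu^2 * H 0 := by
    rw [e2v, e2w] at h2
    simp only [hH2def, hHdef]
    rw [hmuu]
    linarith
  have i3 : 0 ≤ H3 0 - nu^2 * H1 0 := by
    rw [e3v, e3w] at h3
    simp only [hH3def, hH1def]
    rw [hmuu]
    linarith
  -- continuity of δf
  have hgvc : Continuous (fun t => g (v t)) :=
    hgcont.comp_continuous hv4.continuous (fun x => hvnn x)
  have hgwc : Continuous (fun t => g (w t)) :=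
    hgcont.comp_continuous hw4.continuous (fun x => hwnn x)
  have hδc : Continuous δf := by rw [hδdef]; exact hgvc.sub hgwc
  -- links between H and δf
  have link0 : ∀ s, 0 ≤ H s → 0 ≤ δf s := by
    intro s hs
    simp only [hHdef] at hs
    simp only [hδdef]
    have := hmono' (hwnn s) (by linarith : w s ≤ v s)
    linarith
  have link1 : ∀ s, 0 < H s → 0 < δf s := by
    intro s hs
    simp only [hHdef] at hs
    simp only [hδdef]
    have := hgsm (hwnn s) (le_trans (hwnn s) (by linarith : w s ≤ v s))
      (by linarith : w s < v s)
    linarith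
  have link2 : ∀ s, 2 ≤ H s → c/2^q * H s ^ q ≤ δf s := by
    intro s hs
    simp only [hHdef] at hs ⊢
    simp only [hδdef]
    exact gapLemma g q c hq hc hmono' hsl (fun t ht => hgrow t ht) (v s) (w s) (hwnn s)
      (by linarith) hs
  -- Lipschitz bound, two-sided
  have lipAbs : ∀ T : ℝ, 0 < T → ∃ L, 0 ≤ L ∧
      ∀ s, |s| ≤ T → -(L * max (-(H s)) 0) ≤ δf s := by
    intro T hT
    obtain ⟨Cv, hCv⟩ := (isCompact_Icc (a := -T) (b := T)).exists_bound_of_continuousOn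
      (hv4.continuous.continuousOn)
    obtain ⟨Cw, hCw⟩ := (isCompact_Icc (a := -T) (b := T)).exists_bound_of_continuousOn
      (hw4.continuous.continuousOn)
    have hM : (0:ℝ) < max Cv Cw + 1 := by
      have h00 : (0:ℝ) ∈ Icc (-T) T := ⟨by linarith, by linarith⟩
      have hb := hCv 0 h00
      have hb2 := norm_nonneg (v 0)
      have hb3 := le_max_left Cv Cw
      linarith
    obtain ⟨L, hL, hLip'⟩ := hLip (max Cv Cw + 1) hM
    refine ⟨L, hL, ?_⟩
    intro s hs
    have hsmem : s ∈ Icc (-T) T := ⟨(abs_le.mp hs).1, (abs_le.mp hs).2⟩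
    have hvB : v s ≤ max Cv Cw + 1 := by
      have hb := hCv s hsmem
      rw [Real.norm_eq_abs] at hb
      have hb' := le_of_abs_le hb
      have hb3 := le_max_left Cv Cw
      linarith
    have hwB : w s ≤ max Cv Cw + 1 := by
      have hb := hCw s hsmem
      rw [Real.norm_eq_abs] at hb
      have hb' := le_of_abs_le hb
      have hb3 := le_max_right Cv Cw
      linarith
    rcases le_or_gt (w s) (v s) with hcase | hcase
    · have hδ0 : 0 ≤ δf s := link0 s (by simp only [hHdef]; linarith)
      have hnn' : 0 ≤ L * max (-(H s)) 0 := mul_nonneg hL (le_max_right _ _)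
      linarith
    · have hlip2 := hLip' (v s) (w s) (hvnn s) hcase.le hwB
      have hmax : max (-(H s)) 0 = w s - v s := by
        simp only [hHdef]
        rw [max_eq_left (by linarith : (0:ℝ) ≤ -(v s - w s))]
        ring
      rw [hmax]
      simp only [hδdef]
      linarith
  have lipIcc : ∀ T, 0 < T → ∃ L, 0 ≤ L ∧
      ∀ s ∈ Icc (0:ℝ) T, -(L * max (-(H s)) 0) ≤ δf s := by
    intro T hT
    obtain ⟨L, hL, hl⟩ := lipAbs T hT
    exact ⟨L, hL, fun s hs => hl s (by rw [abs_of_nonneg hs.1]; exact hs.2)⟩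
  have hc0' : 0 < c/2^q := by positivity
  -- forward direction
  have hfwd0 := keyPos om nu hom hnu H H1 H2 H3 H4 δf hd0 hd1 hd2 hd3 odeH lipIcc i0 i1 i2 i3
  have hforward : ∀ t, 0 ≤ t → H t = 0 :=
    keyZero om nu q (c/2^q) hom hnu hq hc0' H H1 H2 H3 H4 δf hd0 hd1 hd2 hd3 hδc odeH
      link0 link1 link2 hfwd0 i1 i2 i3
  have hz1 : ∀ t, 0 ≤ t → H1 t = 0 := derivZero hd0 hforward
  have hz2 : ∀ t, 0 ≤ t → H2 t = 0 := derivZero hd1 hz1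
  have hz3 : ∀ t, 0 ≤ t → H3 t = 0 := derivZero hd2 hz2
  -- reversed functions
  have hcompneg : ∀ (f f' : ℝ → ℝ), (∀ t, HasDerivAt f (f' t) t) →
      ∀ t, HasDerivAt (fun s => f (-s)) (-(f' (-t))) t := by
    intro f f' hf t
    have hneg : HasDerivAt (fun x : ℝ => -x) (-1) t := (hasDerivAt_id t).neg
    have hcomp := (hf (-t)).comp t hneg
    have heq : f ∘ (fun x : ℝ => -x) = fun s => f (-s) := rfl
    rw [heq] at hcomp
    refine hcomp.congr_deriv (Eq.symm ?_)
    ring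
  have hdr0 := hcompneg H H1 hd0
  have hdr1 : ∀ t, HasDerivAt (fun s => -(H1 (-s))) (H2 (-t)) t := by
    intro t
    have := (hcompneg H1 H2 hd1 t).neg
    exact this.congr_deriv (neg_neg _)
  have hdr2 := hcompneg H2 H3 hd2
  have hdr3 : ∀ t, HasDerivAt (fun s => -(H3 (-s))) (H4 (-t)) t := by
    intro t
    have := (hcompneg H3 H4 hd3 t).neg
    exact this.congr_deriv (neg_neg _)
  have hδrc : Continuous (fun s => δf (-s)) := hδc.comp continuous_neg
  have oder : ∀ t : ℝ, H4 (-t) = (om^2 + nu^2) * H2 (-t) - om^2 * nu^2 * H (-t) + δf (-t) :=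
    fun t => odeH (-t)
  have lipr : ∀ T, 0 < T → ∃ L, 0 ≤ L ∧
      ∀ s ∈ Icc (0:ℝ) T, -(L * max (-(H (-s))) 0) ≤ δf (-s) := by
    intro T hT
    obtain ⟨L, hL, hl⟩ := lipAbs T hT
    refine ⟨L, hL, fun s hs => hl (-s) ?_⟩
    rw [abs_neg, abs_of_nonneg hs.1]
    exact hs.2
  have hH00 : H 0 = 0 := hforward 0 le_rfl
  have hH10 : H1 0 = 0 := hz1 0 le_rfl
  have hH20 : H2 0 = 0 := hz2 0 le_rfl
  have hH30 : H3 0 = 0 := hz3 0 le_rfl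
  have ir0 : (0:ℝ) ≤ H (-0) := by rw [neg_zero, hH00]
  have ir1 : (0:ℝ) ≤ -(H1 (-0)) := by rw [neg_zero, hH10]; norm_num
  have ir2 : (0:ℝ) ≤ H2 (-0) - nu^2 * H (-0) := by
    rw [neg_zero, hH20, hH00]; ring_nf; exact le_refl 0
  have ir3 : (0:ℝ) ≤ -(H3 (-0)) - nu^2 * (-(H1 (-0))) := by
    rw [neg_zero, hH30, hH10]; ring_nf; exact le_refl 0
  have hrfwd0 := keyPos om nu hom hnu (fun s => H (-s)) (fun s => -(H1 (-s)))
    (fun s => H2 (-s)) (fun s => -(H3 (-s))) (fun s => H4 (-s)) (fun s => δf (-s))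
    hdr0 hdr1 hdr2 hdr3 oder lipr ir0 ir1 ir2 ir3
  have hbackward : ∀ t, 0 ≤ t → H (-t) = 0 :=
    keyZero om nu q (c/2^q) hom hnu hq hc0' (fun s => H (-s)) (fun s => -(H1 (-s)))
      (fun s => H2 (-s)) (fun s => -(H3 (-s))) (fun s => H4 (-s)) (fun s => δf (-s))
      hdr0 hdr1 hdr2 hdr3 hδrc oder
      (fun s => link0 (-s)) (fun s => link1 (-s)) (fun s => link2 (-s))
      hrfwd0 ir1 ir2 ir3
  intro t
  have hHt : H t = 0 := by
    rcases le_total 0 t with ht | ht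
    · exact hforward t ht
    · have hb := hbackward (-t) (by linarith)
      rwa [neg_neg] at hb
  rw [hHdef] at hHt
  simp only at hHt
  linarith


end
end

section
/- Let v, w : ℝ → ℝ be C⁴ nonnegative solutions of the ODE v''''(t) − A·v''(t) + B·v(t) = g(v(t)) with v(0) = w(0) and v'(0) = w'(0). Then v ≡ w on ℝ. -/
set_option maxHeartbeats 4000000
open Real Filter Set

noncomputable section

lemma monoIci_s10 {f f' : ℝ → ℝ} {a : ℝ} (hf : ∀ t, HasDerivAt f (f' t) t)
    (h : ∀ t ∈ Ioi a, 0 ≤ f' t) : MonotoneOn f (Ici a) := by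
  apply monotoneOn_of_deriv_nonneg (convex_Ici a)
    (fun t _ => (hf t).continuousAt.continuousWithinAt)
    (fun t _ => ((hf t).differentiableAt).differentiableWithinAt)
  intro t ht; rw [interior_Ici] at ht; rw [(hf t).deriv]; exact h t ht

lemma antiIci' {f f' : ℝ → ℝ} {a : ℝ} (hf : ∀ t ∈ Ici a, HasDerivAt f (f' t) t)
    (h : ∀ t ∈ Ioi a, f' t ≤ 0) : AntitoneOn f (Ici a) := by
  apply antitoneOn_of_deriv_nonpos (convex_Ici a)
    (fun t ht => (hf t ht).continuousAt.continuousWithinAt)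
  · intro t ht; rw [interior_Ici] at ht
    exact ((hf t (Ioi_subset_Ici_self ht)).differentiableAt).differentiableWithinAt
  · intro t ht; rw [interior_Ici] at ht
    rw [(hf t (Ioi_subset_Ici_self ht)).deriv]; exact h t ht

lemma strictIcc {f f' : ℝ → ℝ} {a b : ℝ} (hf : ∀ t, HasDerivAt f (f' t) t)
    (h : ∀ t ∈ Ioo a b, 0 < f' t) : StrictMonoOn f (Icc a b) := by
  apply strictMonoOn_of_deriv_pos (convex_Icc a b)
    (fun t _ => (hf t).continuousAt.continuousWithinAt)
  intro t ht; rw [interior_Icc] at ht; rw [(hf t).deriv]; exact h t ht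

lemma posIoc {f f' : ℝ → ℝ} {η : ℝ} (hf : ∀ t, HasDerivAt f (f' t) t)
    (h0 : f 0 = 0) (h : ∀ t ∈ Ioc (0:ℝ) η, 0 < f' t) :
    ∀ t ∈ Ioc (0:ℝ) η, 0 < f t := by
  intro t ht
  have hs := strictIcc (a := 0) (b := η) hf (fun s hs => h s ⟨hs.1, hs.2.le⟩)
  have := hs (left_mem_Icc.2 (ht.1.le.trans ht.2)) ⟨ht.1.le, ht.2⟩ ht.1
  rwa [h0] at this

lemma posNbhd {f : ℝ → ℝ} (hc : ContinuousAt f 0) (h : 0 < f 0) :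
    ∃ η > 0, ∀ t ∈ Icc (0:ℝ) η, 0 < f t := by
  have h2 : ∀ᶠ t in nhds (0:ℝ), 0 < f t :=
    ContinuousAt.eventually_lt continuousAt_const hc h
  rcases Metric.eventually_nhds_iff.1 h2 with ⟨ε, hε, hball⟩
  refine ⟨ε/2, by linarith, fun t ht => hball ?_⟩
  rw [Real.dist_eq, sub_zero, abs_of_nonneg ht.1]
  linarith [ht.2]

lemma monoIcc_s10 {f f' : ℝ → ℝ} {a b : ℝ} (hf : ∀ t, HasDerivAt f (f' t) t)
    (h : ∀ t ∈ Ioo a b, 0 ≤ f' t) : MonotoneOn f (Icc a b) := by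
  apply monotoneOn_of_deriv_nonneg (convex_Icc a b)
    (fun t _ => (hf t).continuousAt.continuousWithinAt)
    (fun t _ => ((hf t).differentiableAt).differentiableWithinAt)
  intro t ht; rw [interior_Icc] at ht; rw [(hf t).deriv]; exact h t ht

lemma domAux (cp a b c ph ps th X Y x : ℝ)
    (hA : 2*a*Y + 4*b*Y + 4*c*Y + 2*cp*Y ≤ 2*cp*X)
    (hP1 : -(a*Y) ≤ ph*Y) (hP2 : -(b*x) ≤ ps*x)
    (ha3 : -c ≤ th) (hb1 : 0 ≤ b*(Y-x)) (hb2 : 0 ≤ c*(Y-1)) (hcY : 0 ≤ cp*Y) :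
    2*cp*X ≤ 4*(cp*X + ph*Y/2 + ps*x + th) := by nlinarith

lemma quartAux (cp ph ps X Y x X1 Y1 x1 th1 D : ℝ)
    (hth : th1 ≤ D / 4 - (cp * X + ph * Y / 2 + ps * x))
    (hd : 2 * cp * X ≤ 4 * (cp * X + ph * Y / 2 + ps * x + th1)) :
    2 * cp * X ≤ D := by linarith

lemma keyLemma {μ₁ μ₂ c₀ q : ℝ} (hμ₁ : 0 < μ₁) (hμ₂ : 0 ≤ μ₂) (hc₀ : 0 < c₀) (hq : 1 < q)
    {d0 d1 d2 d3 G : ℝ → ℝ}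
    (h0 : ∀ t, HasDerivAt d0 (d1 t) t)
    (h1 : ∀ t, HasDerivAt d1 (d2 t) t)
    (h2 : ∀ t, HasDerivAt d2 (d3 t) t)
    (h3 : ∀ t, HasDerivAt d3 ((μ₁ + μ₂) * d2 t - μ₁ * μ₂ * d0 t + G t) t)
    (hGc : Continuous G)
    (hG0 : ∀ t, 0 < t → 0 < d0 t → 0 ≤ G t)
    (hGg : ∀ t, 0 < t → 1 ≤ d0 t → c₀ * d0 t ^ q ≤ G t)
    (hG00 : G 0 = 0)
    (hd00 : d0 0 = 0) (hd10 : d1 0 = 0)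
    (ha : 0 ≤ d2 0) (hb : 0 ≤ d3 0) (hab : 0 < d2 0 ∨ 0 < d3 0) : False := by
  classical
  -- the factorized variables
  set y : ℝ → ℝ := fun t => d2 t - μ₂ * d0 t with hy_def
  set y1 : ℝ → ℝ := fun t => d3 t - μ₂ * d1 t with hy1_def
  set y2 : ℝ → ℝ := fun t => μ₁ * y t + G t with hy2_def
  have hy : ∀ t, HasDerivAt y (y1 t) t := by
    intro t
    have := (h2 t).sub ((h0 t).const_mul μ₂)
    exact this
  have hy1 : ∀ t, HasDerivAt y1 (y2 t) t := by
    intro t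
    have := (h3 t).sub ((h1 t).const_mul μ₂)
    have heq : (μ₁ + μ₂) * d2 t - μ₁ * μ₂ * d0 t + G t - μ₂ * d2 t = y2 t := by
      simp only [hy2_def, hy_def]; ring
    rw [← heq]
    exact this
  have hy0 : y 0 = d2 0 := by simp [hy_def, hd00]
  have hy10 : y1 0 = d3 0 := by simp [hy1_def, hd10]
  have hycont : Continuous y := by
    have : Differentiable ℝ y := fun t => (hy t).differentiableAt
    exact this.continuous
  have hy2cont : Continuous y2 := by
    have : Continuous fun t => μ₁ * y t := continuous_const.mul hycont
    exact this.add hGc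
  -- Step 1: positivity on a right neighborhood of 0
  have step1 : ∃ η > 0, ∀ t ∈ Ioc (0:ℝ) η,
      0 < d0 t ∧ 0 < d1 t ∧ 0 < y t ∧ 0 < y1 t := by
    rcases lt_or_eq_of_le ha with hA | hA2
    · -- d2 0 > 0
      obtain ⟨η₁, hη₁, hyp⟩ := posNbhd hycont.continuousAt (by rwa [hy0])
      have hy1pos : ∃ η > 0, ∀ t ∈ Ioc (0:ℝ) η, 0 < y1 t := by
        rcases lt_or_eq_of_le hb with hb' | hb'
        · obtain ⟨η₂, hη₂, h2p⟩ := posNbhd (hy1 0).continuousAt (by rwa [hy10])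
          exact ⟨η₂, hη₂, fun t ht => h2p t ⟨ht.1.le, ht.2⟩⟩
        · obtain ⟨η₂, hη₂, h2p⟩ := posNbhd hy2cont.continuousAt
            (by simp only [hy2_def, hG00, add_zero, hy0]; exact mul_pos hμ₁ hA)
          refine ⟨η₂, hη₂, posIoc hy1 (by rw [hy10, ← hb']) ?_⟩
          exact fun t ht => h2p t ⟨ht.1.le, ht.2⟩
      obtain ⟨η₂, hη₂, h2p⟩ := hy1pos
      obtain ⟨η₃, hη₃, h3p⟩ := posNbhd (h2 0).continuousAt hA
      have hd1p : ∀ t ∈ Ioc (0:ℝ) η₃, 0 < d1 t :=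
        posIoc h1 hd10 (fun t ht => h3p t ⟨ht.1.le, ht.2⟩)
      have hd0p : ∀ t ∈ Ioc (0:ℝ) η₃, 0 < d0 t := posIoc h0 hd00 hd1p
      refine ⟨min η₁ (min η₂ η₃), by positivity, fun t ht => ?_⟩
      have ht1 : t ≤ η₁ := ht.2.trans (min_le_left _ _)
      have ht2 : t ≤ η₂ := ht.2.trans ((min_le_right _ _).trans (min_le_left _ _))
      have ht3 : t ≤ η₃ := ht.2.trans ((min_le_right _ _).trans (min_le_right _ _))
      exact ⟨hd0p t ⟨ht.1, ht3⟩, hd1p t ⟨ht.1, ht3⟩, hyp t ⟨ht.1.le, ht1⟩,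
        h2p t ⟨ht.1, ht2⟩⟩
    · -- d2 0 = 0, hence d3 0 > 0
      have hB : 0 < d3 0 := by
        rcases hab with h | h
        · rw [← hA2] at h; exact absurd h (lt_irrefl 0)
        · exact h
      obtain ⟨η₁, hη₁, h1p⟩ := posNbhd (hy1 0).continuousAt (by rwa [hy10])
      have hyp : ∀ t ∈ Ioc (0:ℝ) η₁, 0 < y t :=
        posIoc hy (by rw [hy0, ← hA2]) (fun t ht => h1p t ⟨ht.1.le, ht.2⟩)
      obtain ⟨η₂, hη₂, h2p⟩ := posNbhd (h3 0).continuousAt hB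
      have hd2p : ∀ t ∈ Ioc (0:ℝ) η₂, 0 < d2 t :=
        posIoc h2 (by rw [← hA2]) (fun t ht => h2p t ⟨ht.1.le, ht.2⟩)
      have hd1p : ∀ t ∈ Ioc (0:ℝ) η₂, 0 < d1 t := posIoc h1 hd10 hd2p
      have hd0p : ∀ t ∈ Ioc (0:ℝ) η₂, 0 < d0 t := posIoc h0 hd00 hd1p
      refine ⟨min η₁ η₂, by positivity, fun t ht => ?_⟩
      have ht1 : t ≤ η₁ := ht.2.trans (min_le_left _ _)
      have ht2 : t ≤ η₂ := ht.2.trans (min_le_right _ _)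
      exact ⟨hd0p t ⟨ht.1, ht2⟩, hd1p t ⟨ht.1, ht2⟩, hyp t ⟨ht.1, ht1⟩,
        h1p t ⟨ht.1.le, ht1⟩⟩
  obtain ⟨η, hηpos, hstep1⟩ := step1
  have hd2y : ∀ s, d2 s = y s + μ₂ * d0 s := by intro s; simp [hy_def]
  have hd3y : ∀ s, d3 s = y1 s + μ₂ * d1 s := by intro s; simp [hy1_def]
  -- Step 2: global positivity on (0, ∞)
  have hd0cont : Continuous d0 := by
    have : Differentiable ℝ d0 := fun t => (h0 t).differentiableAt
    exact this.continuous
  have hd1cont : Continuous d1 := by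
    have : Differentiable ℝ d1 := fun t => (h1 t).differentiableAt
    exact this.continuous
  have hy1cont : Continuous y1 := by
    have : Differentiable ℝ y1 := fun t => (hy1 t).differentiableAt
    exact this.continuous
  have step2 : ∀ t, 0 < t → 0 < d0 t ∧ 0 < d1 t ∧ 0 < y t ∧ 0 < y1 t := by
    set Bad : Set ℝ := Ici η ∩ (d0 ⁻¹' Iic 0 ∪ d1 ⁻¹' Iic 0 ∪ y ⁻¹' Iic 0 ∪ y1 ⁻¹' Iic 0)
      with hBad_def
    have hnotbad : ∀ s, 0 < s → s ∉ Bad → η < s →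
        (0 < d0 s ∧ 0 < d1 s ∧ 0 < y s ∧ 0 < y1 s) := by
      intro s hs hsnb hsl
      simp only [hBad_def, mem_inter_iff, mem_Ici, mem_union, mem_preimage, mem_Iic,
        not_and_or, not_or, not_le] at hsnb
      rcases hsnb with h | h
      · exact absurd hsl (not_lt.2 h.le)
      · exact ⟨h.1.1.1, h.1.1.2, h.1.2, h.2⟩
    have hBadE : ∀ s, s ∉ Bad := by
      intro s₀ hs₀
      have hbdd : BddBelow Bad := ⟨η, fun x hx => hx.1⟩
      have hclosed : IsClosed Bad := by
        apply IsClosed.inter isClosed_Ici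
        exact (((isClosed_Iic.preimage hd0cont).union (isClosed_Iic.preimage hd1cont)).union
          (isClosed_Iic.preimage hycont)).union (isClosed_Iic.preimage hy1cont)
      set T := sInf Bad with hT_def
      have hTmem : T ∈ Bad := hclosed.csInf_mem ⟨s₀, hs₀⟩ hbdd
      have hηT : η ≤ T := le_csInf ⟨s₀, hs₀⟩ (fun b hb => hb.1)
      have hTpos : 0 < T := lt_of_lt_of_le hηpos hηT
      have hgood : ∀ s, 0 < s → s < T → 0 < d0 s ∧ 0 < d1 s ∧ 0 < y s ∧ 0 < y1 s := by
        intro s hs hsT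
        by_cases hsl : s ≤ η
        · exact hstep1 s ⟨hs, hsl⟩
        · have hnm : s ∉ Bad := fun hmem => absurd (csInf_le hbdd hmem) (not_le.2 hsT)
          exact hnotbad s hs hnm (not_le.1 hsl)
      have hbadT : d0 T ≤ 0 ∨ d1 T ≤ 0 ∨ y T ≤ 0 ∨ y1 T ≤ 0 := by
        have := hTmem.2
        simp only [mem_union, mem_preimage, mem_Iic] at this
        tauto
      have hconjη := hstep1 η ⟨hηpos, le_refl η⟩
      have hηltT : η < T := by
        rcases lt_or_eq_of_le hηT with h | h
        · exact h
        · exfalso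
          rw [← h] at hbadT
          rcases hbadT with hh | hh | hh | hh <;>
            linarith [hconjη.1, hconjη.2.1, hconjη.2.2.1, hconjη.2.2.2]
      have hy1T : 0 < y1 T := by
        have hm : MonotoneOn y1 (Icc η T) := by
          apply monoIcc_s10 hy1
          intro s hs
          have hg := hgood s (lt_trans hηpos hs.1) hs.2
          have hGs := hG0 s (lt_trans hηpos hs.1) hg.1
          simp only [hy2_def]
          nlinarith [hg.2.2.1]
        have hle := hm ⟨le_refl η, hηT⟩ ⟨hηT, le_refl T⟩ hηT
        linarith [hconjη.2.2.2]
      have hyT : 0 < y T := by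
        have hm : StrictMonoOn y (Icc η T) :=
          strictIcc hy (fun s hs => (hgood s (lt_trans hηpos hs.1) hs.2).2.2.2)
        have := hm ⟨le_refl η, hηT⟩ ⟨hηT, le_refl T⟩ hηltT
        linarith [hconjη.2.2.1]
      have hd1T : 0 < d1 T := by
        have hm : StrictMonoOn d1 (Icc η T) := by
          apply strictIcc h1
          intro s hs
          have hg := hgood s (lt_trans hηpos hs.1) hs.2
          rw [hd2y s]
          nlinarith [hg.1, hg.2.2.1]
        have := hm ⟨le_refl η, hηT⟩ ⟨hηT, le_refl T⟩ hηltT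
        linarith [hconjη.2.1]
      have hd0T : 0 < d0 T := by
        have hm : StrictMonoOn d0 (Icc η T) :=
          strictIcc h0 (fun s hs => (hgood s (lt_trans hηpos hs.1) hs.2).2.1)
        have := hm ⟨le_refl η, hηT⟩ ⟨hηT, le_refl T⟩ hηltT
        linarith [hconjη.1]
      rcases hbadT with hh | hh | hh | hh <;> linarith
    intro t ht
    by_cases htl : t ≤ η
    · exact hstep1 t ⟨ht, htl⟩
    · exact hnotbad t ht (hBadE t) (not_le.1 htl)
    -- Step 3: monotonicity and growth on [η, ∞)
  have hmono_d0 : MonotoneOn d0 (Ici η) :=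
    monoIci_s10 h0 (fun s hs => (step2 s (lt_trans hηpos hs)).2.1.le)
  have hmono_y : MonotoneOn y (Ici η) :=
    monoIci_s10 hy (fun s hs => (step2 s (lt_trans hηpos hs)).2.2.2.le)
  have hconjη := hstep1 η ⟨hηpos, le_refl η⟩
  set ε := y η with hε_def
  have hεpos : 0 < ε := hconjη.2.2.1
  have hyge : ∀ t, η ≤ t → ε ≤ y t := fun t ht => hmono_y (le_refl η) ht ht
  have hd2ge : ∀ t, η ≤ t → ε ≤ d2 t := by
    intro t ht
    have h01 : 0 < d0 t := (step2 t (lt_of_lt_of_le hηpos ht)).1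
    rw [hd2y t]
    nlinarith [hyge t ht]
  have hd1ge : ∀ t, η ≤ t → ε * (t - η) ≤ d1 t := by
    intro t ht
    have hu : MonotoneOn (fun s => d1 s - ε * (s - η)) (Ici η) := by
      apply monoIci_s10 (f' := fun s => d2 s - ε)
      · intro s
        have hc : HasDerivAt (fun s : ℝ => ε * (s - η)) (ε * 1) s :=
          ((hasDerivAt_id s).sub_const η).const_mul ε
        have := (h1 s).sub hc; rw [mul_one] at this; exact this
      · intro s hs
        have := hd2ge s hs.le
        linarith
    have h2' := hu (le_refl η) ht ht
    simp only [sub_self, mul_zero, sub_zero] at h2'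
    linarith [hconjη.2.1]
  have hd0ge : ∀ t, η ≤ t → ε * (t - η) ^ 2 / 2 ≤ d0 t := by
    intro t ht
    have hu : MonotoneOn (fun s => d0 s - ε * (s - η) ^ 2 / 2) (Ici η) := by
      apply monoIci_s10 (f' := fun s => d1 s - ε * (s - η))
      · intro s
        have hc : HasDerivAt (fun s : ℝ => ε * (s - η) ^ 2 / 2)
            (ε * (2 * (s - η) ^ 1 * 1) / 2) s :=
          ((((hasDerivAt_id s).sub_const η).pow 2).const_mul ε).div_const 2
        have he : ε * (2 * (s - η) ^ 1 * 1) / 2 = ε * (s - η) := by ring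
        rw [he] at hc
        exact (h0 s).sub hc
      · intro s hs
        have := hd1ge s hs.le
        linarith
    have h2' := hu (le_refl η) ht ht
    simp only [sub_self] at h2'
    norm_num at h2'
    linarith [hconjη.1]
  have htop : Tendsto d0 atTop atTop := by
    have h1' : Tendsto (fun t : ℝ => t - η) atTop atTop := by
      simpa [sub_eq_add_neg] using tendsto_atTop_add_const_right atTop (-η) tendsto_id
    have h2' : Tendsto (fun t : ℝ => (t - η) ^ 2) atTop atTop :=
      (tendsto_pow_atTop (by norm_num : (2:ℕ) ≠ 0)).comp h1'
    have h3' : Tendsto (fun t : ℝ => ε * (t - η) ^ 2 / 2) atTop atTop :=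
      (h2'.const_mul_atTop hεpos).atTop_div_const (by norm_num)
    exact tendsto_atTop_mono' atTop
      ((eventually_ge_atTop η).mono (fun t ht => hd0ge t ht)) h3'
  -- Step 4: blow-up in finite time, contradiction
  obtain ⟨t₁, hd0t₁, ht₁η⟩ : ∃ t₁, 1 ≤ d0 t₁ ∧ η + 1 ≤ t₁ :=
    ((htop.eventually_ge_atTop 1).and (eventually_ge_atTop (η + 1))).exists
  have ht₁pos : 0 < t₁ := by linarith
  have ht₁η' : η ≤ t₁ := by linarith
  have hd0_1 : ∀ t, t₁ ≤ t → 1 ≤ d0 t :=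
    fun t ht => le_trans hd0t₁ (hmono_d0 ht₁η' (ht₁η'.trans ht) ht)
  have hq0 : (0:ℝ) < q := by linarith
  set c₁ := c₀ / (q + 1) with hc₁_def
  set c₂ := c₁ / (q + 2) with hc₂_def
  set c₃ := c₂ / (q + 3) with hc₃_def
  have hc₁pos : 0 < c₁ := div_pos hc₀ (by linarith)
  have hc₂pos : 0 < c₂ := div_pos hc₁pos (by linarith)
  have hc₃pos : 0 < c₃ := div_pos hc₂pos (by linarith)
  have hc₁q : c₁ * (q + 1) = c₀ := div_mul_cancel₀ c₀ (by linarith)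
  have hc₂q : c₂ * (q + 2) = c₁ := div_mul_cancel₀ c₁ (by linarith)
  have hc₃q : c₃ * (q + 3) = c₂ := div_mul_cancel₀ c₂ (by linarith)
  have hy2ge : ∀ t, t₁ ≤ t → c₀ * d0 t ^ q ≤ y2 t := by
    intro t ht
    have htpos : 0 < t := lt_of_lt_of_le ht₁pos ht
    have hGge := hGg t htpos (hd0_1 t ht)
    have hypos : 0 < y t := (step2 t htpos).2.2.1
    simp only [hy2_def]
    nlinarith
  set Φ : ℝ → ℝ := fun t => y1 t * d1 t - c₁ * d0 t ^ (q + 1) with hΦ_def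
  have hΦD : ∀ t, HasDerivAt Φ
      (y2 t * d1 t + y1 t * d2 t - c₁ * (d1 t * (q + 1) * d0 t ^ q)) t := by
    intro t
    have hp := (h0 t).rpow_const (p := q + 1) (Or.inr (by linarith))
    have he : q + 1 - 1 = q := by ring
    rw [he] at hp
    exact ((hy1 t).mul (h1 t)).sub (hp.const_mul c₁)
  have hΦmono : MonotoneOn Φ (Ici t₁) := by
    apply monoIci_s10 hΦD
    intro s hs
    have htpos : 0 < s := lt_of_lt_of_le ht₁pos hs.le
    have hst := step2 s htpos
    have hy2s := hy2ge s hs.le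
    have hd2pos : 0 < d2 s := by rw [hd2y s]; nlinarith [hst.1, hst.2.2.1]
    have he : y2 s * d1 s + y1 s * d2 s - c₁ * (d1 s * (q + 1) * d0 s ^ q)
        = (y2 s - c₀ * d0 s ^ q) * d1 s + y1 s * d2 s := by rw [← hc₁q]; ring
    rw [he]
    have h1' : 0 ≤ (y2 s - c₀ * d0 s ^ q) * d1 s :=
      mul_nonneg (by linarith) hst.2.1.le
    nlinarith [mul_pos hst.2.2.2 hd2pos]
  set Φ₁ := Φ t₁ with hΦ₁_def
  have hΦge : ∀ t, t₁ ≤ t → Φ₁ ≤ Φ t := fun t ht => hΦmono (le_refl t₁) ht ht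
  set Ψ : ℝ → ℝ := fun t => d2 t * d1 t ^ (2:ℕ) - c₂ * d0 t ^ (q + 2) - Φ₁ * d0 t with hΨ_def
  have hΨD : ∀ t, HasDerivAt Ψ
      (d3 t * d1 t ^ (2:ℕ) + d2 t * ((2:ℕ) * d1 t ^ (1:ℕ) * d2 t)
        - c₂ * (d1 t * (q + 2) * d0 t ^ (q + 1)) - Φ₁ * d1 t) t := by
    intro t
    have hp := (h0 t).rpow_const (p := q + 2) (Or.inr (by linarith))
    have he : q + 2 - 1 = q + 1 := by ring
    rw [he] at hp
    exact (((h2 t).mul ((h1 t).pow 2)).sub (hp.const_mul c₂)).sub ((h0 t).const_mul Φ₁)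
  have hΨmono : MonotoneOn Ψ (Ici t₁) := by
    apply monoIci_s10 hΨD
    intro s hs
    have htpos : 0 < s := lt_of_lt_of_le ht₁pos hs.le
    have hst := step2 s htpos
    have hΦs := hΦge s hs.le
    have hd3ge : y1 s ≤ d3 s := by rw [hd3y s]; nlinarith [hst.2.1]
    have hbr : 0 ≤ d3 s * d1 s + 2 * d2 s ^ (2:ℕ) - c₁ * d0 s ^ (q + 1) - Φ₁ := by
      have h1' : y1 s * d1 s ≤ d3 s * d1 s :=
        mul_le_mul_of_nonneg_right hd3ge hst.2.1.le
      have h2' : Φ₁ + c₁ * d0 s ^ (q + 1) ≤ y1 s * d1 s := by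
        have := hΦs
        simp only [hΦ_def] at this
        linarith
      nlinarith [sq_nonneg (d2 s)]
    have he : d3 s * d1 s ^ (2:ℕ) + d2 s * ((2:ℕ) * d1 s ^ (1:ℕ) * d2 s)
        - c₂ * (d1 s * (q + 2) * d0 s ^ (q + 1)) - Φ₁ * d1 s
        = d1 s * (d3 s * d1 s + 2 * d2 s ^ (2:ℕ) - c₁ * d0 s ^ (q + 1) - Φ₁) := by
      rw [← hc₂q]; push_cast; ring
    rw [he]
    exact mul_nonneg hst.2.1.le hbr
  set Ψ₁ := Ψ t₁ with hΨ₁_def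
  have hΨge : ∀ t, t₁ ≤ t → Ψ₁ ≤ Ψ t := fun t ht => hΨmono (le_refl t₁) ht ht
  set Θ : ℝ → ℝ := fun t => d1 t ^ (4:ℕ) / 4
      - (c₃ * d0 t ^ (q + 3) + Φ₁ * d0 t ^ (2:ℕ) / 2 + Ψ₁ * d0 t) with hΘ_def
  have hΘD : ∀ t, HasDerivAt Θ
      (((4:ℕ) * d1 t ^ (3:ℕ) * d2 t) / 4
        - (c₃ * (d1 t * (q + 3) * d0 t ^ (q + 2))
          + Φ₁ * ((2:ℕ) * d0 t ^ (1:ℕ) * d1 t) / 2 + Ψ₁ * d1 t)) t := by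
    intro t
    have hp := (h0 t).rpow_const (p := q + 3) (Or.inr (by linarith))
    have he : q + 3 - 1 = q + 2 := by ring
    rw [he] at hp
    exact (((h1 t).pow 4).div_const 4).sub
      (((hp.const_mul c₃).add ((((h0 t).pow 2).const_mul Φ₁).div_const 2)).add
        ((h0 t).const_mul Ψ₁))
  have hΘmono : MonotoneOn Θ (Ici t₁) := by
    apply monoIci_s10 hΘD
    intro s hs
    have htpos : 0 < s := lt_of_lt_of_le ht₁pos hs.le
    have hst := step2 s htpos
    have hΨs := hΨge s hs.le
    have he : ((4:ℕ) * d1 s ^ (3:ℕ) * d2 s) / 4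
        - (c₃ * (d1 s * (q + 3) * d0 s ^ (q + 2))
          + Φ₁ * ((2:ℕ) * d0 s ^ (1:ℕ) * d1 s) / 2 + Ψ₁ * d1 s)
        = d1 s * (Ψ s - Ψ₁) := by
      simp only [hΨ_def]
      rw [← hc₃q]; push_cast; ring
    rw [he]
    exact mul_nonneg hst.2.1.le (by linarith)
  set Θ₁ := Θ t₁ with hΘ₁_def
  have hΘge : ∀ t, t₁ ≤ t → Θ₁ ≤ Θ t := fun t ht => hΘmono (le_refl t₁) ht ht
  set K := (2 / c₃) * (|Φ₁| / 2 + |Ψ₁| + |Θ₁|) + 1 with hK_def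
  set C := max 1 K with hC_def
  have hdom : ∀ x : ℝ, C ≤ x →
      2 * c₃ * x ^ (q + 3) ≤ 4 * (c₃ * x ^ (q + 3) + Φ₁ * x ^ (2:ℕ) / 2 + Ψ₁ * x + Θ₁) := by
    intro x hx
    have hx1 : (1:ℝ) ≤ x := le_trans (le_max_left _ _) hx
    have hxK : K ≤ x := le_trans (le_max_right _ _) hx
    have hx0 : (0:ℝ) < x := by linarith
    have hx2 : x ≤ x ^ (2:ℕ) := by nlinarith
    have hx21 : (1:ℝ) ≤ x ^ (2:ℕ) := by nlinarith
    have hrpow2 : x ^ ((2:ℕ) : ℝ) = x ^ (2:ℕ) := Real.rpow_natCast x 2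
    have he1 : x ^ (q + 3) = x ^ (q + 1) * x ^ (2:ℕ) := by
      have h' : q + 3 = (q + 1) + ((2:ℕ) : ℝ) := by push_cast; ring
      rw [h', Real.rpow_add hx0, hrpow2]
    have h1x : x ≤ x ^ (q + 1) := by
      calc x = x ^ (1:ℝ) := (Real.rpow_one x).symm
        _ ≤ x ^ (q + 1) := Real.rpow_le_rpow_of_exponent_le hx1 (by linarith)
    have hKx : K * x ^ (2:ℕ) ≤ x ^ (q + 3) := by
      rw [he1]
      have : K ≤ x ^ (q + 1) := le_trans hxK h1x
      exact mul_le_mul_of_nonneg_right this (by positivity)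
    have hcK : 2 * c₃ * K = 2 * |Φ₁| + 4 * |Ψ₁| + 4 * |Θ₁| + 2 * c₃ := by
      rw [hK_def]; field_simp
      ring
    have hmain : 2 * c₃ * (K * x ^ (2:ℕ)) ≤ 2 * c₃ * x ^ (q + 3) :=
      mul_le_mul_of_nonneg_left hKx (by positivity)
    have ha1 : -|Φ₁| ≤ Φ₁ := neg_abs_le Φ₁
    have ha2 : -|Ψ₁| ≤ Ψ₁ := neg_abs_le Ψ₁
    have ha3 : -|Θ₁| ≤ Θ₁ := neg_abs_le Θ₁
    have hb1 : 0 ≤ |Ψ₁| * (x ^ (2:ℕ) - x) := mul_nonneg (abs_nonneg _) (by linarith)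
    have hb2 : 0 ≤ |Θ₁| * (x ^ (2:ℕ) - 1) := mul_nonneg (abs_nonneg _) (by linarith)
    have hb3 : 0 ≤ |Φ₁| * (x ^ (2:ℕ) - 1) := mul_nonneg (abs_nonneg _) (by linarith)
    have hA : 2 * |Φ₁| * x ^ (2:ℕ) + 4 * |Ψ₁| * x ^ (2:ℕ) + 4 * |Θ₁| * x ^ (2:ℕ)
        + 2 * c₃ * x ^ (2:ℕ) ≤ 2 * c₃ * x ^ (q + 3) := by
      have e : 2 * |Φ₁| * x ^ (2:ℕ) + 4 * |Ψ₁| * x ^ (2:ℕ) + 4 * |Θ₁| * x ^ (2:ℕ)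
          + 2 * c₃ * x ^ (2:ℕ) = 2 * c₃ * (K * x ^ (2:ℕ)) := by
        rw [hK_def]
        field_simp
        ring
      rw [e]
      exact hmain
    have hP1 : -(|Φ₁| * x ^ (2:ℕ)) ≤ Φ₁ * x ^ (2:ℕ) := by
      have h' := mul_le_mul_of_nonneg_right ha1 (by positivity : (0:ℝ) ≤ x ^ (2:ℕ))
      rw [neg_mul] at h'
      exact h'
    have hP2 : -(|Ψ₁| * x) ≤ Ψ₁ * x := by
      have h' := mul_le_mul_of_nonneg_right ha2 hx0.le
      rw [neg_mul] at h'
      exact h'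
    have hc3Y : 0 ≤ c₃ * x ^ (2:ℕ) := mul_nonneg hc₃pos.le (by positivity)
    exact domAux c₃ |Φ₁| |Ψ₁| |Θ₁| Φ₁ Ψ₁ Θ₁ (x ^ (q+3)) (x ^ (2:ℕ)) x
      hA hP1 hP2 ha3 hb1 hb2 hc3Y
  obtain ⟨t₂, hd0C, ht₁t₂⟩ : ∃ t₂, C ≤ d0 t₂ ∧ t₁ ≤ t₂ :=
    ((htop.eventually_ge_atTop C).and (eventually_ge_atTop t₁)).exists
  have ht₂pos : 0 < t₂ := lt_of_lt_of_le ht₁pos ht₁t₂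
  have hd0Cge : ∀ t, t₂ ≤ t → C ≤ d0 t := by
    intro t ht
    exact le_trans hd0C (hmono_d0 (le_trans ht₁η' ht₁t₂) (le_trans (le_trans ht₁η' ht₁t₂) ht) ht)
  have hquart : ∀ t, t₂ ≤ t → 2 * c₃ * d0 t ^ (q + 3) ≤ d1 t ^ (4:ℕ) := by
    intro t ht
    have hΘt := hΘge t (le_trans ht₁t₂ ht)
    have eΘ : Θ t = d1 t ^ (4:ℕ) / 4
        - (c₃ * d0 t ^ (q + 3) + Φ₁ * d0 t ^ (2:ℕ) / 2 + Ψ₁ * d0 t) := by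
      simp only [hΘ_def]
    rw [eΘ] at hΘt
    have hd := hdom (d0 t) (hd0Cge t ht)
    exact quartAux c₃ Φ₁ Ψ₁ (d0 t ^ (q+3)) (d0 t ^ (2:ℕ)) (d0 t) 0 0 0 Θ₁
      (d1 t ^ (4:ℕ)) hΘt hd
  set p := (q + 3) / 4 with hp_def
  have hp1 : 1 < p := by rw [hp_def]; linarith
  set κ := (2 * c₃) ^ ((1:ℝ) / 4) with hκ_def
  have h2c₃ : (0:ℝ) < 2 * c₃ := by linarith
  have hκpos : 0 < κ := Real.rpow_pos_of_pos h2c₃ _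
  have hκ4 : κ ^ (4:ℕ) = 2 * c₃ := by
    rw [hκ_def, ← Real.rpow_natCast ((2 * c₃) ^ ((1:ℝ)/4)) 4, ← Real.rpow_mul h2c₃.le]
    norm_num
  have hd1low : ∀ t, t₂ ≤ t → κ * d0 t ^ p ≤ d1 t := by
    intro t ht
    have htpos : 0 < t := lt_of_lt_of_le ht₂pos ht
    have hst := step2 t htpos
    have hd0pos : 0 < d0 t := hst.1
    have hpow : (κ * d0 t ^ p) ^ (4:ℕ) = 2 * c₃ * d0 t ^ (q + 3) := by
      rw [mul_pow, hκ4]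
      congr 1
      rw [← Real.rpow_natCast (d0 t ^ p) 4, ← Real.rpow_mul hd0pos.le]
      congr 1
      rw [hp_def]; push_cast; ring
    apply le_of_pow_le_pow_left₀ (by norm_num : (4:ℕ) ≠ 0) hst.2.1.le
    rw [hpow]
    exact hquart t ht
  set ρ := (p - 1) * κ with hρ_def
  have hρpos : 0 < ρ := mul_pos (by linarith) hκpos
  set F : ℝ → ℝ := fun t => d0 t ^ (1 - p) with hF_def
  set Gf : ℝ → ℝ := fun t => F t + ρ * t with hGf_def
  have hd0pos' : ∀ t, t₂ ≤ t → 0 < d0 t := fun t ht => (step2 t (lt_of_lt_of_le ht₂pos ht)).1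
  have hGfD : ∀ t ∈ Ici t₂, HasDerivAt Gf (d1 t * (1 - p) * d0 t ^ (1 - p - 1) + ρ) t := by
    intro t ht
    have h1' : HasDerivAt F (d1 t * (1 - p) * d0 t ^ (1 - p - 1)) t :=
      (h0 t).rpow_const (Or.inl (ne_of_gt (hd0pos' t ht)))
    have h2' : HasDerivAt (fun s : ℝ => ρ * s) (ρ * 1) t := (hasDerivAt_id t).const_mul ρ
    have := h1'.add h2'; rw [mul_one] at this; exact this
  have hGf_anti : AntitoneOn Gf (Ici t₂) := by
    apply antiIci' hGfD
    intro t ht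
    have ht' : t₂ ≤ t := ht.le
    have hd0p := hd0pos' t ht'
    have hmp : 1 - p - 1 = -p := by ring
    rw [hmp]
    have hmul : κ ≤ d1 t * d0 t ^ (-p) := by
      have h1' := mul_le_mul_of_nonneg_right (hd1low t ht')
        (le_of_lt (Real.rpow_pos_of_pos hd0p (-p)))
      have h2' : κ * d0 t ^ p * d0 t ^ (-p) = κ := by
        rw [mul_assoc, ← Real.rpow_add hd0p]
        simp
      rw [h2'] at h1'
      exact h1'
    have hrp : 0 < d0 t ^ (-p) := Real.rpow_pos_of_pos hd0p _
    have he : d1 t * (1 - p) * d0 t ^ (-p) + ρ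
        = -((p - 1) * (d1 t * d0 t ^ (-p)) - ρ) := by ring
    rw [he]
    have hmm : (p - 1) * κ ≤ (p - 1) * (d1 t * d0 t ^ (-p)) :=
      mul_le_mul_of_nonneg_left hmul (by linarith)
    simp only [hρ_def] at *
    linarith
  have hFt₂pos : 0 < F t₂ := Real.rpow_pos_of_pos (hd0pos' t₂ (le_refl t₂)) _
  set tf := t₂ + (F t₂ + 1) / ρ with htf_def
  have htf_ge : t₂ ≤ tf := by
    rw [htf_def]
    have : 0 ≤ (F t₂ + 1) / ρ := div_nonneg (by linarith) hρpos.le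
    linarith
  have hGle := hGf_anti (le_refl t₂) htf_ge htf_ge
  have hFf : F tf ≤ -1 := by
    simp only [hGf_def] at hGle
    have : ρ * tf = ρ * t₂ + (F t₂ + 1) := by
      rw [htf_def, mul_add, mul_div_cancel₀ _ (ne_of_gt hρpos)]
    linarith
  have hFpos : 0 < F tf := Real.rpow_pos_of_pos (hd0pos' tf htf_ge) _
  linarith



lemma antiIcc {f f' : ℝ → ℝ} {a b : ℝ} (hf : ∀ t, HasDerivAt f (f' t) t)
    (h : ∀ t ∈ Ioo a b, f' t ≤ 0) : AntitoneOn f (Icc a b) := by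
  apply antitoneOn_of_deriv_nonpos (convex_Icc a b)
    (fun t _ => (hf t).continuousAt.continuousWithinAt)
    (fun t ht => by
      rw [interior_Icc] at ht
      exact ((hf t).differentiableAt).differentiableWithinAt)
  intro t ht; rw [interior_Icc] at ht; rw [(hf t).deriv]; exact h t ht

lemma energyZero {A B L T : ℝ} {d0 d1 d2 d3 G : ℝ → ℝ}
    (h0 : ∀ t, HasDerivAt d0 (d1 t) t)
    (h1 : ∀ t, HasDerivAt d1 (d2 t) t)
    (h2 : ∀ t, HasDerivAt d2 (d3 t) t)
    (h3 : ∀ t, HasDerivAt d3 (A * d2 t - B * d0 t + G t) t)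
    (hL : 0 ≤ L)
    (hG : ∀ t ∈ Icc 0 T, |G t| ≤ L * |d0 t|)
    (i0 : d0 0 = 0) (i1 : d1 0 = 0) (i2 : d2 0 = 0) (i3 : d3 0 = 0) :
    ∀ t ∈ Icc (0:ℝ) T, d0 t = 0 := by
  set K := 2 + |A| + |B| + L with hK_def
  have hKpos : 0 < K := by
    have := abs_nonneg A
    have := abs_nonneg B
    rw [hK_def]; linarith
  set E : ℝ → ℝ := fun t => d0 t ^ 2 + d1 t ^ 2 + d2 t ^ 2 + d3 t ^ 2 with hE_def
  have hE : ∀ t, HasDerivAt E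
      ((2:ℕ) * d0 t ^ 1 * d1 t + (2:ℕ) * d1 t ^ 1 * d2 t + (2:ℕ) * d2 t ^ 1 * d3 t
        + (2:ℕ) * d3 t ^ 1 * (A * d2 t - B * d0 t + G t)) t := by
    intro t
    exact ((((h0 t).pow 2).add ((h1 t).pow 2)).add ((h2 t).pow 2)).add ((h3 t).pow 2)
  have hEbound : ∀ t ∈ Icc (0:ℝ) T,
      (2:ℕ) * d0 t ^ 1 * d1 t + (2:ℕ) * d1 t ^ 1 * d2 t + (2:ℕ) * d2 t ^ 1 * d3 t
        + (2:ℕ) * d3 t ^ 1 * (A * d2 t - B * d0 t + G t) ≤ K * E t := by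
    intro t ht
    have hGt := hG t ht
    have habs : 2 * (|d3 t| * |d0 t|) ≤ d0 t ^ 2 + d3 t ^ 2 := by
      nlinarith [sq_nonneg (|d0 t| - |d3 t|), sq_abs (d0 t), sq_abs (d3 t)]
    have h2dg : 2 * (d3 t * G t) ≤ L * (d0 t ^ 2 + d3 t ^ 2) := by
      have ha : d3 t * G t ≤ |d3 t| * |G t| := by
        have := le_abs_self (d3 t * G t)
        rw [abs_mul] at this
        exact this
      have hb : |d3 t| * |G t| ≤ |d3 t| * (L * |d0 t|) :=
        mul_le_mul_of_nonneg_left hGt (abs_nonneg (d3 t))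
      have hc : L * (2 * (|d3 t| * |d0 t|)) ≤ L * (d0 t ^ 2 + d3 t ^ 2) :=
        mul_le_mul_of_nonneg_left habs hL
      nlinarith
    have hA2 : 2 * A * (d2 t * d3 t) ≤ |A| * (d2 t ^ 2 + d3 t ^ 2) := by
      have h1' : A * (d2 t * d3 t) ≤ |A| * |d2 t * d3 t| := by
        calc A * (d2 t * d3 t) ≤ |A * (d2 t * d3 t)| := le_abs_self _
          _ = |A| * |d2 t * d3 t| := abs_mul _ _
      have h2' : 2 * |d2 t * d3 t| ≤ d2 t ^ 2 + d3 t ^ 2 := by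
        rw [abs_mul]
        nlinarith [sq_nonneg (|d2 t| - |d3 t|), sq_abs (d2 t), sq_abs (d3 t)]
      nlinarith [abs_nonneg A]
    have hB2 : -(2 * B * (d0 t * d3 t)) ≤ |B| * (d0 t ^ 2 + d3 t ^ 2) := by
      have h1' : -(B * (d0 t * d3 t)) ≤ |B| * |d0 t * d3 t| := by
        calc -(B * (d0 t * d3 t)) ≤ |B * (d0 t * d3 t)| := neg_le_abs _
          _ = |B| * |d0 t * d3 t| := abs_mul _ _
      have h2' : 2 * |d0 t * d3 t| ≤ d0 t ^ 2 + d3 t ^ 2 := by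
        rw [abs_mul]
        nlinarith [sq_nonneg (|d0 t| - |d3 t|), sq_abs (d0 t), sq_abs (d3 t)]
      nlinarith [abs_nonneg B]
    simp only [hE_def, hK_def]
    push_cast
    nlinarith [sq_nonneg (d0 t - d1 t), sq_nonneg (d1 t - d2 t), sq_nonneg (d2 t - d3 t),
      sq_nonneg (d0 t), sq_nonneg (d1 t), sq_nonneg (d2 t), sq_nonneg (d3 t),
      mul_nonneg (abs_nonneg A) (sq_nonneg (d0 t)), mul_nonneg (abs_nonneg A) (sq_nonneg (d1 t)),
      mul_nonneg (abs_nonneg B) (sq_nonneg (d1 t)), mul_nonneg (abs_nonneg B) (sq_nonneg (d2 t)),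
      mul_nonneg hL (sq_nonneg (d1 t)), mul_nonneg hL (sq_nonneg (d2 t))]
  set W : ℝ → ℝ := fun t => E t * Real.exp (-K * t) with hW_def
  have hW : ∀ t, HasDerivAt W
      (((2:ℕ) * d0 t ^ 1 * d1 t + (2:ℕ) * d1 t ^ 1 * d2 t + (2:ℕ) * d2 t ^ 1 * d3 t
        + (2:ℕ) * d3 t ^ 1 * (A * d2 t - B * d0 t + G t)) * Real.exp (-K * t)
        + E t * (Real.exp (-K * t) * (-K))) t := by
    intro t
    have hexp : HasDerivAt (fun s : ℝ => Real.exp (-K * s)) (Real.exp (-K * t) * (-K)) t := by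
      have h' : HasDerivAt (fun s : ℝ => -K * s) (-K) t := by
        simpa using (hasDerivAt_id t).const_mul (-K)
      exact h'.exp
    exact (hE t).mul hexp
  have hWanti : AntitoneOn W (Icc 0 T) := by
    apply antiIcc hW
    intro t ht
    have hb := hEbound t ⟨ht.1.le, ht.2.le⟩
    have hexp_pos : 0 < Real.exp (-K * t) := Real.exp_pos _
    have hEnn : 0 ≤ E t := by simp only [hE_def]; positivity
    have : ((2:ℕ) * d0 t ^ 1 * d1 t + (2:ℕ) * d1 t ^ 1 * d2 t + (2:ℕ) * d2 t ^ 1 * d3 t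
        + (2:ℕ) * d3 t ^ 1 * (A * d2 t - B * d0 t + G t)) * Real.exp (-K * t)
        ≤ (K * E t) * Real.exp (-K * t) := mul_le_mul_of_nonneg_right hb hexp_pos.le
    nlinarith
  intro t ht
  have hW0 : W 0 = 0 := by
    simp only [hW_def, hE_def, i0, i1, i2, i3]
    norm_num
  have hle := hWanti (left_mem_Icc.2 (ht.1.trans ht.2)) ht ht.1
  rw [hW0] at hle
  simp only [hW_def] at hle
  have hexp_pos : 0 < Real.exp (-K * t) := Real.exp_pos _
  have hEnn : 0 ≤ E t := by simp only [hE_def]; positivity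
  have hE0 : E t = 0 := by
    by_contra hne
    have hEpos : 0 < E t := lt_of_le_of_ne hEnn (Ne.symm hne)
    nlinarith [mul_pos hEpos hexp_pos]
  have : d0 t ^ 2 = 0 := by
    simp only [hE_def] at hE0
    nlinarith [sq_nonneg (d0 t), sq_nonneg (d1 t), sq_nonneg (d2 t), sq_nonneg (d3 t)]
  exact pow_eq_zero_iff (by norm_num : (2:ℕ) ≠ 0) |>.1 this



lemma gHasDeriv {g : ℝ → ℝ} (hg1 : ContDiffOn ℝ 1 g (Ioi 0)) :
    ∀ t > (0:ℝ), HasDerivAt g (deriv g t) t := by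
  intro t ht
  have hd : DifferentiableOn ℝ g (Ioi 0) := hg1.differentiableOn one_ne_zero
  exact (hd.differentiableAt (Ioi_mem_nhds ht)).hasDerivAt

lemma gContIci {g : ℝ → ℝ} (hg1 : ContDiffOn ℝ 1 g (Ioi 0))
    (hg0lim : Tendsto g (nhdsWithin 0 (Ioi 0)) (nhds 0)) (hg00 : g 0 = 0) :
    ContinuousOn g (Ici 0) := by
  intro x hx
  rcases eq_or_lt_of_le (mem_Ici.1 hx) with h | h
  · rw [← h]
    unfold ContinuousWithinAt
    rw [← Ioi_insert, nhdsWithin_insert, hg00]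
    apply tendsto_sup.2
    constructor
    · have := tendsto_pure_nhds g 0
      rwa [hg00] at this
    · exact hg0lim
  · exact ((hg1.continuousOn.continuousAt (Ioi_mem_nhds h)).continuousWithinAt)

lemma gMono {g : ℝ → ℝ} (hg1 : ContDiffOn ℝ 1 g (Ioi 0))
    (hgpos : ∀ t > (0:ℝ), 0 < g t)
    (hgd : ∀ t > (0:ℝ), g t / t < deriv g t) (hg00 : g 0 = 0) :
    ∀ x y, 0 ≤ x → x ≤ y → g x ≤ g y := by
  intro x y hx hxy
  rcases eq_or_lt_of_le hx with h0x | h0x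
  · rw [← h0x, hg00]
    rcases eq_or_lt_of_le (h0x.symm ▸ hxy : (0:ℝ) ≤ y) with h0y | h0y
    · rw [← h0y, hg00]
    · exact (hgpos y h0y).le
  · rcases eq_or_lt_of_le hxy with rfl | hlt
    · exact le_refl _
    have hsm : StrictMonoOn g (Icc x y) := by
      apply strictMonoOn_of_deriv_pos (convex_Icc x y)
      · intro s hs
        exact (gHasDeriv hg1 s (lt_of_lt_of_le h0x hs.1)).continuousAt.continuousWithinAt
      · intro s hs
        rw [interior_Icc] at hs
        have hspos : 0 < s := lt_trans h0x hs.1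
        exact lt_trans (div_pos (hgpos s hspos) hspos) (hgd s hspos)
    exact (hsm ⟨le_refl x, hxy⟩ ⟨hxy, le_refl y⟩ hlt).le

lemma gSlope {g : ℝ → ℝ} (hg1 : ContDiffOn ℝ 1 g (Ioi 0))
    (hgd : ∀ t > (0:ℝ), g t / t < deriv g t) :
    ∀ x y, 0 < x → x < y → g x * y ≤ g y * x := by
  intro x y hx hxy
  set h : ℝ → ℝ := fun t => g t / t with hh_def
  have hmono : StrictMonoOn h (Icc x y) := by
    apply strictMonoOn_of_deriv_pos (convex_Icc x y)
    · intro s hs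
      have hspos : 0 < s := lt_of_lt_of_le hx hs.1
      exact (((gHasDeriv hg1 s hspos).div (hasDerivAt_id s) (ne_of_gt hspos))).continuousAt.continuousWithinAt
    · intro s hs
      rw [interior_Icc] at hs
      have hspos : 0 < s := lt_trans hx hs.1
      have hD : HasDerivAt h ((deriv g s * s - g s * 1) / s ^ 2) s :=
        (gHasDeriv hg1 s hspos).div (hasDerivAt_id s) (ne_of_gt hspos)
      rw [hD.deriv]
      apply div_pos _ (by positivity)
      have := hgd s hspos
      rw [div_lt_iff₀ hspos] at this
      linarith
  have hlt : h x < h y := hmono ⟨le_refl x, hxy.le⟩ ⟨hxy.le, le_refl y⟩ hxy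
  simp only [hh_def] at hlt
  rw [div_lt_div_iff₀ hx (lt_trans hx hxy)] at hlt
  linarith

lemma gSuper {g : ℝ → ℝ} (hg1 : ContDiffOn ℝ 1 g (Ioi 0))
    (hgd : ∀ t > (0:ℝ), g t / t < deriv g t) (hg00 : g 0 = 0) :
    ∀ d w, 0 < d → 0 ≤ w → g w + g d ≤ g (w + d) := by
  intro d w hd hw
  rcases eq_or_lt_of_le hw with h0w | h0w
  · rw [← h0w, hg00, zero_add, zero_add]
  · have h1 := gSlope hg1 hgd w (w + d) h0w (by linarith)
    have h2 := gSlope hg1 hgd d (w + d) hd (by linarith)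
    have hwd : 0 < w + d := by linarith
    have hsum : (g w + g d) * (w + d) ≤ g (w + d) * (w + d) := by nlinarith
    exact le_of_mul_le_mul_right hsum hwd

lemma gLip {g : ℝ → ℝ} {β : ℝ} (hg1 : ContDiffOn ℝ 1 g (Ioi 0))
    (hg0lim : Tendsto g (nhdsWithin 0 (Ioi 0)) (nhds 0)) (hg00 : g 0 = 0)
    (hβlim : Tendsto (deriv g) (nhdsWithin 0 (Ioi 0)) (nhds β)) (M : ℝ) :
    ∃ L, 0 ≤ L ∧ ∀ x y, 0 ≤ x → x ≤ y → y ≤ M → g y - g x ≤ L * (y - x) := by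
  obtain ⟨u, hu, huB⟩ : ∃ u, 0 < u ∧ ∀ s ∈ Ioc (0:ℝ) u, deriv g s ≤ β + 1 := by
    have hev : ∀ᶠ s in nhdsWithin 0 (Ioi (0:ℝ)), deriv g s ≤ β + 1 :=
      hβlim.eventually (eventually_le_nhds (lt_add_one β))
    rcases mem_nhdsGT_iff_exists_Ioc_subset.1 hev with ⟨u, hu', hsub⟩
    exact ⟨u, hu', fun s hs => hsub hs⟩
  have hdc : ContinuousOn (deriv g) (Ioi 0) := by
    have h1 := hg1.continuousOn_derivWithin (uniqueDiffOn_Ioi 0) le_rfl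
    exact h1.congr (fun x hx => (derivWithin_of_isOpen isOpen_Ioi hx).symm)
  obtain ⟨Cb, hCb⟩ : ∃ C, ∀ s ∈ Icc u M, ‖deriv g s‖ ≤ C :=
    isCompact_Icc.exists_bound_of_continuousOn
      (hdc.mono (fun s hs => lt_of_lt_of_le hu hs.1))
  set L := max (max (β + 1) Cb) 0 with hL_def
  have hL0 : 0 ≤ L := le_max_right _ _
  have hbound : ∀ s, 0 < s → s ≤ M → deriv g s ≤ L := by
    intro s hs hsM
    by_cases hsu : s ≤ u
    · exact le_trans (huB s ⟨hs, hsu⟩) (le_trans (le_max_left _ _) (le_max_left _ _))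
    · have h' := hCb s ⟨(not_le.1 hsu).le, hsM⟩
      rw [Real.norm_eq_abs] at h'
      exact le_trans (le_trans (le_abs_self _) h')
        (le_trans (le_max_right (β+1) Cb) (le_max_left _ _))
  refine ⟨L, hL0, ?_⟩
  intro x y hx hxy hyM
  rcases eq_or_lt_of_le hxy with rfl | hlt
  · simp
  have hcont : ∀ a, 0 < a → ContinuousOn g (Icc a y) :=
    fun a ha => fun s hs => (gHasDeriv hg1 s (lt_of_lt_of_le ha hs.1)).continuousAt.continuousWithinAt
  have hmvt : ∀ x', 0 < x' → x' < y → g y - g x' ≤ L * (y - x') := by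
    intro x' hx' hx'y
    obtain ⟨cm, hcm, hcs⟩ := exists_hasDerivAt_eq_slope g (deriv g) hx'y (hcont x' hx')
      (fun s hs => gHasDeriv hg1 s (lt_trans hx' hs.1))
    have hb := hbound cm (lt_trans hx' hcm.1) (le_of_lt (lt_of_lt_of_le hcm.2 (le_trans (le_refl y) hyM)))
    rw [hcs] at hb
    rw [div_le_iff₀ (by linarith)] at hb
    linarith
  rcases eq_or_lt_of_le hx with h0 | h0
  · have hy : 0 < y := by linarith [h0.symm ▸ hlt]
    have h1 : Tendsto (fun x' : ℝ => L * (y - x') + g x') (nhdsWithin 0 (Ioi 0))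
        (nhds (L * (y - 0) + 0)) := by
      have hc1 : Tendsto (fun x' : ℝ => L * (y - x')) (nhdsWithin 0 (Ioi 0)) (nhds (L * (y - 0))) :=
        ((continuous_const.mul (continuous_const.sub continuous_id)).tendsto 0).mono_left
          nhdsWithin_le_nhds
      exact hc1.add hg0lim
    have h2 : ∀ᶠ x' in nhdsWithin 0 (Ioi (0:ℝ)), g y ≤ L * (y - x') + g x' := by
      filter_upwards [Ioo_mem_nhdsGT_of_mem (⟨le_refl (0:ℝ), hy⟩ : (0:ℝ) ∈ Ico (0:ℝ) y)] with x' hx'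
      linarith [hmvt x' hx'.1 hx'.2]
    have h3 := ge_of_tendsto h1 h2
    rw [← h0, hg00]
    linarith
  · exact hmvt x h0 hlt




lemma solChain {v : ℝ → ℝ} (h : ContDiff ℝ 4 v) (k : ℕ) (hk : k < 4) :
    ∀ t, HasDerivAt (iteratedDeriv k v) (iteratedDeriv (k + 1) v t) t := by
  intro t
  have hd : Differentiable ℝ (iteratedDeriv k v) :=
    h.differentiable_iteratedDeriv k (by exact_mod_cast hk)
  have h2 := (hd t).hasDerivAt
  rw [iteratedDeriv_succ]
  exact h2

lemma reflSol {A B : ℝ} {g v : ℝ → ℝ} (h : IsSol A B g v) :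
    IsSol A B g (fun t => v (-t)) := by
  intro t
  have e4 : iteratedDeriv 4 (fun t => v (-t)) t = iteratedDeriv 4 v (-t) := by
    rw [iteratedDeriv_comp_neg]; norm_num
  have e2 : iteratedDeriv 2 (fun t => v (-t)) t = iteratedDeriv 2 v (-t) := by
    rw [iteratedDeriv_comp_neg]; norm_num
  rw [e4, e2]
  exact h (-t)

lemma reflDeriv1 (v : ℝ → ℝ) : deriv (fun t => v (-t)) 0 = -deriv v 0 := by
  have h := iteratedDeriv_comp_neg 1 v 0
  simp only [iteratedDeriv_one, pow_one, neg_zero, smul_eq_mul, neg_one_mul] at h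
  exact h

lemma reflDeriv2 (v : ℝ → ℝ) : iteratedDeriv 2 (fun t => v (-t)) 0 = iteratedDeriv 2 v 0 := by
  have h := iteratedDeriv_comp_neg 2 v 0
  simp only [neg_zero, smul_eq_mul] at h
  norm_num at h
  exact h

lemma reflDeriv3 (v : ℝ → ℝ) : iteratedDeriv 3 (fun t => v (-t)) 0 = -iteratedDeriv 3 v 0 := by
  have h := iteratedDeriv_comp_neg 3 v 0
  simp only [neg_zero, smul_eq_mul] at h
  norm_num at h
  exact h

lemma reflContDiff {v : ℝ → ℝ} (h : ContDiff ℝ 4 v) : ContDiff ℝ 4 (fun t => v (-t)) :=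
  h.comp (contDiff_id.neg)

lemma pairNoPos (n : ℕ) (hn : 5 ≤ n) (g : ℝ → ℝ)
    (hg1 : ContDiffOn ℝ 1 g (Ioi 0)) (hgpos : ∀ t > (0:ℝ), 0 < g t)
    (hg0lim : Tendsto g (nhdsWithin 0 (Ioi 0)) (nhds 0))
    (hgd : ∀ t > (0:ℝ), g t / t < deriv g t)
    {q c : ℝ} (hq : 1 < q) (hc : 0 < c) (hgrow : ∀ t ≥ (1:ℝ), c * t ^ q ≤ g t)
    (hg00 : g 0 = 0)
    (A B : ℝ) (hA : A = ((n : ℝ) * ((n : ℝ) - 4) + 8) / 2)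
    (hB : B = (n : ℝ) ^ 2 * ((n : ℝ) - 4) ^ 2 / 16)
    (v w : ℝ → ℝ) (hv4 : ContDiff ℝ 4 v) (hw4 : ContDiff ℝ 4 w)
    (hvnn : ∀ t, 0 ≤ v t) (hwnn : ∀ t, 0 ≤ w t)
    (hvsol : IsSol A B g v) (hwsol : IsSol A B g w)
    (h0 : v 0 = w 0) (h1 : deriv v 0 = deriv w 0)
    (ha : iteratedDeriv 2 w 0 ≤ iteratedDeriv 2 v 0)
    (hb : iteratedDeriv 3 w 0 ≤ iteratedDeriv 3 v 0)
    (hab : iteratedDeriv 2 w 0 < iteratedDeriv 2 v 0 ∨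
      iteratedDeriv 3 w 0 < iteratedDeriv 3 v 0) :
    False := by
  have hn5 : (5:ℝ) ≤ (n:ℝ) := by exact_mod_cast hn
  set μ₁ : ℝ := (n:ℝ) ^ 2 / 4 with hμ₁_def
  set μ₂ : ℝ := ((n:ℝ) - 4) ^ 2 / 4 with hμ₂_def
  have hμ₁pos : 0 < μ₁ := by rw [hμ₁_def]; positivity
  have hμ₂nn : 0 ≤ μ₂ := by rw [hμ₂_def]; positivity
  have hAμ : A = μ₁ + μ₂ := by rw [hA, hμ₁_def, hμ₂_def]; ring
  have hBμ : B = μ₁ * μ₂ := by rw [hB, hμ₁_def, hμ₂_def]; ring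
  set d0 : ℝ → ℝ := fun t => v t - w t with hd0_def
  set d1 : ℝ → ℝ := fun t => iteratedDeriv 1 v t - iteratedDeriv 1 w t with hd1_def
  set d2 : ℝ → ℝ := fun t => iteratedDeriv 2 v t - iteratedDeriv 2 w t with hd2_def
  set d3 : ℝ → ℝ := fun t => iteratedDeriv 3 v t - iteratedDeriv 3 w t with hd3_def
  set G : ℝ → ℝ := fun t => g (v t) - g (w t) with hG_def
  have h0' : ∀ t, HasDerivAt d0 (d1 t) t := by
    intro t
    have h' := (solChain hv4 0 (by norm_num) t).sub (solChain hw4 0 (by norm_num) t)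
    simp only [iteratedDeriv_zero] at h'
    exact h'
  have h1' : ∀ t, HasDerivAt d1 (d2 t) t := by
    intro t
    exact (solChain hv4 1 (by norm_num) t).sub (solChain hw4 1 (by norm_num) t)
  have h2' : ∀ t, HasDerivAt d2 (d3 t) t := by
    intro t
    exact (solChain hv4 2 (by norm_num) t).sub (solChain hw4 2 (by norm_num) t)
  have h3' : ∀ t, HasDerivAt d3 ((μ₁ + μ₂) * d2 t - μ₁ * μ₂ * d0 t + G t) t := by
    intro t
    have h' := (solChain hv4 3 (by norm_num) t).sub (solChain hw4 3 (by norm_num) t)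
    have hv' : iteratedDeriv 4 v t = A * iteratedDeriv 2 v t - B * v t + g (v t) := by
      have := hvsol t; linarith
    have hw' : iteratedDeriv 4 w t = A * iteratedDeriv 2 w t - B * w t + g (w t) := by
      have := hwsol t; linarith
    have he : iteratedDeriv 4 v t - iteratedDeriv 4 w t
        = (μ₁ + μ₂) * d2 t - μ₁ * μ₂ * d0 t + G t := by
      rw [hv', hw', hAμ, hBμ]
      simp only [hd2_def, hd0_def, hG_def]
      ring
    rw [← he]
    exact h'
  have hgc := gContIci hg1 hg0lim hg00
  have hGc : Continuous G := by
    have hvc : Continuous fun t => g (v t) :=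
      hgc.comp_continuous hv4.continuous (fun t => hvnn t)
    have hwc : Continuous fun t => g (w t) :=
      hgc.comp_continuous hw4.continuous (fun t => hwnn t)
    exact hvc.sub hwc
  have hmono := gMono hg1 hgpos hgd hg00
  have hG0 : ∀ t, 0 < t → 0 < d0 t → 0 ≤ G t := by
    intro t _ hd0t
    have : w t ≤ v t := by
      have := hd0t; simp only [hd0_def] at this; linarith
    have := hmono (w t) (v t) (hwnn t) this
    simp only [hG_def]
    linarith
  have hGg : ∀ t, 0 < t → 1 ≤ d0 t → c * d0 t ^ q ≤ G t := by
    intro t _ h1d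
    have hd0pos : 0 < d0 t := lt_of_lt_of_le one_pos h1d
    have hsum : w t + d0 t = v t := by simp only [hd0_def]; ring
    have hs := gSuper hg1 hgd hg00 (d0 t) (w t) hd0pos (hwnn t)
    rw [hsum] at hs
    have hgr := hgrow (d0 t) h1d
    simp only [hG_def]
    linarith
  have hG00 : G 0 = 0 := by simp only [hG_def, h0]; ring
  have hd00 : d0 0 = 0 := by simp only [hd0_def, h0]; ring
  have hd10 : d1 0 = 0 := by
    simp only [hd1_def, iteratedDeriv_one, h1]; ring
  exact keyLemma hμ₁pos hμ₂nn hc hq h0' h1' h2' h3' hGc hG0 hGg hG00 hd00 hd10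
    (by simp only [hd2_def]; linarith) (by simp only [hd3_def]; linarith)
    (by rcases hab with h | h
        · exact Or.inl (by simp only [hd2_def]; linarith)
        · exact Or.inr (by simp only [hd3_def]; linarith))

lemma pairEqFwd {β : ℝ} (g : ℝ → ℝ)
    (hg1 : ContDiffOn ℝ 1 g (Ioi 0)) (hgpos : ∀ t > (0:ℝ), 0 < g t)
    (hg0lim : Tendsto g (nhdsWithin 0 (Ioi 0)) (nhds 0))
    (hgd : ∀ t > (0:ℝ), g t / t < deriv g t)
    (hβlim : Tendsto (deriv g) (nhdsWithin 0 (Ioi 0)) (nhds β))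
    (hg00 : g 0 = 0)
    (A B : ℝ)
    (v w : ℝ → ℝ) (hv4 : ContDiff ℝ 4 v) (hw4 : ContDiff ℝ 4 w)
    (hvnn : ∀ t, 0 ≤ v t) (hwnn : ∀ t, 0 ≤ w t)
    (hvsol : IsSol A B g v) (hwsol : IsSol A B g w)
    (h0 : v 0 = w 0) (h1 : deriv v 0 = deriv w 0)
    (e2 : iteratedDeriv 2 v 0 = iteratedDeriv 2 w 0)
    (e3 : iteratedDeriv 3 v 0 = iteratedDeriv 3 w 0) :
    ∀ t, 0 ≤ t → v t = w t := by
  intro T hT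
  obtain ⟨Mv, hMv⟩ := isCompact_Icc.exists_bound_of_continuousOn
    (hv4.continuous.continuousOn : ContinuousOn v (Icc 0 T))
  obtain ⟨Mw, hMw⟩ := isCompact_Icc.exists_bound_of_continuousOn
    (hw4.continuous.continuousOn : ContinuousOn w (Icc 0 T))
  set M := max Mv Mw with hM_def
  obtain ⟨L, hL0, hLip⟩ := gLip hg1 hg0lim hg00 hβlim M
  set d0 : ℝ → ℝ := fun t => v t - w t with hd0_def
  set d1 : ℝ → ℝ := fun t => iteratedDeriv 1 v t - iteratedDeriv 1 w t with hd1_def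
  set d2 : ℝ → ℝ := fun t => iteratedDeriv 2 v t - iteratedDeriv 2 w t with hd2_def
  set d3 : ℝ → ℝ := fun t => iteratedDeriv 3 v t - iteratedDeriv 3 w t with hd3_def
  set G : ℝ → ℝ := fun t => g (v t) - g (w t) with hG_def
  have h0' : ∀ t, HasDerivAt d0 (d1 t) t := by
    intro t
    have h' := (solChain hv4 0 (by norm_num) t).sub (solChain hw4 0 (by norm_num) t)
    simp only [iteratedDeriv_zero] at h'
    exact h'
  have h1' : ∀ t, HasDerivAt d1 (d2 t) t := by
    intro t
    exact (solChain hv4 1 (by norm_num) t).sub (solChain hw4 1 (by norm_num) t)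
  have h2' : ∀ t, HasDerivAt d2 (d3 t) t := by
    intro t
    exact (solChain hv4 2 (by norm_num) t).sub (solChain hw4 2 (by norm_num) t)
  have h3' : ∀ t, HasDerivAt d3 (A * d2 t - B * d0 t + G t) t := by
    intro t
    have h' := (solChain hv4 3 (by norm_num) t).sub (solChain hw4 3 (by norm_num) t)
    have hv' : iteratedDeriv 4 v t = A * iteratedDeriv 2 v t - B * v t + g (v t) := by
      have := hvsol t; linarith
    have hw' : iteratedDeriv 4 w t = A * iteratedDeriv 2 w t - B * w t + g (w t) := by
      have := hwsol t; linarith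
    have he : iteratedDeriv 4 v t - iteratedDeriv 4 w t = A * d2 t - B * d0 t + G t := by
      rw [hv', hw']
      simp only [hd2_def, hd0_def, hG_def]
      ring
    rw [← he]
    exact h'
  have hmono := gMono hg1 hgpos hgd hg00
  have hG : ∀ s ∈ Icc (0:ℝ) T, |G s| ≤ L * |d0 s| := by
    intro s hs
    have hvM : v s ≤ M := by
      have := hMv s hs
      rw [Real.norm_eq_abs] at this
      exact le_trans (le_abs_self _) (le_trans this (le_max_left _ _))
    have hwM : w s ≤ M := by
      have := hMw s hs
      rw [Real.norm_eq_abs] at this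
      exact le_trans (le_abs_self _) (le_trans this (le_max_right _ _))
    rcases le_total (w s) (v s) with hc | hc
    · have hL1 := hLip (w s) (v s) (hwnn s) hc hvM
      have hL2 : 0 ≤ g (v s) - g (w s) := by
        have := hmono (w s) (v s) (hwnn s) hc; linarith
      have e1 : |G s| = g (v s) - g (w s) := by
        simp only [hG_def]; exact abs_of_nonneg hL2
      have e2' : |d0 s| = v s - w s := by
        simp only [hd0_def]; exact abs_of_nonneg (by linarith)
      rw [e1, e2']
      linarith
    · have hL1 := hLip (v s) (w s) (hvnn s) hc hwM
      have hL2 : 0 ≤ g (w s) - g (v s) := by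
        have := hmono (v s) (w s) (hvnn s) hc; linarith
      have e1 : |G s| = g (w s) - g (v s) := by
        simp only [hG_def]
        rw [abs_sub_comm]
        exact abs_of_nonneg hL2
      have e2' : |d0 s| = w s - v s := by
        simp only [hd0_def]
        rw [abs_sub_comm]
        exact abs_of_nonneg (by linarith)
      rw [e1, e2']
      linarith
  have hi0 : d0 0 = 0 := by simp only [hd0_def, h0]; ring
  have hi1 : d1 0 = 0 := by simp only [hd1_def, iteratedDeriv_one, h1]; ring
  have hi2 : d2 0 = 0 := by simp only [hd2_def, e2]; ring
  have hi3 : d3 0 = 0 := by simp only [hd3_def, e3]; ring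
  have hz := energyZero h0' h1' h2' h3' hL0 hG hi0 hi1 hi2 hi3 T ⟨hT, le_refl T⟩
  simp only [hd0_def] at hz
  linarith

theorem stmt_10 (n : ℕ) (hn : 5 ≤ n) (g : ℝ → ℝ) (hg : CondG n g)
    (A B : ℝ) (hA : A = ((n : ℝ) * ((n : ℝ) - 4) + 8) / 2)
    (hB : B = (n : ℝ) ^ 2 * ((n : ℝ) - 4) ^ 2 / 16)
    (v w : ℝ → ℝ) (hv4 : ContDiff ℝ 4 v) (hw4 : ContDiff ℝ 4 w)
    (hvnn : ∀ t, 0 ≤ v t) (hwnn : ∀ t, 0 ≤ w t)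
    (hvsol : IsSol A B g v) (hwsol : IsSol A B g w)
    (h0 : v 0 = w 0) (h1 : deriv v 0 = deriv w 0) :
    ∀ t, v t = w t := by
  obtain ⟨hg1, hgpos, hg0lim, hgd', ⟨β, hβ0, hβB, hβlim⟩, ⟨q, c, hq, hc, hgrow⟩, hg00⟩ := hg
  have hgd : ∀ t > (0:ℝ), g t / t < deriv g t := fun t ht => (hgd' t ht).1
  set vr : ℝ → ℝ := fun t => v (-t) with hvr_def
  set wr : ℝ → ℝ := fun t => w (-t) with hwr_def
  have hvr4 : ContDiff ℝ 4 vr := reflContDiff hv4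
  have hwr4 : ContDiff ℝ 4 wr := reflContDiff hw4
  have hvrnn : ∀ t, 0 ≤ vr t := fun t => hvnn (-t)
  have hwrnn : ∀ t, 0 ≤ wr t := fun t => hwnn (-t)
  have hvrsol : IsSol A B g vr := reflSol hvsol
  have hwrsol : IsSol A B g wr := reflSol hwsol
  have h0r : vr 0 = wr 0 := by simp only [hvr_def, hwr_def, neg_zero]; exact h0
  have h1r : deriv vr 0 = deriv wr 0 := by
    rw [hvr_def, hwr_def, reflDeriv1, reflDeriv1, h1]
  have e2vr : iteratedDeriv 2 vr 0 = iteratedDeriv 2 v 0 := by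
    rw [hvr_def]; exact reflDeriv2 v
  have e2wr : iteratedDeriv 2 wr 0 = iteratedDeriv 2 w 0 := by
    rw [hwr_def]; exact reflDeriv2 w
  have e3vr : iteratedDeriv 3 vr 0 = -iteratedDeriv 3 v 0 := by
    rw [hvr_def]; exact reflDeriv3 v
  have e3wr : iteratedDeriv 3 wr 0 = -iteratedDeriv 3 w 0 := by
    rw [hwr_def]; exact reflDeriv3 w
  have hae : iteratedDeriv 2 v 0 = iteratedDeriv 2 w 0 ∧
      iteratedDeriv 3 v 0 = iteratedDeriv 3 w 0 := by
    rcases lt_trichotomy (iteratedDeriv 2 w 0) (iteratedDeriv 2 v 0) with h2 | h2 | h2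
    · rcases le_or_gt (iteratedDeriv 3 w 0) (iteratedDeriv 3 v 0) with h3 | h3
      · exact (pairNoPos n hn g hg1 hgpos hg0lim hgd hq hc hgrow hg00 A B hA hB
          v w hv4 hw4 hvnn hwnn hvsol hwsol h0 h1 h2.le h3 (Or.inl h2)).elim
      · exact (pairNoPos n hn g hg1 hgpos hg0lim hgd hq hc hgrow hg00 A B hA hB
          vr wr hvr4 hwr4 hvrnn hwrnn hvrsol hwrsol h0r h1r
          (by rw [e2vr, e2wr]; exact h2.le)
          (by rw [e3vr, e3wr]; linarith)
          (Or.inl (by rw [e2vr, e2wr]; exact h2))).elim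
    · rcases lt_trichotomy (iteratedDeriv 3 w 0) (iteratedDeriv 3 v 0) with h3 | h3 | h3
      · exact (pairNoPos n hn g hg1 hgpos hg0lim hgd hq hc hgrow hg00 A B hA hB
          v w hv4 hw4 hvnn hwnn hvsol hwsol h0 h1 h2.le h3.le (Or.inr h3)).elim
      · exact ⟨h2.symm, h3.symm⟩
      · exact (pairNoPos n hn g hg1 hgpos hg0lim hgd hq hc hgrow hg00 A B hA hB
          vr wr hvr4 hwr4 hvrnn hwrnn hvrsol hwrsol h0r h1r
          (by rw [e2vr, e2wr]; exact h2.le)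
          (by rw [e3vr, e3wr]; linarith)
          (Or.inr (by rw [e3vr, e3wr]; linarith))).elim
    · rcases le_or_gt (iteratedDeriv 3 v 0) (iteratedDeriv 3 w 0) with h3 | h3
      · exact (pairNoPos n hn g hg1 hgpos hg0lim hgd hq hc hgrow hg00 A B hA hB
          w v hw4 hv4 hwnn hvnn hwsol hvsol h0.symm h1.symm h2.le h3 (Or.inl h2)).elim
      · exact (pairNoPos n hn g hg1 hgpos hg0lim hgd hq hc hgrow hg00 A B hA hB
          wr vr hwr4 hvr4 hwrnn hvrnn hwrsol hvrsol h0r.symm h1r.symm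
          (by rw [e2vr, e2wr]; exact h2.le)
          (by rw [e3vr, e3wr]; linarith)
          (Or.inl (by rw [e2vr, e2wr]; exact h2))).elim
  have hfwd := pairEqFwd g hg1 hgpos hg0lim hgd hβlim hg00 A B v w hv4 hw4
    hvnn hwnn hvsol hwsol h0 h1 hae.1 hae.2
  have hbwd := pairEqFwd g hg1 hgpos hg0lim hgd hβlim hg00 A B vr wr hvr4 hwr4
    hvrnn hwrnn hvrsol hwrsol h0r h1r
    (by rw [e2vr, e2wr, hae.1]) (by rw [e3vr, e3wr, hae.2])
  intro t
  rcases le_total 0 t with ht | ht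
  · exact hfwd t ht
  · have hb' := hbwd (-t) (by linarith)
    simp only [hvr_def, hwr_def, neg_neg] at hb'
    exact hb'
end
end

section
/- Let (vₙ) be a sequence of C⁴ positive solutions of the ODE v''''(t) − A·v''(t) + B·v(t) = g(v(t)) such that each vₙ is periodic with period Lₙ > 0, attains its minimum value aₙ = min_{t ∈ ℝ} vₙ(t), and aₙ → 0 as n → ∞. Then Lₙ → ∞ as n → ∞. -/
open Real Filter Set Topology

noncomputable section

namespace Stmt13Aux

/-- The derivative of a periodic function is periodic. -/
lemma deriv_periodic {f : ℝ → ℝ} {c : ℝ} (hf : Function.Periodic f c) :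
    Function.Periodic (deriv f) c := by
  intro t
  have h : (fun s => f (s + c)) = f := funext fun s => hf s
  have h2 := deriv_comp_add_const f c t
  rw [h] at h2
  exact h2.symm

/-- A continuous periodic function attains a global maximum. -/
lemma periodic_exists_max {f : ℝ → ℝ} {L : ℝ} (hL : 0 < L)
    (hp : Function.Periodic f L) (hc : Continuous f) :
    ∃ t1, ∀ t, f t ≤ f t1 := by
  obtain ⟨t1, _, ht1⟩ :=
    isCompact_Icc.exists_isMaxOn (nonempty_Icc.2 hL.le) (hc.continuousOn (s := Icc (0:ℝ) L))
  refine ⟨t1, fun t => ?_⟩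
  have h1 : toIcoMod hL 0 t ∈ Icc (0:ℝ) L := by
    have := toIcoMod_mem_Ico' hL t
    exact ⟨this.1, this.2.le⟩
  have h2 : f (toIcoMod hL 0 t) = f t := by
    have : toIcoMod hL 0 t = t - toIcoDiv hL 0 t • L := rfl
    rw [this, hp.sub_zsmul_eq]
  calc f t = f (toIcoMod hL 0 t) := h2.symm
    _ ≤ f t1 := ht1 h1

/-- Second derivative test at a global maximum, in `HasDerivAt` form. -/
lemma second_deriv_nonpos_at_max {f f1 f2 : ℝ → ℝ} {t1 : ℝ}
    (H1 : ∀ t, HasDerivAt f (f1 t) t) (H2 : ∀ t, HasDerivAt f1 (f2 t) t)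
    (hmax : ∀ t, f t ≤ f t1) : f2 t1 ≤ 0 := by
  by_contra hpos
  push_neg at hpos
  have hloc : IsLocalMax f t1 := Filter.Eventually.of_forall hmax
  have h0 : f1 t1 = 0 := by
    have := hloc.deriv_eq_zero
    rwa [(H1 t1).deriv] at this
  have hslope : Filter.Tendsto (slope f1 t1) (𝓝[≠] t1) (𝓝 (f2 t1)) :=
    hasDerivAt_iff_tendsto_slope.1 (H2 t1)
  have hev : ∀ᶠ x in 𝓝[≠] t1, 0 < slope f1 t1 x :=
    hslope.eventually (eventually_gt_nhds hpos)
  have hev' : ∀ᶠ x in 𝓝[>] t1, 0 < slope f1 t1 x :=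
    hev.filter_mono (nhdsWithin_mono t1 (fun x hx => hx.ne'))
  obtain ⟨u, hu, hsub⟩ := mem_nhdsGT_iff_exists_Ioo_subset.1 hev'
  have hu' : t1 < u := hu
  have hpos' : ∀ x ∈ Ioo t1 u, 0 < f1 x := by
    intro x hx
    have hs : 0 < slope f1 t1 x := hsub hx
    rw [slope_def_field, h0, sub_zero] at hs
    have hxt : 0 < x - t1 := sub_pos.2 hx.1
    have := mul_pos hs hxt
    rwa [div_mul_cancel₀ _ hxt.ne'] at this
  have hmono : StrictMonoOn f (Icc t1 u) := by
    apply strictMonoOn_of_deriv_pos (convex_Icc t1 u)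
    · exact fun x _ => (H1 x).differentiableAt.continuousAt.continuousWithinAt
    · intro x hx
      rw [interior_Icc] at hx
      rw [(H1 x).deriv]
      exact hpos' x hx
  have : f t1 < f u := hmono (left_mem_Icc.2 hu'.le) (right_mem_Icc.2 hu'.le) hu'
  exact absurd this (not_lt.2 (hmax u))

/-- Second derivative test at a global minimum. -/
lemma second_deriv_nonneg_at_min {f f1 f2 : ℝ → ℝ} {t1 : ℝ}
    (H1 : ∀ t, HasDerivAt f (f1 t) t) (H2 : ∀ t, HasDerivAt f1 (f2 t) t)
    (hmin : ∀ t, f t1 ≤ f t) : 0 ≤ f2 t1 := by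
  have := second_deriv_nonpos_at_max (f := fun t => -f t) (f1 := fun t => -f1 t)
    (f2 := fun t => -f2 t) (fun t => (H1 t).neg) (fun t => (H2 t).neg)
    (fun t => neg_le_neg (hmin t))
  have h : -f2 t1 ≤ 0 := this
  linarith

/-- Comparison: if `u'' ≤ r² u`, `u t0 = 0`, `u' t0 = 0`, then `u ≤ 0` on `[t0, ∞)`. -/
lemma nonpos_forward {u u1 u2 : ℝ → ℝ} {r t0 : ℝ} (hr : 0 < r)
    (H1 : ∀ t, HasDerivAt u (u1 t) t) (H2 : ∀ t, HasDerivAt u1 (u2 t) t)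
    (hineq : ∀ t, u2 t ≤ r ^ 2 * u t) (h0 : u t0 = 0) (h0' : u1 t0 = 0) :
    ∀ t ≥ t0, u t ≤ 0 := by
  have hF' : ∀ t, HasDerivAt (fun s => (u1 s - r * u s) * Real.exp (r * s))
      ((u2 t - r ^ 2 * u t) * Real.exp (r * t)) t := by
    intro t
    have h1 : HasDerivAt (fun s => u1 s - r * u s) (u2 t - r * u1 t) t :=
      (H2 t).sub ((H1 t).const_mul r)
    have hin : HasDerivAt (fun s : ℝ => r * s) r t := by
      simpa using (hasDerivAt_id t).const_mul r
    have h2 : HasDerivAt (fun s => Real.exp (r * s)) (Real.exp (r * t) * r) t :=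
      (Real.hasDerivAt_exp (r * t)).comp t hin
    have h3 := h1.mul h2
    exact h3.congr_deriv (by ring)
  have hFanti : AntitoneOn (fun s => (u1 s - r * u s) * Real.exp (r * s)) (Ici t0) := by
    apply antitoneOn_of_deriv_nonpos (convex_Ici t0)
    · exact fun t _ => (hF' t).differentiableAt.continuousAt.continuousWithinAt
    · exact fun t _ => (hF' t).differentiableAt.differentiableWithinAt
    · intro t _
      rw [(hF' t).deriv]
      have h := hineq t
      have he := Real.exp_pos (r * t)
      nlinarith
  have hy : ∀ t ≥ t0, u1 t - r * u t ≤ 0 := by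
    intro t ht
    have hF := hFanti (self_mem_Ici) (mem_Ici.2 ht) ht
    simp only [h0, h0'] at hF
    have he := Real.exp_pos (r * t)
    nlinarith
  have hG' : ∀ t, HasDerivAt (fun s => u s * Real.exp (-(r * s)))
      ((u1 t - r * u t) * Real.exp (-(r * t))) t := by
    intro t
    have hin : HasDerivAt (fun s : ℝ => -(r * s)) (-r) t := by
      exact (((hasDerivAt_id t).const_mul r).neg).congr_deriv (by ring)
    have h2 : HasDerivAt (fun s => Real.exp (-(r * s))) (Real.exp (-(r * t)) * -r) t :=
      hin.exp
    have h3 := (H1 t).mul h2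
    exact h3.congr_deriv (by ring)
  have hGanti : AntitoneOn (fun s => u s * Real.exp (-(r * s))) (Ici t0) := by
    apply antitoneOn_of_deriv_nonpos (convex_Ici t0)
    · exact fun t _ => (hG' t).differentiableAt.continuousAt.continuousWithinAt
    · exact fun t _ => (hG' t).differentiableAt.differentiableWithinAt
    · intro t ht
      rw [interior_Ici] at ht
      rw [(hG' t).deriv]
      have h := hy t (le_of_lt ht)
      have he := Real.exp_pos (-(r * t))
      nlinarith
  intro t ht
  have hG := hGanti (self_mem_Ici) (mem_Ici.2 ht) ht
  simp only [h0] at hG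
  have he := Real.exp_pos (-(r * t))
  nlinarith

/-- Two-sided version. -/
lemma nonpos_global {u u1 u2 : ℝ → ℝ} {r t0 : ℝ} (hr : 0 < r)
    (H1 : ∀ t, HasDerivAt u (u1 t) t) (H2 : ∀ t, HasDerivAt u1 (u2 t) t)
    (hineq : ∀ t, u2 t ≤ r ^ 2 * u t) (h0 : u t0 = 0) (h0' : u1 t0 = 0) :
    ∀ t, u t ≤ 0 := by
  have hforw := nonpos_forward hr H1 H2 hineq h0 h0'
  have hσ : ∀ t : ℝ, HasDerivAt (fun s : ℝ => 2 * t0 - s) (-1 : ℝ) t := by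
    intro t
    simpa using (hasDerivAt_id t).const_sub (2 * t0)
  have H1' : ∀ t, HasDerivAt (fun s => u (2 * t0 - s)) (-(u1 (2 * t0 - t))) t := by
    intro t
    have := (H1 (2 * t0 - t)).comp t (hσ t)
    exact this.congr_deriv (by ring)
  have H2' : ∀ t, HasDerivAt (fun s => -(u1 (2 * t0 - s))) (u2 (2 * t0 - t)) t := by
    intro t
    have := ((H2 (2 * t0 - t)).comp t (hσ t)).neg
    exact this.congr_deriv (by ring)
  have hback := nonpos_forward (t0 := t0) hr H1' H2'
    (fun t => hineq (2 * t0 - t))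
    (by show u (2 * t0 - t0) = 0; rw [show 2 * t0 - t0 = t0 by ring]; exact h0)
    (by show -u1 (2 * t0 - t0) = 0; rw [show 2 * t0 - t0 = t0 by ring, h0']; ring)
  intro t
  rcases le_total t0 t with h | h
  · exact hforw t h
  · have := hback (2 * t0 - t) (by linarith)
    simpa [show 2 * t0 - (2 * t0 - t) = t by ring] using this

/-- The key per-solution inequality. -/
lemma key_ineq {g vm : ℝ → ℝ} {lam1 r a L δ : ℝ}
    (hlam1 : 0 < lam1) (hr : 0 < r) (hδ : 0 < δ)
    (hgpos : ∀ t > 0, 0 < g t)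
    (hgmono : ∀ x y, 0 < x → x ≤ y → g x ≤ g y)
    (hδsmall : ∀ s, 0 < s → s ≤ δ → g s < lam1 * r ^ 2 * s)
    (hv4 : ContDiff ℝ 4 vm) (hvpos : ∀ t, 0 < vm t)
    (hode : ∀ t : ℝ, iteratedDeriv 4 vm t - (lam1 + r ^ 2) * iteratedDeriv 2 vm t
      + lam1 * r ^ 2 * vm t = g (vm t))
    (hL : 0 < L) (hper : ∀ t, vm (t + L) = vm t)
    (hmin : ∀ t, a ≤ vm t) (t0 : ℝ) (ht0 : vm t0 = a) :
    δ < a * Real.cosh (r * L) := by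
  -- differentiability ladder
  have h4 : ContDiff ℝ ((3 : WithTop ℕ∞) + 1) vm := by
    have : ((3 : WithTop ℕ∞) + 1) = 4 := by norm_num
    rw [this]; exact hv4
  obtain ⟨hdv, -, h3⟩ := contDiff_succ_iff_deriv.mp h4
  have h3' : ContDiff ℝ ((2 : WithTop ℕ∞) + 1) (deriv vm) := by
    have : ((2 : WithTop ℕ∞) + 1) = 3 := by norm_num
    rw [this]; exact h3
  obtain ⟨hdv1, -, h2⟩ := contDiff_succ_iff_deriv.mp h3'
  have h2' : ContDiff ℝ ((1 : WithTop ℕ∞) + 1) (deriv (deriv vm)) := by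
    have : ((1 : WithTop ℕ∞) + 1) = 2 := by norm_num
    rw [this]; exact h2
  obtain ⟨hdv2, -, h1⟩ := contDiff_succ_iff_deriv.mp h2'
  have hdv3 : Differentiable ℝ (deriv (deriv (deriv vm))) :=
    h1.differentiable (by norm_num)
  have H1 : ∀ t, HasDerivAt vm (deriv vm t) t := fun t => (hdv t).hasDerivAt
  have H2 : ∀ t, HasDerivAt (deriv vm) (deriv (deriv vm) t) t := fun t => (hdv1 t).hasDerivAt
  have H3 : ∀ t, HasDerivAt (deriv (deriv vm)) (deriv (deriv (deriv vm)) t) t :=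
    fun t => (hdv2 t).hasDerivAt
  have H4 : ∀ t, HasDerivAt (deriv (deriv (deriv vm))) (deriv (deriv (deriv (deriv vm))) t) t :=
    fun t => (hdv3 t).hasDerivAt
  -- the ODE in deriv form
  have hode' : ∀ t : ℝ, deriv (deriv (deriv (deriv vm))) t
      - (lam1 + r ^ 2) * deriv (deriv vm) t + lam1 * r ^ 2 * vm t = g (vm t) := by
    intro t
    have h := hode t
    rw [show (4 : ℕ) = 3 + 1 by norm_num, iteratedDeriv_succ,
        show (3 : ℕ) = 2 + 1 by norm_num, iteratedDeriv_succ,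
        show (2 : ℕ) = 1 + 1 by norm_num, iteratedDeriv_succ, iteratedDeriv_one] at h
    exact h
  -- periodicity
  have hPer : Function.Periodic vm L := hper
  have hPer1 : Function.Periodic (deriv vm) L := deriv_periodic hPer
  have hPer2 : Function.Periodic (deriv (deriv vm)) L := deriv_periodic hPer1
  -- w = v'' - r² v, satisfies w'' = lam1 w + g(v)
  set w : ℝ → ℝ := fun t => deriv (deriv vm) t - r ^ 2 * vm t with hw_def
  have hwPer : Function.Periodic w L := by
    intro t
    simp only [hw_def, hPer t, hPer2 t]
  have hw1 : ∀ t, HasDerivAt w (deriv (deriv (deriv vm)) t - r ^ 2 * deriv vm t) t :=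
    fun t => (H3 t).sub ((H1 t).const_mul (r ^ 2))
  have hw2 : ∀ t, HasDerivAt (fun t => deriv (deriv (deriv vm)) t - r ^ 2 * deriv vm t)
      (deriv (deriv (deriv (deriv vm))) t - r ^ 2 * deriv (deriv vm) t) t :=
    fun t => (H4 t).sub ((H2 t).const_mul (r ^ 2))
  have hweq : ∀ t, deriv (deriv (deriv (deriv vm))) t - r ^ 2 * deriv (deriv vm) t
      = lam1 * w t + g (vm t) := by
    intro t
    have h := hode' t
    simp only [hw_def]
    linear_combination h
  have hwdiff : Differentiable ℝ w := fun t => (hw1 t).differentiableAt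
  have hwcont : Continuous w := hwdiff.continuous
  -- max principle: w < 0 everywhere
  obtain ⟨tw, htw⟩ := periodic_exists_max hL hwPer hwcont
  have hwmax : deriv (deriv (deriv (deriv vm))) tw - r ^ 2 * deriv (deriv vm) tw ≤ 0 :=
    second_deriv_nonpos_at_max
      (f2 := fun t => deriv (deriv (deriv (deriv vm))) t - r ^ 2 * deriv (deriv vm) t)
      hw1 hw2 htw
  have hwneg : ∀ t, w t < 0 := by
    intro t
    have h := hweq tw
    have hgp := hgpos (vm tw) (hvpos tw)
    have : lam1 * w tw < 0 := by linarith [hwmax, h]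
    have hwtw : w tw < 0 := by
      by_contra hcon
      push_neg at hcon
      nlinarith
    exact lt_of_le_of_lt (htw t) hwtw
  -- global max of v
  have hvcont : Continuous vm := hdv.continuous
  obtain ⟨t1v, ht1v⟩ := periodic_exists_max hL hPer hvcont
  set M : ℝ := vm t1v with hM_def
  have hMpos : 0 < M := hvpos t1v
  -- global min of w
  have hwPerneg : Function.Periodic (fun t => -(w t)) L := by
    intro t
    simp [hwPer t]
  obtain ⟨t2, ht2⟩ := periodic_exists_max hL hwPerneg (hwcont.neg)
  have ht2' : ∀ t, w t2 ≤ w t := by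
    intro t
    simpa using ht2 t
  have hwmin : 0 ≤ deriv (deriv (deriv (deriv vm))) t2 - r ^ 2 * deriv (deriv vm) t2 :=
    second_deriv_nonneg_at_min
      (f2 := fun t => deriv (deriv (deriv (deriv vm))) t - r ^ 2 * deriv (deriv vm) t)
      hw1 hw2 ht2'
  -- second derivative of v at its max is ≤ 0
  have hv2max : deriv (deriv vm) t1v ≤ 0 :=
    second_deriv_nonpos_at_max (f2 := fun t => deriv (deriv vm) t) H1 H2 ht1v
  -- B M ≤ g M
  have hBM : lam1 * r ^ 2 * M ≤ g M := by
    have h1 : lam1 * w t2 + g (vm t2) ≥ 0 := by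
      rw [← hweq t2]; exact hwmin
    have h2 : w t2 ≤ w t1v := ht2' t1v
    have h3 : w t1v ≤ -(r ^ 2 * M) := by
      simp only [hw_def]
      nlinarith [hv2max]
    have h4 : g (vm t2) ≤ g M := hgmono (vm t2) M (hvpos t2) (ht1v t2)
    nlinarith
  have hMδ : δ < M := by
    by_contra hcon
    push_neg at hcon
    have := hδsmall M hMpos hcon
    linarith
  -- cosh comparison from the minimum point
  have hv1t0 : deriv vm t0 = 0 := by
    have hloc : IsLocalMin vm t0 := Filter.Eventually.of_forall (fun t => ht0 ▸ hmin t)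
    exact hloc.deriv_eq_zero
  have hapos : 0 < a := ht0 ▸ hvpos t0
  -- u = v - a cosh(r (t - t0))
  have hinner : ∀ t : ℝ, HasDerivAt (fun s => r * (s - t0)) r t := by
    intro t
    simpa using ((hasDerivAt_id t).sub_const t0).const_mul r
  have hcosh : ∀ t : ℝ, HasDerivAt (fun s => a * Real.cosh (r * (s - t0)))
      (a * (r * Real.sinh (r * (t - t0)))) t := by
    intro t
    have := ((Real.hasDerivAt_cosh (r * (t - t0))).comp t (hinner t)).const_mul a
    exact this.congr_deriv (by ring)
  have hsinh : ∀ t : ℝ, HasDerivAt (fun s => a * (r * Real.sinh (r * (s - t0))))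
      (a * (r ^ 2 * Real.cosh (r * (t - t0)))) t := by
    intro t
    have := (((Real.hasDerivAt_sinh (r * (t - t0))).comp t (hinner t)).const_mul r).const_mul a
    exact this.congr_deriv (by ring)
  have HU1 : ∀ t, HasDerivAt (fun s => vm s - a * Real.cosh (r * (s - t0)))
      (deriv vm t - a * (r * Real.sinh (r * (t - t0)))) t :=
    fun t => (H1 t).sub (hcosh t)
  have HU2 : ∀ t, HasDerivAt (fun t => deriv vm t - a * (r * Real.sinh (r * (t - t0))))
      (deriv (deriv vm) t - a * (r ^ 2 * Real.cosh (r * (t - t0)))) t :=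
    fun t => (H2 t).sub (hsinh t)
  have hcomp : ∀ t, vm t - a * Real.cosh (r * (t - t0)) ≤ 0 := by
    apply nonpos_global (t0 := t0) hr HU1 HU2
    · intro t
      have hw := hwneg t
      simp only [hw_def] at hw
      nlinarith
    · simp [ht0]
    · simp [hv1t0]
  -- transfer the max into the window [t0, t0 + L)
  have htstar_mem : toIcoMod hL t0 t1v ∈ Ico t0 (t0 + L) := toIcoMod_mem_Ico hL t0 t1v
  have htstar_eq : vm (toIcoMod hL t0 t1v) = M := by
    have : toIcoMod hL t0 t1v = t1v - toIcoDiv hL t0 t1v • L := rfl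
    rw [this, hPer.sub_zsmul_eq]
  set ts : ℝ := toIcoMod hL t0 t1v with hts_def
  have h1 : M ≤ a * Real.cosh (r * (ts - t0)) := by
    have := hcomp ts
    rw [htstar_eq] at this
    linarith
  have h2 : Real.cosh (r * (ts - t0)) ≤ Real.cosh (r * L) := by
    rw [Real.cosh_le_cosh]
    have hts1 : 0 ≤ ts - t0 := sub_nonneg.2 htstar_mem.1
    have hts2 : ts - t0 ≤ L := by
      have := htstar_mem.2
      linarith
    rw [abs_of_nonneg (by positivity), abs_of_nonneg (by positivity)]
    exact mul_le_mul_of_nonneg_left hts2 hr.le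
  calc δ < M := hMδ
    _ ≤ a * Real.cosh (r * (ts - t0)) := h1
    _ ≤ a * Real.cosh (r * L) := mul_le_mul_of_nonneg_left h2 hapos.le

end Stmt13Aux

open Stmt13Aux in
theorem stmt_13 (n : ℕ) (hn : 5 ≤ n) (g : ℝ → ℝ) (hg : CondG n g)
    (A B : ℝ) (hA : A = ((n : ℝ) * ((n : ℝ) - 4) + 8) / 2)
    (hB : B = (n : ℝ) ^ 2 * ((n : ℝ) - 4) ^ 2 / 16)
    (v : ℕ → ℝ → ℝ) (L : ℕ → ℝ) (a : ℕ → ℝ)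
    (hv4 : ∀ m, ContDiff ℝ 4 (v m)) (hvpos : ∀ m t, 0 < v m t)
    (hvsol : ∀ m, IsSol A B g (v m))
    (hL : ∀ m, 0 < L m) (hper : ∀ m t, v m (t + L m) = v m t)
    (hmin : ∀ m t, a m ≤ v m t) (hatt : ∀ m, ∃ t, v m t = a m)
    (ha : Filter.Tendsto a Filter.atTop (nhds 0)) :
    Filter.Tendsto L Filter.atTop Filter.atTop := by
  obtain ⟨hg1, hg2, hg3, hg4, ⟨β, hβ0, hβB, hβtend⟩, hggrow, hg0⟩ := hg
  have hn5 : (5 : ℝ) ≤ (n : ℝ) := by exact_mod_cast hn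
  set r : ℝ := ((n : ℝ) - 4) / 2 with hr_def
  set lam1 : ℝ := ((n : ℝ) / 2) ^ 2 with hlam1_def
  have hr : 0 < r := by rw [hr_def]; linarith
  have hlam1 : 0 < lam1 := by rw [hlam1_def]; positivity
  have hAeq : A = lam1 + r ^ 2 := by rw [hA, hlam1_def, hr_def]; ring
  have hBeq : B = lam1 * r ^ 2 := by rw [hB, hlam1_def, hr_def]; ring
  have hBpos : 0 < B := by rw [hBeq]; positivity
  -- choose δ > 0 with g s < B s for 0 < s ≤ δ
  have hβB' : β < B := by rw [hB]; exact hβB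
  have hev : ∀ᶠ t in nhdsWithin 0 (Set.Ioi 0), deriv g t < B :=
    hβtend.eventually (eventually_lt_nhds hβB')
  obtain ⟨δ, hδmem, hδsub⟩ := mem_nhdsGT_iff_exists_Ioc_subset.1 hev
  have hδ : (0 : ℝ) < δ := hδmem
  have hδsmall : ∀ s, 0 < s → s ≤ δ → g s < lam1 * r ^ 2 * s := by
    intro s hs hsδ
    have h1 := (hg4 s hs).1
    have h2 : deriv g s < B := hδsub ⟨hs, hsδ⟩
    have h3 : g s / s < B := lt_trans h1 h2
    have : g s < B * s := by
      have := mul_lt_mul_of_pos_right h3 hs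
      rwa [div_mul_cancel₀ _ (ne_of_gt hs)] at this
    rwa [hBeq] at this
  -- monotonicity of g on (0, ∞)
  have hgmono : ∀ x y : ℝ, 0 < x → x ≤ y → g x ≤ g y := by
    intro x y hx hxy
    rcases eq_or_lt_of_le hxy with rfl | h
    · exact le_refl _
    · have hmono : StrictMonoOn g (Icc x y) := by
        apply strictMonoOn_of_deriv_pos (convex_Icc x y)
        · exact hg1.continuousOn.mono (fun t ht => lt_of_lt_of_le hx ht.1)
        · intro t ht
          rw [interior_Icc] at ht
          have htpos : 0 < t := hx.trans ht.1
          exact lt_trans (div_pos (hg2 t htpos) htpos) (hg4 t htpos).1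
      exact (hmono (left_mem_Icc.2 hxy) (right_mem_Icc.2 hxy) h).le
  -- the key inequality for each m
  have key : ∀ m, δ < a m * Real.cosh (r * L m) := by
    intro m
    obtain ⟨t0, ht0⟩ := hatt m
    refine key_ineq hlam1 hr hδ hg2 hgmono hδsmall (hv4 m) (hvpos m) ?_ (hL m)
      (hper m) (hmin m) t0 ht0
    intro t
    have h := hvsol m t
    rw [hAeq, hBeq] at h
    exact h
  have hapos : ∀ m, 0 < a m := by
    intro m
    obtain ⟨t0, ht0⟩ := hatt m
    rw [← ht0]; exact hvpos m t0
  -- conclude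
  rw [tendsto_atTop]
  intro C
  set C' : ℝ := max C 0 with hC'_def
  have hC'0 : 0 ≤ C' := le_max_right _ _
  have hcoshpos : 0 < Real.cosh (r * C') := Real.cosh_pos _
  have hεpos : 0 < δ / Real.cosh (r * C') := div_pos hδ hcoshpos
  have hev2 : ∀ᶠ m in atTop, a m < δ / Real.cosh (r * C') :=
    ha.eventually (eventually_lt_nhds hεpos)
  filter_upwards [hev2] with m hm
  have hkey := key m
  have hcosh2 : 0 < Real.cosh (r * L m) := Real.cosh_pos _
  have hstep : Real.cosh (r * C') < Real.cosh (r * L m) := by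
    have h1 : a m * Real.cosh (r * L m) < (δ / Real.cosh (r * C')) * Real.cosh (r * L m) :=
      mul_lt_mul_of_pos_right hm hcosh2
    have h2 : δ < (δ / Real.cosh (r * C')) * Real.cosh (r * L m) := lt_trans hkey h1
    rw [div_mul_eq_mul_div, lt_div_iff₀ hcoshpos] at h2
    nlinarith
  have habs : |r * C'| < |r * L m| := Real.cosh_lt_cosh.1 hstep
  have h3 : r * C' < r * L m := by
    calc r * C' ≤ |r * C'| := le_abs_self _
      _ < |r * L m| := habs
      _ = r * L m := abs_of_nonneg (mul_nonneg hr.le (hL m).le)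
  have h4 : C' < L m := lt_of_mul_lt_mul_left h3 hr.le
  calc C ≤ C' := le_max_left _ _
    _ ≤ L m := h4.le
end
end

section
/- Let λ, μ > 0, T ∈ ℝ, and let w : ℝ → ℝ be a C⁴ function satisfying w''''(t) − (λ + μ)·w''(t) + λ·μ·w(t) ≥ 0 for all t ∈ (T, ∞), together with the boundary conditions w(T) = 0, w''(T) = 0, w(t) → 0 as t → ∞, and w''(t) → 0 as t → ∞. Then w(t) ≥ 0 for all t ∈ (T, ∞). -/
open Real Filter Set

/-- Maximum principle on a half line: if `u'' ≥ c u` on `(T,∞)`, `u T = 0` and `u → 0`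
at infinity, then `u ≤ 0` on `(T,∞)`. -/
lemma key_max_principle (c T : ℝ) (hc : 0 < c) (u : ℝ → ℝ)
    (hcont : Continuous u) (hcont' : Continuous (deriv u))
    (hdiff : Differentiable ℝ u)
    (hineq : ∀ t ∈ Set.Ioi T, c * u t ≤ deriv (deriv u) t)
    (huT : u T = 0) (hlim : Filter.Tendsto u Filter.atTop (nhds 0)) :
    ∀ t ∈ Set.Ioi T, u t ≤ 0 := by
  intro t ht
  by_contra hpos
  push_neg at hpos
  -- find B beyond which u < u t
  obtain ⟨B₀, hB₀⟩ := (eventually_atTop.mp (hlim.eventually (eventually_lt_nhds hpos)))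
  set B := max B₀ t with hBdef
  have htB : t ≤ B := le_max_right _ _
  have hB : ∀ s, B ≤ s → u s < u t := fun s hs => hB₀ s (le_trans (le_max_left _ _) hs)
  have htIcc : t ∈ Set.Icc T B := ⟨le_of_lt ht, htB⟩
  -- maximum on [T, B]
  obtain ⟨a, haI, hamax⟩ := isCompact_Icc.exists_isMaxOn ⟨t, htIcc⟩ hcont.continuousOn
  have hat : u t ≤ u a := hamax htIcc
  have hglob : ∀ s, T ≤ s → u s ≤ u a := by
    intro s hs
    by_cases h : s ≤ B
    · exact hamax ⟨hs, h⟩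
    · push_neg at h
      exact le_trans (hB s h.le).le hat
  have hpos_a : 0 < u a := lt_of_lt_of_le hpos hat
  have haT : T < a := by
    rcases lt_or_eq_of_le haI.1 with h | h
    · exact h
    · exfalso; rw [← h, huT] at hpos_a; exact lt_irrefl 0 hpos_a
  have hloc : IsLocalMax u a := by
    filter_upwards [isOpen_Ioi.eventually_mem haT] with s hs
    exact hglob s (le_of_lt hs)
  have hderiv0 : deriv u a = 0 := hloc.deriv_eq_zero
  have hev : ∀ᶠ s in nhds a, 0 < u s ∧ T < s :=
    ((hcont.tendsto a).eventually (eventually_gt_nhds hpos_a)).and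
      (isOpen_Ioi.eventually_mem haT)
  obtain ⟨ε, hε, hball⟩ := Metric.eventually_nhds_iff.mp hev
  have hmem : ∀ x ∈ Set.Ioo (a - ε) (a + ε), 0 < u x ∧ T < x := by
    intro x hx
    apply hball
    rw [Real.dist_eq, abs_lt]
    constructor <;> [linarith [hx.1]; linarith [hx.2]]
  have hmono : StrictMonoOn (deriv u) (Set.Ioo (a - ε) (a + ε)) := by
    apply strictMonoOn_of_deriv_pos (convex_Ioo _ _) hcont'.continuousOn
    intro x hx
    rw [interior_Ioo] at hx
    obtain ⟨hx1, hx2⟩ := hmem x hx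
    calc (0:ℝ) < c * u x := mul_pos hc hx1
      _ ≤ deriv (deriv u) x := hineq x hx2
  have ha_in : a ∈ Set.Ioo (a - ε) (a + ε) := ⟨by linarith, by linarith⟩
  have hmono2 : StrictMonoOn u (Set.Icc a (a + ε/2)) := by
    apply strictMonoOn_of_deriv_pos (convex_Icc _ _) hcont.continuousOn
    intro x hx
    rw [interior_Icc] at hx
    have hx_in : x ∈ Set.Ioo (a - ε) (a + ε) := ⟨by linarith [hx.1], by linarith [hx.2]⟩
    have := hmono ha_in hx_in hx.1
    rw [hderiv0] at this
    exact this
  have hlt : u a < u (a + ε/2) :=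
    hmono2 ⟨le_refl a, by linarith⟩ ⟨by linarith, le_refl _⟩ (by linarith)
  have := hglob (a + ε/2) (by linarith)
  linarith

theorem stmt_14 (lam mu T : ℝ) (hlam : 0 < lam) (hmu : 0 < mu)
    (w : ℝ → ℝ) (hw4 : ContDiff ℝ 4 w)
    (hineq : ∀ t ∈ Set.Ioi T,
      0 ≤ iteratedDeriv 4 w t - (lam + mu) * iteratedDeriv 2 w t + lam * mu * w t)
    (hwT : w T = 0) (hw''T : iteratedDeriv 2 w T = 0)
    (hlimw : Filter.Tendsto w Filter.atTop (nhds 0))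
    (hlimw'' : Filter.Tendsto (iteratedDeriv 2 w) Filter.atTop (nhds 0)) :
    ∀ t ∈ Set.Ioi T, 0 ≤ w t := by
  -- differentiability facts
  have hd0 : Differentiable ℝ w := hw4.differentiable (by norm_num)
  have hd1 : Differentiable ℝ (iteratedDeriv 1 w) :=
    hw4.differentiable_iteratedDeriv 1 (by norm_num)
  have hd2 : Differentiable ℝ (iteratedDeriv 2 w) :=
    hw4.differentiable_iteratedDeriv 2 (by norm_num)
  have hd3 : Differentiable ℝ (iteratedDeriv 3 w) :=
    hw4.differentiable_iteratedDeriv 3 (by norm_num)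
  have hc2 : Continuous (iteratedDeriv 2 w) := hd2.continuous
  have hc3 : Continuous (iteratedDeriv 3 w) := hd3.continuous
  have hc4 : Continuous (iteratedDeriv 4 w) := hw4.continuous_iteratedDeriv 4 (le_refl _)
  have e1 : deriv w = iteratedDeriv 1 w := (iteratedDeriv_one).symm
  have e2 : deriv (iteratedDeriv 1 w) = iteratedDeriv 2 w := (iteratedDeriv_succ).symm
  have e3 : deriv (iteratedDeriv 2 w) = iteratedDeriv 3 w := (iteratedDeriv_succ).symm
  have e4 : deriv (iteratedDeriv 3 w) = iteratedDeriv 4 w := (iteratedDeriv_succ).symm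
  -- auxiliary function u = w'' - mu * w
  set u : ℝ → ℝ := fun t => iteratedDeriv 2 w t - mu * w t with hu_def
  have hu_diff : Differentiable ℝ u := hd2.sub (hd0.const_mul mu)
  have hu_deriv : deriv u = fun t => iteratedDeriv 3 w t - mu * iteratedDeriv 1 w t := by
    funext t
    rw [hu_def]
    rw [deriv_fun_sub (hd2 t) ((hd0 t).const_mul mu), deriv_const_mul mu (hd0 t), e3, e1]
  have hu_deriv2 : deriv (deriv u) = fun t => iteratedDeriv 4 w t - mu * iteratedDeriv 2 w t := by
    funext t
    rw [hu_deriv]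
    rw [deriv_fun_sub (hd3 t) ((hd1 t).const_mul mu), deriv_const_mul mu (hd1 t), e4, e2]
  have hu_cont : Continuous u := hc2.sub (continuous_const.mul hd0.continuous)
  have hu_cont' : Continuous (deriv u) := by
    rw [hu_deriv]; exact hc3.sub (continuous_const.mul hd1.continuous)
  have hu_le : ∀ t ∈ Set.Ioi T, u t ≤ 0 := by
    apply key_max_principle lam T hlam u hu_cont hu_cont' hu_diff
    · intro t ht
      rw [hu_deriv2, hu_def]
      have := hineq t ht
      dsimp only
      ring_nf
      ring_nf at this
      linarith
    · rw [hu_def]; simp [hwT, hw''T]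
    · rw [hu_def]
      have : Filter.Tendsto (fun t => iteratedDeriv 2 w t - mu * w t) Filter.atTop
          (nhds (0 - mu * 0)) := hlimw''.sub ((hlimw.const_mul mu))
      simpa using this
  -- second application with v = -w
  set v : ℝ → ℝ := fun t => -(w t) with hv_def
  have hv_diff : Differentiable ℝ v := hd0.neg
  have hv_deriv : deriv v = fun t => -(iteratedDeriv 1 w t) := by
    funext t; rw [hv_def, deriv.fun_neg, e1]
  have hv_deriv2 : deriv (deriv v) = fun t => -(iteratedDeriv 2 w t) := by
    funext t; rw [hv_deriv, deriv.fun_neg, e2]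
  have hv_cont : Continuous v := hd0.continuous.neg
  have hv_cont' : Continuous (deriv v) := by rw [hv_deriv]; exact hd1.continuous.neg
  have hv_le : ∀ t ∈ Set.Ioi T, v t ≤ 0 := by
    apply key_max_principle mu T hmu v hv_cont hv_cont' hv_diff
    · intro t ht
      rw [hv_deriv2, hv_def]
      have h1 := hu_le t ht
      rw [hu_def] at h1
      dsimp only
      dsimp only at h1
      linarith
    · rw [hv_def]; simp [hwT]
    · rw [hv_def]
      have := hlimw.neg
      simpa using this
  intro t ht
  have := hv_le t ht
  rw [hv_def] at this
  dsimp only at this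
  linarith
end
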